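/- arXiv:1401.1905 — 6 statements merged into one kernel-verified Lean document; each statement's English description precedes it below -/
import Mathlib

section
/- For any instance of the generalised minimum spanning tree problem with n nodes and m clusters, the expected optimization time of the cluster-based (1+1) EA (with the spanned nodes representation) is O(n^m). In particular, from any node selection the probability that a single mutation step produces a globally optimal node selection is at least m^{-m} * prod_{i=1}^m |V_i|^{-1} >= n^{-m}, so the expected number of iterations until an optimal solution is reached is at most n^m. -/
open scoped ENNReal BigOperators Classical

noncomputable section

/-- Probability that a (1+1) evolutionary algorithm with initial distribution `μ0` and
one-step transition kernel `K` follows the trajectory prefix `x 0, x 1, …, x t`. -/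
def trajProb {State : Type*} (μ0 : State → ℝ≥0∞) (K : State → State → ℝ≥0∞)
    {t : ℕ} (x : Fin (t + 1) → State) : ℝ≥0∞ :=
  μ0 (x 0) * ∏ i : Fin t, K (x i.castSucc) (x i.succ)

/-- `survival μ0 K Opt t` is the probability `P(T > t)` that no optimal state (w.r.t. the
goal predicate `Opt`) occurs among the first `t+1` states `X 0, …, X t` of the Markov chain
with initial distribution `μ0` and transition kernel `K`; here `T = inf {t | Opt (X t)}`
is the optimization time. -/
def survival {State : Type*} (μ0 : State → ℝ≥0∞) (K : State → State → ℝ≥0∞)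
    (Opt : State → Prop) (t : ℕ) : ℝ≥0∞ :=
  ∑' x : Fin (t + 1) → State, if ∀ i, ¬ Opt (x i) then trajProb μ0 K x else 0

/-- The expected optimization time `E[T] = ∑_{t ≥ 0} P(T > t)` of the Markov chain with
initial distribution `μ0` and transition kernel `K`, where `T = inf {t | Opt (X t)}`. -/
def expectedOptTime {State : Type*} (μ0 : State → ℝ≥0∞) (K : State → State → ℝ≥0∞)
    (Opt : State → Prop) : ℝ≥0∞ :=
  ∑' t : ℕ, survival μ0 K Opt t

/-- The one-step transition kernel of a (1+1) EA: from the current solution `x`, an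
offspring `y` is sampled from the mutation distribution `mutate x`; it is accepted (i.e. the
chain moves to `y`) iff `cost y ≤ cost x`, otherwise the chain stays at `x`. -/
def eaKernel {State : Type*} (mutate : State → State → ℝ≥0∞) (cost : State → ℝ≥0∞)
    (x y : State) : ℝ≥0∞ :=
  (if cost y ≤ cost x then mutate x y else 0) +
    (if y = x then ∑' z : State, (if cost z ≤ cost x then 0 else mutate x z) else 0)

/-- Mutation distribution of the cluster-based (1+1) EA with spanned nodes representation:
independently for each cluster `i`, with probability `1/m` the node chosen in cluster `i`
is replaced by a node drawn uniformly at random from `Vc i` (and is kept unchanged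
otherwise). `clusterMut m Vc x y` is the probability that mutating `x` yields `y`. -/
def clusterMut (m : ℕ) {V : Type*} [DecidableEq V] (Vc : Fin m → Finset V)
    (x y : Fin m → V) : ℝ≥0∞ :=
  ∏ i : Fin m,
    ((if y i ∈ Vc i then (m : ℝ≥0∞)⁻¹ * ((Vc i).card : ℝ≥0∞)⁻¹ else 0) +
      (if y i = x i then 1 - (m : ℝ≥0∞)⁻¹ else 0))

/-- The cost of the minimum spanning tree of the subgraph induced by the node selection
`x : Fin m → V` (one node per cluster), where `c` is the (symmetric, possibly infinite)
edge-cost function: the infimum over all trees `G` on the `m` clusters of the total cost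
of the corresponding edges. -/
def mstCost {m : ℕ} {V : Type*} (c : V → V → ℝ≥0∞) (x : Fin m → V) : ℝ≥0∞ :=
  ⨅ (G : SimpleGraph (Fin m)) (_ : G.IsTree),
    (∑ i : Fin m, ∑ j : Fin m, if G.Adj i j then c (x i) (x j) else 0) / 2


private lemma amgm_real (m : ℕ) (hm : 0 < m) (z : Fin m → ℝ) (hz : ∀ i, 0 ≤ z i) :
    (m : ℝ) ^ m * ∏ i, z i ≤ (∑ i, z i) ^ m := by
  have hm0 : (m : ℝ) ≠ 0 := Nat.cast_ne_zero.2 hm.ne'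
  have hsum1 : ∑ _i : Fin m, (1 : ℝ) = (m : ℝ) := by simp
  have h := Real.geom_mean_le_arith_mean Finset.univ (fun _ => (1 : ℝ)) z
    (fun _ _ => zero_le_one) (by rw [hsum1]; exact_mod_cast hm) (fun i _ => hz i)
  rw [hsum1] at h
  simp only [Real.rpow_one, one_mul] at h
  have hP : (0 : ℝ) ≤ ∏ i, z i := Finset.prod_nonneg (fun i _ => hz i)
  have key : (∏ i, z i) ≤ ((∑ i, z i) / m) ^ m := by
    calc ∏ i, z i = (∏ i, z i) ^ ((m : ℝ)⁻¹ * m) := by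
          rw [inv_mul_cancel₀ hm0, Real.rpow_one]
      _ = ((∏ i, z i) ^ ((m : ℝ)⁻¹)) ^ (m : ℝ) := Real.rpow_mul hP _ _
      _ ≤ ((∑ i, z i) / m) ^ (m : ℝ) :=
          Real.rpow_le_rpow (Real.rpow_nonneg hP _) h (Nat.cast_nonneg m)
      _ = ((∑ i, z i) / m) ^ m := Real.rpow_natCast _ m
  have hS : (0:ℝ) ≤ ∑ i, z i := Finset.sum_nonneg (fun i _ => hz i)
  calc (m : ℝ) ^ m * ∏ i, z i ≤ (m : ℝ) ^ m * (((∑ i, z i) / m) ^ m) :=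
        mul_le_mul_of_nonneg_left key (by positivity)
    _ = (∑ i, z i) ^ m := by
        rw [div_pow, mul_div_cancel₀]
        positivity

private lemma amgm_nat (m : ℕ) (a : Fin m → ℕ) :
    m ^ m * ∏ i, a i ≤ (∑ i, a i) ^ m := by
  rcases Nat.eq_zero_or_pos m with hm | hm
  · subst hm; simp
  have h := amgm_real m hm (fun i => (a i : ℝ)) (fun i => Nat.cast_nonneg _)
  exact_mod_cast h

private lemma traj_cons {State : Type*} (ν : State → ℝ≥0∞) (K : State → State → ℝ≥0∞)
    {t : ℕ} (z : State) (x : Fin (t + 1) → State) :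
    trajProb ν K (Fin.cons z x) = ν z * trajProb (K z) K x := by
  simp only [trajProb, Fin.prod_univ_succ, Fin.cons_zero, Fin.castSucc_zero, Fin.cons_succ,
    ← Fin.succ_castSucc]


/-- For any instance of the generalised minimum spanning tree problem with
`n` nodes and `m` clusters `Vc 0, …, Vc (m-1)` (pairwise disjoint, nonempty, covering `V`),
the cluster-based (1+1) EA with the spanned nodes representation satisfies: from any node
selection `x`, the probability that a single mutation step produces a globally optimal node
selection is at least `m^{-m} * ∏ i, |Vc i|⁻¹`, which is at least `n^{-m}`; consequently,
for any initial distribution `μ0` over node selections, the expected optimization time is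
at most `n^m`. -/
theorem clusterEA_upper_bound (m n : ℕ) (hm : 0 < m) {V : Type} [Fintype V] [DecidableEq V]
    (hn : Fintype.card V = n)
    (Vc : Fin m → Finset V)
    (hne : ∀ i, (Vc i).Nonempty)
    (hdisj : ∀ i j, i ≠ j → Disjoint (Vc i) (Vc j))
    (hcover : ∀ v : V, ∃ i, v ∈ Vc i)
    (c : V → V → ℝ≥0∞)
    (hsym : ∀ a b, c a b = c b a)
    (hpos : ∀ a b, a ≠ b → 0 < c a b)
    (Valid : (Fin m → V) → Prop)
    (hValid : ∀ x, Valid x ↔ ∀ i, x i ∈ Vc i)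
    (Opt : (Fin m → V) → Prop)
    (hOpt : ∀ x, Opt x ↔ (Valid x ∧ ∀ y, Valid y → mstCost c x ≤ mstCost c y))
    (μ0 : (Fin m → V) → ℝ≥0∞)
    (hμ0 : ∑' x, μ0 x = 1)
    (hsupp : ∀ x, μ0 x ≠ 0 → Valid x) :
    (∀ x : Fin m → V, Valid x →
        ((m : ℝ≥0∞) ^ m)⁻¹ * (∏ i : Fin m, ((Vc i).card : ℝ≥0∞))⁻¹ ≤
          ∑' y : Fin m → V, if Opt y then clusterMut m Vc x y else 0) ∧
    ((n : ℝ≥0∞) ^ m)⁻¹ ≤ ((m : ℝ≥0∞) ^ m)⁻¹ * (∏ i : Fin m, ((Vc i).card : ℝ≥0∞))⁻¹ ∧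
    expectedOptTime μ0 (eaKernel (clusterMut m Vc) (mstCost c)) Opt ≤ (n : ℝ≥0∞) ^ m := by
  set K := eaKernel (clusterMut m Vc) (mstCost c) with hKdef
  set p := ((m : ℝ≥0∞) ^ m)⁻¹ * (∏ i : Fin m, ((Vc i).card : ℝ≥0∞))⁻¹ with hpdef
  have hm0 : (m : ℝ≥0∞) ≠ 0 := Nat.cast_ne_zero.2 hm.ne'
  have hmtop : (m : ℝ≥0∞) ≠ ∞ := ENNReal.natCast_ne_top m
  have hci0 : ∀ i, ((Vc i).card : ℝ≥0∞) ≠ 0 :=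
    fun i => Nat.cast_ne_zero.2 (Finset.card_pos.2 (hne i)).ne'
  have hcit : ∀ i, ((Vc i).card : ℝ≥0∞) ≠ ∞ := fun i => ENNReal.natCast_ne_top _
  -- sum of mutation distribution is 1
  have mut_sum : ∀ x : Fin m → V, (∀ i, x i ∈ Vc i) →
      ∑ y : Fin m → V, clusterMut m Vc x y = 1 := by
    intro x hx
    have h1 : ∑ y : Fin m → V, clusterMut m Vc x y
        = ∏ i : Fin m, ∑ v : V,
          ((if v ∈ Vc i then (m : ℝ≥0∞)⁻¹ * ((Vc i).card : ℝ≥0∞)⁻¹ else 0) +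
            (if v = x i then 1 - (m : ℝ≥0∞)⁻¹ else 0)) := by
      rw [Finset.prod_univ_sum]
      rw [Fintype.piFinset_univ]
      rfl
    rw [h1]
    have h2 : ∀ i : Fin m, (∑ v : V,
        ((if v ∈ Vc i then (m : ℝ≥0∞)⁻¹ * ((Vc i).card : ℝ≥0∞)⁻¹ else 0) +
          (if v = x i then 1 - (m : ℝ≥0∞)⁻¹ else 0))) = 1 := by
      intro i
      rw [Finset.sum_add_distrib]
      have hA : (∑ v : V, if v ∈ Vc i then (m : ℝ≥0∞)⁻¹ * ((Vc i).card : ℝ≥0∞)⁻¹ else 0)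
          = (m : ℝ≥0∞)⁻¹ := by
        rw [Finset.sum_ite_mem, Finset.univ_inter, Finset.sum_const, nsmul_eq_mul,
          mul_comm ((m : ℝ≥0∞)⁻¹) _, ← mul_assoc,
          ENNReal.mul_inv_cancel (hci0 i) (hcit i), one_mul]
      have hB : (∑ v : V, if v = x i then 1 - (m : ℝ≥0∞)⁻¹ else 0) = 1 - (m : ℝ≥0∞)⁻¹ := by
        simp
      rw [hA, hB, add_tsub_cancel_of_le (ENNReal.inv_le_one.2 (by exact_mod_cast hm))]
    exact Finset.prod_eq_one (fun i _ => h2 i)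
  -- sum of kernel is 1
  have ker_sum : ∀ x : Fin m → V, (∀ i, x i ∈ Vc i) → ∑ y : Fin m → V, K x y = 1 := by
    intro x hx
    calc ∑ y : Fin m → V, K x y
        = (∑ y : Fin m → V, if mstCost c y ≤ mstCost c x then clusterMut m Vc x y else 0)
          + ∑ z : Fin m → V, (if mstCost c z ≤ mstCost c x then 0 else clusterMut m Vc x z) := by
          simp only [hKdef, eaKernel, tsum_fintype]
          rw [Finset.sum_add_distrib, Finset.sum_ite_eq' Finset.univ x, if_pos (Finset.mem_univ x)]
      _ = ∑ y : Fin m → V, clusterMut m Vc x y := by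
          rw [← Finset.sum_add_distrib]
          refine Finset.sum_congr rfl fun y _ => ?_
          split_ifs <;> simp
      _ = 1 := mut_sum x hx
  -- lower bound on mutation to a valid target
  have mut_lb : ∀ x y : Fin m → V, (∀ i, y i ∈ Vc i) → p ≤ clusterMut m Vc x y := by
    intro x y hy
    have hp : p = ∏ i : Fin m, ((m : ℝ≥0∞)⁻¹ * ((Vc i).card : ℝ≥0∞)⁻¹) := by
      rw [Finset.prod_mul_distrib, Finset.prod_const, Finset.card_univ, Fintype.card_fin,
        ← ENNReal.inv_pow, ← ENNReal.prod_inv_distrib (fun i _ j _ _ => Or.inl (hci0 i))]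
    rw [hp, clusterMut]
    refine Finset.prod_le_prod' fun i _ => ?_
    rw [if_pos (hy i)]
    exact le_add_right le_rfl
  -- existence of an optimal selection
  have hex : ∃ y : Fin m → V, Opt y := by
    have hy0 : Valid (fun i => (hne i).choose) :=
      (hValid _).2 fun i => (hne i).choose_spec
    obtain ⟨y, hy, hmin⟩ := Finset.exists_min_image (Finset.univ.filter Valid) (mstCost c)
      ⟨_, Finset.mem_filter.2 ⟨Finset.mem_univ _, hy0⟩⟩
    exact ⟨y, (hOpt y).2 ⟨(Finset.mem_filter.1 hy).2,
      fun y' hy' => hmin y' (Finset.mem_filter.2 ⟨Finset.mem_univ _, hy'⟩)⟩⟩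
  -- part 1
  have part1 : ∀ x : Fin m → V, Valid x →
      p ≤ ∑' y : Fin m → V, if Opt y then clusterMut m Vc x y else 0 := by
    intro x hx
    obtain ⟨y, hy⟩ := hex
    rw [tsum_fintype]
    calc p ≤ clusterMut m Vc x y := mut_lb x y ((hValid y).1 ((hOpt y).1 hy).1)
      _ = if Opt y then clusterMut m Vc x y else 0 := (if_pos hy).symm
      _ ≤ _ := Finset.single_le_sum (f := fun y => if Opt y then clusterMut m Vc x y else 0)
          (fun _ _ => zero_le) (Finset.mem_univ y)
  -- p ≤ 1 and p ≠ ∞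
  have hm1 : (1 : ℝ≥0∞) ≤ (m : ℝ≥0∞) := by exact_mod_cast hm
  have p_le_one : p ≤ 1 := by
    refine mul_le_one' (ENNReal.inv_le_one.2 (hm1.trans (le_self_pow₀ hm1 hm.ne')))
      (ENNReal.inv_le_one.2 (Finset.one_le_prod' fun i _ =>
        (by exact_mod_cast (Finset.card_pos.2 (hne i)) : (1:ℝ≥0∞) ≤ _)))
  have p_ne_top : p ≠ ∞ := (p_le_one.trans_lt ENNReal.one_lt_top).ne
  -- validity preservation
  have valid_pres : ∀ x y : Fin m → V, (∀ i, x i ∈ Vc i) → K x y ≠ 0 →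
      ∀ i, y i ∈ Vc i := by
    intro x y hx hK
    by_cases hxy : y = x
    · subst hxy; exact hx
    · have hmutne : clusterMut m Vc x y ≠ 0 := by
        intro h0
        apply hK
        simp only [hKdef, eaKernel, h0, if_neg hxy, ite_self, add_zero]
      intro i
      have hfac := Finset.prod_ne_zero_iff.1 hmutne i (Finset.mem_univ i)
      by_cases hmem : y i ∈ Vc i
      · exact hmem
      · by_cases heq : y i = x i
        · rw [heq]; exact hx i
        · exact absurd (by simp [hmem, heq]) hfac
  -- step bound
  have step_bound : ∀ x : Fin m → V, (∀ i, x i ∈ Vc i) →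
      ∑ z : Fin m → V, (if ¬ Opt z then K x z else 0) ≤ 1 - p := by
    intro x hx
    have hsplit : (∑ z : Fin m → V, (if ¬ Opt z then K x z else 0))
        + ∑ z : Fin m → V, (if Opt z then K x z else 0) = 1 := by
      rw [← Finset.sum_add_distrib]
      rw [← ker_sum x hx]
      refine Finset.sum_congr rfl fun z _ => ?_
      by_cases hz : Opt z <;> simp [hz]
    have hopt_ge : p ≤ ∑ z : Fin m → V, (if Opt z then K x z else 0) := by
      obtain ⟨y, hy⟩ := hex
      have hvy : ∀ i, y i ∈ Vc i := (hValid y).1 ((hOpt y).1 hy).1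
      have hcost : mstCost c y ≤ mstCost c x := ((hOpt y).1 hy).2 x ((hValid x).2 hx)
      calc p ≤ clusterMut m Vc x y := mut_lb x y hvy
        _ ≤ K x y := by
            rw [hKdef]
            unfold eaKernel
            rw [if_pos hcost]
            exact le_add_right le_rfl
        _ = if Opt y then K x y else 0 := (if_pos hy).symm
        _ ≤ _ := Finset.single_le_sum (f := fun z => if Opt z then K x z else 0)
            (fun _ _ => zero_le) (Finset.mem_univ y)
    refine ENNReal.le_sub_of_add_le_right p_ne_top ?_
    calc (∑ z : Fin m → V, (if ¬ Opt z then K x z else 0)) + p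
        ≤ (∑ z : Fin m → V, (if ¬ Opt z then K x z else 0))
          + ∑ z : Fin m → V, (if Opt z then K x z else 0) := add_le_add le_rfl hopt_ge
      _ = 1 := hsplit
  -- main induction
  have main : ∀ (t : ℕ) (ν : (Fin m → V) → ℝ≥0∞), (∀ z, ν z ≠ 0 → ∀ i, z i ∈ Vc i) →
      survival ν K Opt t ≤ (∑ z : Fin m → V, if ¬ Opt z then ν z else 0) * (1 - p) ^ t := by
    intro t
    induction t with
    | zero =>
      intro ν hν
      rw [pow_zero, mul_one, survival, tsum_fintype]
      refine le_of_eq (Fintype.sum_equiv (Equiv.funUnique (Fin 1) (Fin m → V)).symm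
        (fun z => if ¬ Opt z then ν z else 0) _ ?_).symm
      intro z
      simp [trajProb, Equiv.funUnique]
    | succ t ih =>
      intro ν hν
      have key : survival ν K Opt (t + 1)
          = ∑ z : Fin m → V, if ¬ Opt z then ν z * survival (K z) K Opt t else 0 := by
        calc survival ν K Opt (t + 1)
            = ∑ y : Fin (t + 2) → (Fin m → V),
                (if ∀ i, ¬ Opt (y i) then trajProb ν K y else 0) := by
              rw [survival, tsum_fintype]
          _ = ∑ q : (Fin m → V) × (Fin (t + 1) → (Fin m → V)),
                (if ∀ i, ¬ Opt ((Fin.cons q.1 q.2 : Fin (t + 2) → Fin m → V) i)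
                  then trajProb ν K (Fin.cons q.1 q.2) else 0) :=
              (Fintype.sum_equiv (Fin.consEquiv (fun _ : Fin (t + 2) => (Fin m → V))) _ _
                (fun q => rfl)).symm
          _ = ∑ z : Fin m → V, ∑ x : Fin (t + 1) → (Fin m → V),
                (if ∀ i, ¬ Opt ((Fin.cons z x : Fin (t + 2) → Fin m → V) i)
                  then trajProb ν K (Fin.cons z x) else 0) := Fintype.sum_prod_type _
          _ = ∑ z : Fin m → V, if ¬ Opt z then ν z * survival (K z) K Opt t else 0 := by
              refine Finset.sum_congr rfl fun z _ => ?_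
              have hsplit : ∀ x : Fin (t + 1) → (Fin m → V),
                  (∀ i : Fin (t + 2), ¬ Opt ((Fin.cons z x : Fin (t + 2) → Fin m → V) i))
                    ↔ (¬ Opt z ∧ ∀ j, ¬ Opt (x j)) := by
                intro x
                rw [Fin.forall_fin_succ]
                simp
              by_cases hz : Opt z
              · rw [if_neg (by simpa using hz)]
                exact Finset.sum_eq_zero fun x _ => if_neg (fun h => ((hsplit x).1 h).1 hz)
              · rw [if_pos hz, survival, tsum_fintype, Finset.mul_sum]
                refine Finset.sum_congr rfl fun x _ => ?_
                rw [traj_cons]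
                by_cases hxall : ∀ j, ¬ Opt (x j)
                · rw [if_pos ((hsplit x).2 ⟨hz, hxall⟩), if_pos hxall]
                · rw [if_neg (fun h => hxall ((hsplit x).1 h).2), if_neg hxall, mul_zero]
      rw [key]
      have hbound : ∀ z : Fin m → V, (if ¬ Opt z then ν z * survival (K z) K Opt t else 0)
          ≤ (if ¬ Opt z then ν z else 0) * ((1 - p) * (1 - p) ^ t) := by
        intro z
        by_cases hz : Opt z
        · simp [hz]
        · rw [if_pos hz, if_pos hz]
          by_cases hν0 : ν z = 0
          · simp [hν0]
          · have hzval := hν z hν0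
            have h1 : survival (K z) K Opt t
                ≤ (∑ z' : Fin m → V, if ¬ Opt z' then K z z' else 0) * (1 - p) ^ t :=
              ih (K z) (fun z' h => valid_pres z z' hzval h)
            exact mul_le_mul_right
              (h1.trans (mul_le_mul_left (step_bound z hzval) _)) _
      calc ∑ z : Fin m → V, (if ¬ Opt z then ν z * survival (K z) K Opt t else 0)
          ≤ ∑ z : Fin m → V, (if ¬ Opt z then ν z else 0) * ((1 - p) * (1 - p) ^ t) :=
            Finset.sum_le_sum fun z _ => hbound z
        _ = (∑ z : Fin m → V, if ¬ Opt z then ν z else 0) * (1 - p) ^ (t + 1) := by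
            rw [← Finset.sum_mul, pow_succ]
            ring
  -- survival bound
  have surv_le : ∀ t, survival μ0 K Opt t ≤ (1 - p) ^ t := by
    intro t
    have h1 : (∑ z : Fin m → V, if ¬ Opt z then μ0 z else 0) ≤ 1 := by
      rw [← hμ0, tsum_fintype]
      refine Finset.sum_le_sum fun z _ => ?_
      split_ifs <;> simp
    calc survival μ0 K Opt t ≤ (∑ z : Fin m → V, if ¬ Opt z then μ0 z else 0) * (1 - p) ^ t :=
          main t μ0 (fun z h => (hValid z).1 (hsupp z h))
      _ ≤ 1 * (1 - p) ^ t := mul_le_mul_left h1 _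
      _ = (1 - p) ^ t := one_mul _
  -- part 2 : AM-GM
  have hcard : ∑ i : Fin m, (Vc i).card = n := by
    have huniv : (Finset.univ : Finset V) = Finset.univ.biUnion Vc := by
      ext v
      simpa using hcover v
    rw [← hn, ← Finset.card_univ, huniv,
      Finset.card_biUnion (fun i _ j _ hij => hdisj i j hij)]
  have hnat : m ^ m * ∏ i : Fin m, (Vc i).card ≤ n ^ m := by
    rw [← hcard]
    exact amgm_nat m _
  have part2 : ((n : ℝ≥0∞) ^ m)⁻¹ ≤ p := by
    rw [hpdef, ← ENNReal.mul_inv (Or.inl (pow_ne_zero m hm0))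
      (Or.inl (ENNReal.pow_ne_top hmtop))]
    refine ENNReal.inv_le_inv.2 ?_
    have := (Nat.cast_le (α := ℝ≥0∞)).2 hnat
    push_cast at this
    exact this
  refine ⟨part1, part2, ?_⟩
  -- part 3
  calc expectedOptTime μ0 K Opt ≤ ∑' t : ℕ, (1 - p) ^ t :=
        ENNReal.tsum_le_tsum surv_le
    _ = (1 - (1 - p))⁻¹ := ENNReal.tsum_geometric _
    _ = p⁻¹ := by rw [ENNReal.sub_sub_cancel ENNReal.one_ne_top p_le_one]
    _ ≤ ((n : ℝ≥0∞) ^ m)⁻¹⁻¹ := ENNReal.inv_le_inv.2 part2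
    _ = (n : ℝ≥0∞) ^ m := inv_inv _
end
end

section
/- In the instance G_S, for any node selection choosing one node per cluster (one central node and m-1 peripheral nodes), the subgraph of finite-cost edges induced by the selected nodes is a star centered at the chosen central node, and the cost of its minimum spanning tree equals the sum over the m-1 peripheral clusters of the cost of the edge joining the chosen peripheral node to the chosen central node. Consequently: (i) if the chosen central node is suboptimal and exactly k of the peripheral nodes are optimal, the cost is k*n + (m-1-k)*2; (ii) if the chosen central node is optimal and exactly k of the peripheral nodes are optimal, the cost is k + (m-1-k)*n^2; in particular the unique minimum-cost selection consists of all optimal nodes and has cost m-1, and switching a single suboptimal peripheral node to the optimal one while the central node is suboptimal increases the cost by exactly n-2. -/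
open scoped ENNReal BigOperators Classical

noncomputable section

abbrev VS (m : ℕ) := Fin m × Fin m

def VcGS (m : ℕ) : Fin m → Finset (VS m) := fun i => Finset.univ.filter (fun p => p.1 = i)

def ecGS (m : ℕ) (a b : Fin m) : ℝ≥0∞ :=
  if a.val = 0 ∧ b.val = 0 then 1
  else if a.val ≠ 0 ∧ b.val ≠ 0 then 2
  else if a.val ≠ 0 ∧ b.val = 0 then ((m ^ 2 : ℕ) : ℝ≥0∞) ^ 2
  else ((m ^ 2 : ℕ) : ℝ≥0∞)

def cGS (m : ℕ) (p q : VS m) : ℝ≥0∞ :=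
  if p.1.val = 0 ∧ q.1.val ≠ 0 then ecGS m q.2 p.2
  else if q.1.val = 0 ∧ p.1.val ≠ 0 then ecGS m p.2 q.2
  else ⊤

def ValidGS (m : ℕ) (x : Fin m → VS m) : Prop := ∀ i, x i ∈ VcGS m i

namespace GSaux

lemma ecGS_ne_top (m : ℕ) (a b : Fin m) : ecGS m a b ≠ ⊤ := by
  unfold ecGS
  split_ifs <;> simp [ENNReal.pow_ne_top]

lemma cGS_symm (m : ℕ) (p q : VS m) : cGS m p q = cGS m q p := by
  unfold cGS
  split_ifs <;> first | rfl | tauto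

/-- the star graph centred at `c0` -/
def starG (m : ℕ) (c0 : Fin m) : SimpleGraph (Fin m) where
  Adj i j := (i = c0 ∧ j ≠ c0) ∨ (j = c0 ∧ i ≠ c0)
  symm := ⟨fun i j h => by tauto⟩
  loopless := ⟨fun i h => by tauto⟩

lemma starG_adj (m : ℕ) (c0 i j : Fin m) :
    (starG m c0).Adj i j ↔ (i = c0 ∧ j ≠ c0) ∨ (j = c0 ∧ i ≠ c0) := Iff.rfl

lemma starG_isTree (m : ℕ) (hm : 2 ≤ m) (c0 : Fin m) : (starG m c0).IsTree := by
  constructor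
  · -- connected
    have key : ∀ i : Fin m, (starG m c0).Reachable i c0 := by
      intro i
      by_cases h : i = c0
      · exact h ▸ SimpleGraph.Reachable.refl _
      · exact SimpleGraph.Adj.reachable (Or.inr ⟨rfl, h⟩)
    haveI : Nonempty (Fin m) := ⟨c0⟩
    exact ⟨fun i j => (key i).trans (key j).symm⟩
  · -- acyclic
    intro v c hc
    have hz : c0 ∈ c.support := by
      cases c with
      | nil => exact absurd hc (by simp [SimpleGraph.Walk.isCycle_def])
      | cons h p =>
          rcases h with ⟨hv, _⟩ | ⟨hw, _⟩
          · subst hv; exact SimpleGraph.Walk.start_mem_support _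
          · subst hw
            exact List.mem_cons_of_mem _ (SimpleGraph.Walk.start_mem_support p)
    have hc' := hc.rotate hz
    set c' := c.rotate c0 hz with hc'def
    clear_value c'
    cases c' with
    | nil => exact absurd hc' (by simp [SimpleGraph.Walk.isCycle_def])
    | @cons _ w _ h p =>
        cases p with
        | nil => have := hc'.three_le_length; simp at this
        | @cons _ u _ h2 p2 =>
            have hw : w ≠ c0 := fun hh => (starG m c0).irrefl (hh ▸ h)
            have hu : u = c0 := by
              rcases h2 with ⟨h', _⟩ | ⟨h', _⟩
              · exact absurd h' hw
              · exact h'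
            have hnodup := hc'.edges_nodup
            rw [SimpleGraph.Walk.edges_cons, SimpleGraph.Walk.edges_cons] at hnodup
            simp [hu, Sym2.eq_swap] at hnodup

lemma sum_adj_eq (m : ℕ) (c0 : Fin m) (hc0 : c0.val = 0)
    (x : Fin m → VS m) (G : SimpleGraph (Fin m))
    (hG : ∀ i j, G.Adj i j ↔ ((i = c0 ∧ j ≠ c0) ∨ (j = c0 ∧ i ≠ c0))) :
    (∑ i : Fin m, ∑ j : Fin m, if G.Adj i j then cGS m (x i) (x j) else 0)
      = 2 * ∑ i ∈ Finset.univ.filter (fun i : Fin m => i.val ≠ 0), cGS m (x i) (x c0) := by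
  have hfil : Finset.univ.filter (fun i : Fin m => i.val ≠ 0)
      = Finset.univ.filter (fun i : Fin m => i ≠ c0) := by
    apply Finset.filter_congr
    intro i _
    simp [Ne, Fin.ext_iff, hc0]
  have key : ∀ i j : Fin m, (if G.Adj i j then cGS m (x i) (x j) else 0)
      = (if i = c0 then (if j ≠ c0 then cGS m (x i) (x j) else 0) else 0)
        + (if j = c0 then (if i ≠ c0 then cGS m (x i) (x j) else 0) else 0) := by
    intro i j
    by_cases hij : G.Adj i j
    · rw [if_pos hij]
      rcases (hG i j).1 hij with ⟨h1, h2⟩ | ⟨h1, h2⟩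
      · rw [if_pos h1, if_pos h2, if_neg h2, add_zero]
      · rw [if_neg h2, if_pos h1, if_pos h2, zero_add]
    · rw [if_neg hij]
      have hnot := fun hh => hij ((hG i j).2 hh)
      by_cases h1 : i = c0 <;> by_cases h2 : j = c0 <;> simp [h1, h2] <;> tauto
  have pull : ∀ (c : Prop) [Decidable c] (f : Fin m → ℝ≥0∞),
      (∑ j : Fin m, (if c then f j else 0)) = if c then ∑ j : Fin m, f j else 0 := by
    intro c _ f
    split_ifs <;> simp
  calc (∑ i : Fin m, ∑ j : Fin m, if G.Adj i j then cGS m (x i) (x j) else 0)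
      = (∑ i : Fin m, ∑ j : Fin m,
          ((if i = c0 then (if j ≠ c0 then cGS m (x i) (x j) else 0) else 0)
            + (if j = c0 then (if i ≠ c0 then cGS m (x i) (x j) else 0) else 0))) := by
        simp_rw [key]
    _ = (∑ i : Fin m, ∑ j : Fin m,
          (if i = c0 then (if j ≠ c0 then cGS m (x i) (x j) else 0) else 0))
        + (∑ i : Fin m, ∑ j : Fin m,
          (if j = c0 then (if i ≠ c0 then cGS m (x i) (x j) else 0) else 0)) := by
        simp_rw [Finset.sum_add_distrib]
    _ = (∑ j : Fin m, (if j ≠ c0 then cGS m (x c0) (x j) else 0))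
        + (∑ i : Fin m, (if i ≠ c0 then cGS m (x i) (x c0) else 0)) := by
        congr 1
        · trans (∑ i : Fin m, if i = c0 then
              ∑ j : Fin m, (if j ≠ c0 then cGS m (x i) (x j) else 0) else 0)
          · exact Finset.sum_congr rfl (fun i _ => pull _ _)
          · exact Fintype.sum_ite_eq' c0 _
        · apply Finset.sum_congr rfl
          intro i _
          exact Fintype.sum_ite_eq' c0 _
    _ = 2 * ∑ i ∈ Finset.univ.filter (fun i : Fin m => i.val ≠ 0), cGS m (x i) (x c0) := by
        rw [hfil, two_mul]
        congr 1
        · rw [Finset.sum_filter]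
          apply Finset.sum_congr rfl
          intro j _
          split_ifs with h
          · exact cGS_symm m (x c0) (x j)
          · rfl
        · rw [Finset.sum_filter]

lemma valid_fst (m : ℕ) (x : Fin m → VS m) (hx : ValidGS m x) (i : Fin m) : (x i).1 = i := by
  have := hx i
  simpa [VcGS] using this

lemma val_ne_zero_of_ne (m : ℕ) {c0 i : Fin m} (hc0 : c0.val = 0) (h : i ≠ c0) :
    i.val ≠ 0 := fun hh => h (Fin.ext (by rw [hh, hc0]))

lemma mstCost_eq (m : ℕ) (hm : 2 ≤ m) (c0 : Fin m) (hc0 : c0.val = 0)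
    (x : Fin m → VS m) (hx : ValidGS m x) :
    mstCost (cGS m) x
      = ∑ i ∈ Finset.univ.filter (fun i : Fin m => i.val ≠ 0), cGS m (x i) (x c0) := by
  apply le_antisymm
  · refine le_trans (iInf_le_of_le (starG m c0)
      (iInf_le_of_le (starG_isTree m hm c0) le_rfl)) ?_
    rw [sum_adj_eq m c0 hc0 x _ (fun i j => Iff.rfl)]
    rw [mul_comm, mul_div_assoc, ENNReal.div_self two_ne_zero ENNReal.ofNat_ne_top, mul_one]
  · refine le_iInf fun G => le_iInf fun hT => ?_
    by_cases hbad : ∃ i j, G.Adj i j ∧ i ≠ c0 ∧ j ≠ c0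
    · obtain ⟨i, j, hij, hi, hj⟩ := hbad
      have hi' : (x i).1.val ≠ 0 := by
        rw [valid_fst m x hx i]; exact val_ne_zero_of_ne m hc0 hi
      have hj' : (x j).1.val ≠ 0 := by
        rw [valid_fst m x hx j]; exact val_ne_zero_of_ne m hc0 hj
      have hval : cGS m (x i) (x j) = ⊤ := by
        unfold cGS
        rw [if_neg (by tauto), if_neg (by tauto)]
      have h1 : (⊤ : ℝ≥0∞) ≤ ∑ j' : Fin m, if G.Adj i j' then cGS m (x i) (x j') else 0 := by
        refine le_trans ?_ (Finset.single_le_sum (fun a _ => zero_le) (Finset.mem_univ j))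
        rw [if_pos hij, hval]
      have h2 : (∑ i' : Fin m, ∑ j' : Fin m,
          if G.Adj i' j' then cGS m (x i') (x j') else 0) = ⊤ :=
        top_le_iff.1 (le_trans h1
          (Finset.single_le_sum
            (f := fun i' => ∑ j' : Fin m, if G.Adj i' j' then cGS m (x i') (x j') else 0)
            (fun a _ => zero_le) (Finset.mem_univ i)))
      rw [h2, ENNReal.top_div_of_ne_top ENNReal.ofNat_ne_top]
      exact le_top
    · push_neg at hbad
      have hstar : ∀ j, j ≠ c0 → G.Adj c0 j := by
        intro j hj
        obtain ⟨w⟩ := hT.isConnected.preconnected j c0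
        cases w with
        | nil => exact absurd rfl hj
        | @cons _ b _ h p =>
            have hb : b = c0 := hbad j b h hj
            exact ((hb ▸ h) : G.Adj j c0).symm
      have hG : ∀ i j, G.Adj i j ↔ ((i = c0 ∧ j ≠ c0) ∨ (j = c0 ∧ i ≠ c0)) := by
        intro i j
        constructor
        · intro h
          by_cases h1 : i = c0
          · exact Or.inl ⟨h1, fun hh => G.ne_of_adj h (h1.trans hh.symm)⟩
          · exact Or.inr ⟨hbad i j h h1, h1⟩
        · rintro (⟨rfl, h2⟩ | ⟨rfl, h2⟩)
          · exact hstar j h2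
          · exact (hstar i h2).symm
      rw [sum_adj_eq m c0 hc0 x G hG, mul_comm, mul_div_assoc,
        ENNReal.div_self two_ne_zero ENNReal.ofNat_ne_top, mul_one]

lemma card_periph (m : ℕ) (hm : 2 ≤ m) (c0 : Fin m) (hc0 : c0.val = 0) :
    (Finset.univ.filter (fun i : Fin m => i.val ≠ 0)).card = m - 1 := by
  have h : Finset.univ.filter (fun i : Fin m => i.val ≠ 0)
      = Finset.univ.erase c0 := by
    rw [← Finset.filter_ne']
    apply Finset.filter_congr
    intro i _
    constructor
    · intro h hh; exact h (hh ▸ hc0)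
    · intro h hh; exact h (Fin.ext (hh.trans hc0.symm))
  rw [h, Finset.card_erase_of_mem (Finset.mem_univ c0), Finset.card_univ, Fintype.card_fin]

lemma ecGS_eval_subopt (m : ℕ) {b : Fin m} (a : Fin m) (hb : b.val ≠ 0) :
    ecGS m a b = if a.val = 0 then ((m ^ 2 : ℕ) : ℝ≥0∞) else 2 := by
  unfold ecGS
  split_ifs <;> first | rfl | tauto

lemma ecGS_eval_opt (m : ℕ) {b : Fin m} (a : Fin m) (hb : b.val = 0) :
    ecGS m a b = if a.val = 0 then 1 else ((m ^ 2 : ℕ) : ℝ≥0∞) ^ 2 := by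
  unfold ecGS
  split_ifs <;> first | rfl | tauto

lemma cGS_term (m : ℕ) (c0 : Fin m) (hc0 : c0.val = 0) (x : Fin m → VS m)
    (hx : ValidGS m x) {i : Fin m} (hi : i.val ≠ 0) :
    cGS m (x i) (x c0) = ecGS m (x i).2 (x c0).2 := by
  unfold cGS
  rw [valid_fst m x hx i, valid_fst m x hx c0, if_neg (by tauto), if_pos ⟨hc0, hi⟩]

lemma sum_ite_card (m : ℕ) (A : Finset (Fin m)) (p : Fin m → Prop) [DecidablePred p] (a b : ℝ≥0∞) :
    (∑ i ∈ A, if p i then a else b)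
      = ((A.filter p).card : ℝ≥0∞) * a + ((A.filter (fun i => ¬ p i)).card : ℝ≥0∞) * b := by
  rw [Finset.sum_ite, Finset.sum_const, Finset.sum_const, nsmul_eq_mul, nsmul_eq_mul]

lemma filter_split (m : ℕ) (x : Fin m → VS m) :
    (Finset.univ.filter (fun i : Fin m => i.val ≠ 0)).filter (fun i => (x i).2.val = 0)
      = Finset.univ.filter (fun i : Fin m => i.val ≠ 0 ∧ (x i).2.val = 0) := by
  rw [Finset.filter_filter]

lemma card_neg_filter (m : ℕ) (hm : 2 ≤ m) (c0 : Fin m) (hc0 : c0.val = 0)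
    (x : Fin m → VS m) :
    ((Finset.univ.filter (fun i : Fin m => i.val ≠ 0)).filter
        (fun i => ¬ (x i).2.val = 0)).card
      = m - 1 - (Finset.univ.filter (fun i : Fin m => i.val ≠ 0 ∧ (x i).2.val = 0)).card := by
  have h := Finset.card_filter_add_card_filter_not
    (s := Finset.univ.filter (fun i : Fin m => i.val ≠ 0)) (p := fun i => (x i).2.val = 0)
  rw [card_periph m hm c0 hc0, filter_split] at h
  omega

lemma cost_subopt (m : ℕ) (hm : 2 ≤ m) (c0 : Fin m) (hc0 : c0.val = 0)
    (x : Fin m → VS m) (hx : ValidGS m x) (hsub : (x c0).2.val ≠ 0) :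
    mstCost (cGS m) x =
      ((Finset.univ.filter
          (fun i : Fin m => i.val ≠ 0 ∧ (x i).2.val = 0)).card : ℝ≥0∞) *
          ((m ^ 2 : ℕ) : ℝ≥0∞) +
        ((m - 1 - (Finset.univ.filter
          (fun i : Fin m => i.val ≠ 0 ∧ (x i).2.val = 0)).card : ℕ) : ℝ≥0∞) * 2 := by
  rw [mstCost_eq m hm c0 hc0 x hx]
  have : ∀ i ∈ Finset.univ.filter (fun i : Fin m => i.val ≠ 0),
      cGS m (x i) (x c0) = if (x i).2.val = 0 then ((m ^ 2 : ℕ) : ℝ≥0∞) else 2 := by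
    intro i hi
    rw [Finset.mem_filter] at hi
    rw [cGS_term m c0 hc0 x hx hi.2, ecGS_eval_subopt m _ hsub]
  rw [Finset.sum_congr rfl this, sum_ite_card, filter_split,
    card_neg_filter m hm c0 hc0 x]

lemma cost_opt (m : ℕ) (hm : 2 ≤ m) (c0 : Fin m) (hc0 : c0.val = 0)
    (x : Fin m → VS m) (hx : ValidGS m x) (hopt : (x c0).2.val = 0) :
    mstCost (cGS m) x =
      ((Finset.univ.filter
          (fun i : Fin m => i.val ≠ 0 ∧ (x i).2.val = 0)).card : ℝ≥0∞) +
        ((m - 1 - (Finset.univ.filter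
          (fun i : Fin m => i.val ≠ 0 ∧ (x i).2.val = 0)).card : ℕ) : ℝ≥0∞) *
          ((m ^ 2 : ℕ) : ℝ≥0∞) ^ 2 := by
  rw [mstCost_eq m hm c0 hc0 x hx]
  have : ∀ i ∈ Finset.univ.filter (fun i : Fin m => i.val ≠ 0),
      cGS m (x i) (x c0) = if (x i).2.val = 0 then 1 else ((m ^ 2 : ℕ) : ℝ≥0∞) ^ 2 := by
    intro i hi
    rw [Finset.mem_filter] at hi
    rw [cGS_term m c0 hc0 x hx hi.2, ecGS_eval_opt m _ hopt]
  rw [Finset.sum_congr rfl this, sum_ite_card, filter_split,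
    card_neg_filter m hm c0 hc0 x, mul_one]

lemma cGS_ne_top_iff (m : ℕ) (c0 : Fin m) (hc0 : c0.val = 0) (x : Fin m → VS m)
    (hx : ValidGS m x) (i j : Fin m) (hij : i ≠ j) :
    cGS m (x i) (x j) ≠ ⊤ ↔ (i.val = 0 ∨ j.val = 0) := by
  unfold cGS
  rw [valid_fst m x hx i, valid_fst m x hx j]
  split_ifs with h1 h2
  · exact iff_of_true (ecGS_ne_top m _ _) (Or.inl h1.1)
  · exact iff_of_true (ecGS_ne_top m _ _) (Or.inr h2.1)
  · apply iff_of_false (fun h => h rfl)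
    rintro (h0 | h0)
    · have hj : j.val = 0 := by tauto
      exact hij (Fin.ext (h0.trans hj.symm))
    · have hi : i.val = 0 := by tauto
      exact hij (Fin.ext (hi.trans h0.symm))

lemma natarith (m N K : ℕ) (hN : 2 ≤ N) (hK : K ≤ m - 2) (hm : 2 ≤ m) :
    (K + 1) * N + (m - 1 - (K + 1)) * 2 = K * N + (m - 1 - K) * 2 + (N - 2) := by
  have h : (K + 1) * N = K * N + N := by ring
  have hlin : N + (m - 1 - (K + 1)) * 2 = (m - 1 - K) * 2 + (N - 2) := by omega
  calc (K + 1) * N + (m - 1 - (K + 1)) * 2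
      = K * N + (N + (m - 1 - (K + 1)) * 2) := by rw [h, add_assoc]
    _ = K * N + ((m - 1 - K) * 2 + (N - 2)) := by rw [hlin]
    _ = K * N + (m - 1 - K) * 2 + (N - 2) := by rw [add_assoc]

lemma xstar_valid (m : ℕ) (c0 : Fin m) : ValidGS m (fun i => (i, c0)) := by
  intro i
  simp [VcGS]

lemma cost_xstar (m : ℕ) (hm : 2 ≤ m) (c0 : Fin m) (hc0 : c0.val = 0) :
    mstCost (cGS m) (fun i => (i, c0)) = ((m - 1 : ℕ) : ℝ≥0∞) := by
  rw [cost_opt m hm c0 hc0 _ (xstar_valid m c0) hc0]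
  have hfil : (Finset.univ.filter
        (fun i : Fin m => i.val ≠ 0 ∧ ((fun k : Fin m => ((k, c0) : VS m)) i).2.val = 0))
      = Finset.univ.filter (fun i : Fin m => i.val ≠ 0) := by
    apply Finset.filter_congr
    intro i _
    simp [hc0]
  rw [hfil, card_periph m hm c0 hc0, Nat.sub_self]
  simp

lemma xstar_unique (m : ℕ) (hm : 2 ≤ m) (c0 : Fin m) (hc0 : c0.val = 0)
    (y : Fin m → VS m) (hy : ValidGS m y) (hne : y ≠ (fun i => (i, c0))) :
    mstCost (cGS m) (fun i => (i, c0)) < mstCost (cGS m) y := by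
  rw [cost_xstar m hm c0 hc0]
  set K := (Finset.univ.filter (fun i : Fin m => i.val ≠ 0 ∧ (y i).2.val = 0)).card with hKdef
  have hsubset : Finset.univ.filter (fun i : Fin m => i.val ≠ 0 ∧ (y i).2.val = 0)
      ⊆ Finset.univ.filter (fun i : Fin m => i.val ≠ 0) := by
    intro i hi
    rw [Finset.mem_filter] at hi ⊢
    exact ⟨hi.1, hi.2.1⟩
  have hKle : K ≤ m - 1 := by
    rw [hKdef, ← card_periph m hm c0 hc0]
    exact Finset.card_le_card hsubset
  have e1 : m ≤ m ^ 2 := Nat.le_self_pow two_ne_zero m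
  by_cases hopt : (y c0).2.val = 0
  · rw [cost_opt m hm c0 hc0 y hy hopt]
    have hKne : K ≠ m - 1 := by
      intro hK
      apply hne
      have hsets : Finset.univ.filter (fun i : Fin m => i.val ≠ 0 ∧ (y i).2.val = 0)
          = Finset.univ.filter (fun i : Fin m => i.val ≠ 0) :=
        Finset.eq_of_subset_of_card_le hsubset
          (by rw [card_periph m hm c0 hc0, ← hKdef, hK])
      have hall : ∀ i : Fin m, i.val ≠ 0 → (y i).2.val = 0 := by
        intro i hi
        have hmem : i ∈ Finset.univ.filter (fun i : Fin m => i.val ≠ 0) := by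
          simp [hi]
        rw [← hsets, Finset.mem_filter] at hmem
        exact hmem.2.2
      funext i
      have h1 : (y i).1 = i := valid_fst m y hy i
      by_cases hi : i.val = 0
      · have hic : i = c0 := Fin.ext (hi.trans hc0.symm)
        have h2 : (y i).2 = c0 := Fin.ext (((hic ▸ hopt : (y i).2.val = 0)).trans hc0.symm)
        exact Prod.ext h1 h2
      · have h2 : (y i).2 = c0 := Fin.ext ((hall i hi).trans hc0.symm)
        exact Prod.ext h1 h2
    have hnat : m - 1 < K + (m - 1 - K) * (m ^ 2) ^ 2 := by
      have e2 : m ^ 2 ≤ (m ^ 2) ^ 2 := Nat.le_self_pow two_ne_zero _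
      have e3 : (m ^ 2) ^ 2 ≤ (m - 1 - K) * (m ^ 2) ^ 2 :=
        Nat.le_mul_of_pos_left _ (by omega)
      calc m - 1 < m := by omega
        _ ≤ m ^ 2 := e1
        _ ≤ (m ^ 2) ^ 2 := e2
        _ ≤ (m - 1 - K) * (m ^ 2) ^ 2 := e3
        _ ≤ K + (m - 1 - K) * (m ^ 2) ^ 2 := Nat.le_add_left _ _
    exact_mod_cast hnat
  · rw [cost_subopt m hm c0 hc0 y hy hopt]
    have hnat : m - 1 < K * (m ^ 2) + (m - 1 - K) * 2 := by
      by_cases hK0 : K = 0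
      · rw [hK0]
        simp
        omega
      · have e3 : m ^ 2 ≤ K * m ^ 2 := Nat.le_mul_of_pos_left _ (by omega)
        calc m - 1 < m := by omega
          _ ≤ m ^ 2 := e1
          _ ≤ K * m ^ 2 := e3
          _ ≤ K * m ^ 2 + (m - 1 - K) * 2 := Nat.le_add_right _ _
    exact_mod_cast hnat

lemma switch_cost (m : ℕ) (hm : 2 ≤ m) (c0 : Fin m) (hc0 : c0.val = 0)
    (x : Fin m → VS m) (hx : ValidGS m x) (hsub : (x c0).2.val ≠ 0)
    (j : Fin m) (hj : j.val ≠ 0) (hxj : (x j).2.val ≠ 0) :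
    mstCost (cGS m) (Function.update x j (j, c0)) =
      mstCost (cGS m) x + (((m ^ 2 : ℕ) : ℝ≥0∞) - 2) := by
  have hc0j : c0 ≠ j := fun h => hj (by rw [← h, hc0])
  have hx' : ValidGS m (Function.update x j (j, c0)) := by
    intro i
    by_cases h : i = j
    · subst h
      rw [Function.update_self]
      simp [VcGS]
    · rw [Function.update_of_ne h]
      exact hx i
  have hsub' : ((Function.update x j (j, c0)) c0).2.val ≠ 0 := by
    rw [Function.update_of_ne hc0j]
    exact hsub
  rw [cost_subopt m hm c0 hc0 _ hx' hsub', cost_subopt m hm c0 hc0 x hx hsub]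
  set F := Finset.univ.filter (fun i : Fin m => i.val ≠ 0 ∧ (x i).2.val = 0) with hFdef
  have hFj : j ∉ F := by
    rw [hFdef, Finset.mem_filter]
    rintro ⟨-, -, h⟩
    exact hxj h
  have hF' : Finset.univ.filter
      (fun i : Fin m => i.val ≠ 0 ∧ ((Function.update x j (j, c0)) i).2.val = 0)
      = insert j F := by
    ext i
    rw [Finset.mem_insert, hFdef, Finset.mem_filter, Finset.mem_filter]
    by_cases h : i = j
    · subst h
      rw [Function.update_self]
      simp [hj, hc0]
    · rw [Function.update_of_ne h]
      simp [h]
  have hcard : (Finset.univ.filter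
      (fun i : Fin m => i.val ≠ 0 ∧ ((Function.update x j (j, c0)) i).2.val = 0)).card
      = F.card + 1 := by
    rw [hF', Finset.card_insert_of_notMem hFj]
  rw [hcard]
  have hKle : F.card ≤ m - 2 := by
    have hss : F ⊂ Finset.univ.filter (fun i : Fin m => i.val ≠ 0) := by
      rw [Finset.ssubset_iff_of_subset]
      · exact ⟨j, by simp [hj], hFj⟩
      · intro i hi
        rw [hFdef, Finset.mem_filter] at hi
        rw [Finset.mem_filter]
        exact ⟨hi.1, hi.2.1⟩
    have := Finset.card_lt_card hss
    rw [card_periph m hm c0 hc0] at this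
    omega
  have h2N : 2 ≤ m ^ 2 := le_trans hm (Nat.le_self_pow two_ne_zero m)
  have hcast : (((m ^ 2 : ℕ) : ℝ≥0∞)) - 2 = ((m ^ 2 - 2 : ℕ) : ℝ≥0∞) := by
    rw [ENNReal.natCast_sub]
    norm_num
  rw [hcast]
  exact_mod_cast natarith m (m ^ 2) F.card h2N hKle hm

end GSaux

/-- In the instance `G_S` (with `n = m^2` nodes, central cluster `c0` of index
`0` and peripheral clusters of nonzero index, the node of index `0` in each cluster being
its optimal node), for any valid node selection `x`:
* the subgraph of finite-cost edges induced by the selected nodes is a star centred at the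
  chosen central node;
* the cost of its minimum spanning tree equals the sum over the `m-1` peripheral clusters
  of the cost of the edge joining the chosen peripheral node to the chosen central node;
* (i) if the chosen central node is suboptimal and exactly `k` of the chosen peripheral
  nodes are optimal, this cost is `k*n + (m-1-k)*2`;
* (ii) if the chosen central node is optimal and exactly `k` of the chosen peripheral nodes
  are optimal, this cost is `k + (m-1-k)*n^2`;
* the unique minimum-cost selection consists of all optimal nodes and has cost `m-1`;
* switching a single suboptimal peripheral node to the optimal one while the central node
  is suboptimal increases the cost by exactly `n - 2`. -/
theorem GS_mst_structure (m : ℕ) (hm : 2 ≤ m) (c0 : Fin m) (hc0 : c0.val = 0) :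
    (∀ x : Fin m → VS m, ValidGS m x →
      (∀ i j : Fin m, i ≠ j → (cGS m (x i) (x j) ≠ ⊤ ↔ (i.val = 0 ∨ j.val = 0))) ∧
      mstCost (cGS m) x =
        ∑ i ∈ Finset.univ.filter (fun i : Fin m => i.val ≠ 0), cGS m (x i) (x c0) ∧
      ((x c0).2.val ≠ 0 →
        mstCost (cGS m) x =
          ((Finset.univ.filter
              (fun i : Fin m => i.val ≠ 0 ∧ (x i).2.val = 0)).card : ℝ≥0∞) *
              ((m ^ 2 : ℕ) : ℝ≥0∞) +
            ((m - 1 - (Finset.univ.filter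
              (fun i : Fin m => i.val ≠ 0 ∧ (x i).2.val = 0)).card : ℕ) : ℝ≥0∞) * 2) ∧
      ((x c0).2.val = 0 →
        mstCost (cGS m) x =
          ((Finset.univ.filter
              (fun i : Fin m => i.val ≠ 0 ∧ (x i).2.val = 0)).card : ℝ≥0∞) +
            ((m - 1 - (Finset.univ.filter
              (fun i : Fin m => i.val ≠ 0 ∧ (x i).2.val = 0)).card : ℕ) : ℝ≥0∞) *
              ((m ^ 2 : ℕ) : ℝ≥0∞) ^ 2)) ∧
    (mstCost (cGS m) (fun i => (i, c0)) = ((m - 1 : ℕ) : ℝ≥0∞) ∧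
      ∀ y : Fin m → VS m, ValidGS m y → y ≠ (fun i => (i, c0)) →
        mstCost (cGS m) (fun i => (i, c0)) < mstCost (cGS m) y) ∧
    (∀ x : Fin m → VS m, ValidGS m x → (x c0).2.val ≠ 0 →
      ∀ j : Fin m, j.val ≠ 0 → (x j).2.val ≠ 0 →
        mstCost (cGS m) (Function.update x j (j, c0)) =
          mstCost (cGS m) x + (((m ^ 2 : ℕ) : ℝ≥0∞) - 2)) := by
  refine ⟨?_, ⟨?_, ?_⟩, ?_⟩
  · intro x hx
    exact ⟨fun i j hij => GSaux.cGS_ne_top_iff m c0 hc0 x hx i j hij,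
      GSaux.mstCost_eq m hm c0 hc0 x hx,
      fun h => GSaux.cost_subopt m hm c0 hc0 x hx h,
      fun h => GSaux.cost_opt m hm c0 hc0 x hx h⟩
  · exact GSaux.cost_xstar m hm c0 hc0
  · exact fun y hy hne => GSaux.xstar_unique m hm c0 hc0 y hy hne
  · exact fun x hx hsub j hj hxj => GSaux.switch_cost m hm c0 hc0 x hx hsub j hj hxj
end
end

section
/- For any instance of the generalised minimum spanning tree problem with m clusters, the expected optimization time of the tree-based (1+1) EA is O(m^{3(m-1)}). In particular, from any non-optimal spanning tree of the cluster graph, the probability that a single mutation step produces an optimal spanning tree is at least (1/e) * m^{-3(m-1)}. Furthermore, for any k >= 1, the probability that an optimal solution has not been found within e*k*m^{3(m-1)} iterations is less than exp(-k). Hence the tree-based (1+1) EA is a fixed-parameter evolutionary algorithm for GMSTP with respect to the parameter m. -/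
open scoped ENNReal BigOperators Classical

noncomputable section

/-- `E` is (the edge set of) a spanning tree of the complete graph on the `m` clusters. -/
def IsSpanningTree (m : ℕ) (E : Finset (Sym2 (Fin m))) : Prop :=
  (∀ e ∈ E, ¬ e.IsDiag) ∧ (SimpleGraph.fromEdgeSet (E : Set (Sym2 (Fin m)))).IsTree

/-- The edges of the complete graph on the `m` clusters that are not in `E`. -/
def nonTreeEdges (m : ℕ) (E : Finset (Sym2 (Fin m))) : Finset (Sym2 (Fin m)) :=
  Finset.univ.filter (fun e => ¬ e.IsDiag ∧ e ∉ E)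

/-- The edges of the cycle created by inserting the edge `e` into the spanning tree `E`:
those edges `f` of `E ∪ {e}` whose removal from `E ∪ {e}` leaves a spanning tree. -/
def cycleEdges (m : ℕ) (E : Finset (Sym2 (Fin m))) (e : Sym2 (Fin m)) :
    Finset (Sym2 (Fin m)) :=
  (insert e E).filter (fun f => IsSpanningTree m ((insert e E).erase f))

/-- The transition probability of a single edge swap: an edge `e` not in the current tree
`E` is chosen uniformly at random and inserted, and an edge chosen uniformly at random from
the cycle thereby created is removed. -/
def swapK (m : ℕ) (E E' : Finset (Sym2 (Fin m))) : ℝ≥0∞ :=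
  ∑ e ∈ nonTreeEdges m E, ((nonTreeEdges m E).card : ℝ≥0∞)⁻¹ *
    ∑ f ∈ cycleEdges m E e, ((cycleEdges m E e).card : ℝ≥0∞)⁻¹ *
      (if E' = (insert e E).erase f then 1 else 0)

/-- `k`-fold composition of the edge-swap transition kernel. -/
def swapKpow (m : ℕ) : ℕ → Finset (Sym2 (Fin m)) → Finset (Sym2 (Fin m)) → ℝ≥0∞
  | 0, E, E' => if E' = E then 1 else 0
  | k + 1, E, E' => ∑' E'' : Finset (Sym2 (Fin m)), swapKpow m k E E'' * swapK m E'' E'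

/-- The Poisson distribution with expectation `1`: `P(K = k) = exp(-1)/k!`. -/
def poisson1 (k : ℕ) : ℝ≥0∞ := ENNReal.ofReal (Real.exp (-1) / Nat.factorial k)

/-- Mutation distribution of the tree-based (1+1) EA: `K ~ Poisson(1)` edge swaps are
applied to the current spanning tree. -/
def treeMut (m : ℕ) (E E' : Finset (Sym2 (Fin m))) : ℝ≥0∞ :=
  ∑' k : ℕ, poisson1 k * swapKpow m k E E'

/-- The cost of the edge `e` between two clusters, given the node selection `p` and the
(symmetric) node-cost function `c`. -/
def eCost {V : Type*} (c : V → V → ℝ≥0∞) {m : ℕ} (p : Fin m → V) (e : Sym2 (Fin m)) :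
    ℝ≥0∞ :=
  ⨅ (i : Fin m) (j : Fin m) (_ : e = s(i, j)), c (p i) (p j)

/-- The lower-level value of an upper-level solution `E` (a spanning tree of the cluster
graph): the minimum over node selections `p i ∈ Vc i` of the total cost of the edges of `E`
(the lower-level problem is solved optimally). -/
def treeValue {V : Type*} (c : V → V → ℝ≥0∞) {m : ℕ} (Vc : Fin m → Finset V)
    (E : Finset (Sym2 (Fin m))) : ℝ≥0∞ :=
  ⨅ (p : Fin m → V) (_ : ∀ i, p i ∈ Vc i), ∑ e ∈ E, eCost c p e

/-- Optimal upper-level solutions: spanning trees of the cluster graph whose lower-level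
value is globally minimal. -/
def OptTree {V : Type*} (c : V → V → ℝ≥0∞) {m : ℕ} (Vc : Fin m → Finset V)
    (E : Finset (Sym2 (Fin m))) : Prop :=
  IsSpanningTree m E ∧ ∀ E', IsSpanningTree m E' → treeValue c Vc E ≤ treeValue c Vc E'
namespace GMST
open SimpleGraph

variable {m : ℕ}

lemma edgeSet_coe (E : Finset (Sym2 (Fin m))) (h : ∀ e ∈ E, ¬ e.IsDiag) :
    (fromEdgeSet (E : Set (Sym2 (Fin m)))).edgeSet = (E : Set (Sym2 (Fin m))) := by
  rw [edgeSet_fromEdgeSet]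
  ext e
  simp only [Set.mem_diff, Finset.mem_coe, Set.mem_setOf_eq]
  exact ⟨fun h => h.1, fun he => ⟨he, h e he⟩⟩

lemma edgeFinset_coe (E : Finset (Sym2 (Fin m))) (h : ∀ e ∈ E, ¬ e.IsDiag) :
    (fromEdgeSet (E : Set (Sym2 (Fin m)))).edgeFinset = E := by
  rw [← Finset.coe_inj, coe_edgeFinset, edgeSet_coe E h]

lemma card_spanningTree {E : Finset (Sym2 (Fin m))} (h : IsSpanningTree m E) :
    E.card + 1 = m := by
  have := h.2.card_edgeFinset
  rwa [edgeFinset_coe E h.1, Fintype.card_fin] at this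

lemma connected_delete {W : Type*} {G : SimpleGraph W} (hG : G.Connected) (u₀ v₀ : W)
    (hr : (G \ SimpleGraph.fromEdgeSet {s(u₀, v₀)}).Reachable u₀ v₀) :
    (G \ SimpleGraph.fromEdgeSet {s(u₀, v₀)}).Connected := by
  have hne : Nonempty W := hG.nonempty
  refine ⟨fun a b => ?_⟩
  obtain ⟨p⟩ := hG.preconnected a b
  induction p with
  | nil => exact Reachable.refl _
  | @cons x y z h q ih =>
    refine Reachable.trans ?_ ih
    by_cases hxy : s(x, y) = s(u₀, v₀)
    · rw [Sym2.eq_iff] at hxy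
      rcases hxy with ⟨rfl, rfl⟩ | ⟨rfl, rfl⟩
      · exact hr
      · exact hr.symm
    · exact Adj.reachable (by rw [sdiff_adj]; exact ⟨h, by simp [fromEdgeSet_adj, hxy]⟩)

lemma exists_exchange {E F : Finset (Sym2 (Fin m))} (hE : IsSpanningTree m E)
    (hF : IsSpanningTree m F) {e : Sym2 (Fin m)} (heF : e ∈ F) (heE : e ∉ E) :
    ∃ f, f ∈ E ∧ f ∉ F ∧ IsSpanningTree m ((insert e E).erase f) := by
  revert heF heE
  induction e using Sym2.ind with
  | _ a b =>
  intro heF heE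
  have hab : a ≠ b := fun h => hF.1 _ heF (by simp [h])
  set GE := fromEdgeSet (E : Set (Sym2 (Fin m))) with hGE
  set GF := fromEdgeSet (F : Set (Sym2 (Fin m))) with hGF
  obtain ⟨w⟩ := hE.2.isConnected.preconnected a b
  set P : GE.Path a b := w.toPath with hP
  have hPE : ∀ g ∈ (P : GE.Walk a b).edges, g ∈ E := by
    intro g hg
    have := (P : GE.Walk a b).edges_subset_edgeSet hg
    rw [hGE, edgeSet_coe E hE.1] at this
    exact this
  -- Step 1: find f on P not in F
  have hstep1 : ∃ f, f ∈ (P : GE.Walk a b).edges ∧ f ∉ F := by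
    by_contra hcon
    push_neg at hcon
    have hsub : ∀ g ∈ (P : GE.Walk a b).edges, g ∈ GF.edgeSet := by
      intro g hg
      rw [hGF, edgeSet_coe F hF.1]
      exact hcon g hg
    have hq : s(a, b) ∉ ((P : GE.Walk a b).transfer GF hsub).edges := by
      rw [SimpleGraph.Walk.edges_transfer]
      exact fun h => heE (hPE _ h)
    have hreach : (GF \ fromEdgeSet {s(a, b)}).Reachable a b :=
      (reachable_delete_edges_iff_exists_walk).mpr ⟨_, hq⟩
    have hadj : GF.Adj a b := by rw [hGF, fromEdgeSet_adj]; exact ⟨heF, hab⟩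
    obtain ⟨u, cyc, hcyc, -⟩ :=
      (adj_and_reachable_delete_edges_iff_exists_cycle).mp ⟨hadj, hreach⟩
    exact hF.2.IsAcyclic cyc hcyc
  obtain ⟨f, hfP, hfF⟩ := hstep1
  have hfE : f ∈ E := hPE f hfP
  have hfe : f ≠ s(a, b) := fun h => heE (h ▸ hfE)
  refine ⟨f, hfE, hfF, ?_⟩
  set E' : Finset (Sym2 (Fin m)) := (insert s(a, b) E).erase f with hE'
  set G' := fromEdgeSet (E' : Set (Sym2 (Fin m))) with hG'
  have hnd : ∀ g ∈ E', ¬ g.IsDiag := by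
    intro g hg
    have hg' := Finset.mem_of_mem_erase hg
    rcases Finset.mem_insert.mp hg' with rfl | hgE
    · simp [hab]
    · exact hE.1 g hgE
  set G'' := fromEdgeSet ((insert s(a, b) E : Finset (Sym2 (Fin m))) : Set (Sym2 (Fin m))) with hG''
  have hle : GE ≤ G'' := by
    apply fromEdgeSet_mono
    intro g hg
    simp only [Finset.coe_insert, Set.mem_insert_iff, Finset.mem_coe] at *
    exact Or.inr hg
  have hG''conn : G''.Connected := hE.2.isConnected.mono hle
  -- transfer P into G''
  have hsub'' : ∀ g ∈ (P : GE.Walk a b).edges, g ∈ G''.edgeSet := by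
    intro g hg
    rw [hG'', edgeSet_coe _ (fun x hx => by
      rcases Finset.mem_insert.mp hx with rfl | hxE
      · simp [hab]
      · exact hE.1 x hxE)]
    exact Finset.mem_insert_of_mem (hPE g hg)
  set P'' : G''.Path a b :=
    ⟨(P : GE.Walk a b).transfer G'' hsub'', SimpleGraph.Walk.IsPath.transfer hsub'' P.2⟩ with hP''
  have hadj'' : G''.Adj b a := by
    rw [hG'', fromEdgeSet_adj]
    exact ⟨by rw [Sym2.eq_swap]; exact Finset.mem_insert_self _ _, hab.symm⟩
  have hPedges : (P'' : G''.Walk a b).edges = (P : GE.Walk a b).edges :=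
    SimpleGraph.Walk.edges_transfer _ _
  have hcyc : (SimpleGraph.Walk.cons hadj'' (P'' : G''.Walk a b)).IsCycle := by
    apply SimpleGraph.Path.cons_isCycle
    rw [hPedges, Sym2.eq_swap]
    exact fun h => heE (hPE _ h)
  have hfcyc : f ∈ (SimpleGraph.Walk.cons hadj'' (P'' : G''.Walk a b)).edges := by
    rw [SimpleGraph.Walk.edges_cons, hPedges]
    exact List.mem_cons_of_mem _ hfP
  -- G' equals G'' minus f
  have hG'eq : G' = G'' \ fromEdgeSet {f} := by
    rw [hG', hE', Finset.coe_erase, fromEdgeSet_sdiff, hG'']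
  have hconn : G'.Connected := by
    rw [hG'eq]
    revert hfcyc
    induction f using Sym2.ind with
    | _ u₀ v₀ =>
    intro hfcyc
    obtain ⟨-, hreach⟩ :=
      (adj_and_reachable_delete_edges_iff_exists_cycle (G := G'')).mpr ⟨b, _, hcyc, hfcyc⟩
    exact connected_delete hG''conn u₀ v₀ hreach
  refine ⟨hnd, ⟨hconn, ?_⟩⟩
  -- acyclicity
  intro u cyc hcycle
  have hcedges : ∀ g ∈ cyc.edges, g ∈ E' := by
    intro g hg
    have := cyc.edges_subset_edgeSet hg
    rwa [edgeSet_coe E' hnd] at this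
  by_cases hec : s(a, b) ∈ cyc.edges
  · obtain ⟨-, hreach⟩ :=
      (adj_and_reachable_delete_edges_iff_exists_cycle (G := G')).mpr ⟨u, cyc, hcycle, hec⟩
    -- G' minus e = GE minus f
    have hEq2 : G' \ fromEdgeSet {s(a, b)} = fromEdgeSet ((E.erase f : Finset (Sym2 (Fin m))) : Set (Sym2 (Fin m))) := by
      rw [hG', ← fromEdgeSet_sdiff]
      congr 1
      rw [hE', Finset.coe_erase, Finset.coe_erase, Finset.coe_insert]
      ext g
      simp only [Set.mem_diff, Set.mem_insert_iff, Set.mem_singleton_iff, Finset.mem_coe]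
      constructor
      · rintro ⟨⟨rfl | hgE, hgf⟩, hge⟩
        · exact absurd rfl hge
        · exact ⟨hgE, hgf⟩
      · rintro ⟨hgE, hgf⟩
        exact ⟨⟨Or.inr hgE, hgf⟩, fun h => heE (h ▸ hgE)⟩
    rw [deleteEdges, hEq2] at hreach
    -- turn into walk in GE avoiding f
    obtain ⟨r⟩ := hreach
    have hrsub : ∀ g ∈ r.edges, g ∈ GE.edgeSet := by
      intro g hg
      have := r.edges_subset_edgeSet hg
      rw [edgeSet_coe _ (fun x hx => hE.1 x (Finset.mem_of_mem_erase hx))] at this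
      rw [hGE, edgeSet_coe E hE.1]
      exact Finset.mem_of_mem_erase this
    have hrf : f ∉ r.edges := by
      intro hg
      have := r.edges_subset_edgeSet hg
      rw [edgeSet_coe _ (fun x hx => hE.1 x (Finset.mem_of_mem_erase hx))] at this
      exact (Finset.notMem_erase f E) this
    set q : GE.Path a b := (r.transfer GE hrsub).toPath with hq
    have hqf : f ∉ (q : GE.Walk a b).edges := by
      intro h
      apply hrf
      have := SimpleGraph.Walk.edges_toPath_subset (r.transfer GE hrsub) h
      rwa [SimpleGraph.Walk.edges_transfer] at this
    have := hE.2.IsAcyclic.path_unique q P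
    rw [this] at hqf
    exact hqf hfP
  · -- cycle avoids e, so it lives in GE
    have hsubE : ∀ g ∈ cyc.edges, g ∈ GE.edgeSet := by
      intro g hg
      have hgE' := hcedges g hg
      have hgne : g ≠ s(a, b) := fun h => hec (h ▸ hg)
      rw [hGE, edgeSet_coe E hE.1]
      rcases Finset.mem_insert.mp (Finset.mem_of_mem_erase hgE') with h | h
      · exact absurd h hgne
      · exact h
    exact hE.2.IsAcyclic _ (hcycle.transfer hsubE)

end GMST
namespace GMST
open SimpleGraph

lemma exists_spanningTree (m : ℕ) (hm : 1 ≤ m) : ∃ E, IsSpanningTree m E := by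
  set z : Fin m := ⟨0, hm⟩ with hz
  set E₀ : Finset (Sym2 (Fin m)) :=
    (Finset.univ.filter (fun i : Fin m => i ≠ z)).image (fun i => s(z, i)) with hE₀
  have hmem : ∀ g ∈ E₀, ∃ i, i ≠ z ∧ g = s(z, i) := by
    intro g hg
    rw [hE₀, Finset.mem_image] at hg
    obtain ⟨i, hi, rfl⟩ := hg
    exact ⟨i, (Finset.mem_filter.mp hi).2, rfl⟩
  have hmem' : ∀ i : Fin m, i ≠ z → s(z, i) ∈ E₀ := by
    intro i hi
    rw [hE₀, Finset.mem_image]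
    exact ⟨i, Finset.mem_filter.mpr ⟨Finset.mem_univ _, hi⟩, rfl⟩
  have hnd : ∀ g ∈ E₀, ¬ g.IsDiag := by
    intro g hg
    obtain ⟨i, hi, rfl⟩ := hmem g hg
    simp [Ne.symm hi]
  haveI : Nonempty (Fin m) := ⟨z⟩
  refine ⟨E₀, hnd, ⟨⟨?_⟩, ?_⟩⟩
  · -- preconnected
    intro a b
    have key : ∀ v : Fin m, (fromEdgeSet (E₀ : Set (Sym2 (Fin m)))).Reachable v z := by
      intro v
      by_cases hv : v = z
      · exact hv ▸ Reachable.refl _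
      · refine Adj.reachable ?_
        rw [fromEdgeSet_adj]
        exact ⟨by rw [Sym2.eq_swap]; exact hmem' v hv, hv⟩
    exact (key a).trans (key b).symm
  · -- acyclic
    rw [isAcyclic_iff_forall_edge_isBridge]
    intro g hg
    rw [edgeSet_coe E₀ hnd] at hg
    obtain ⟨i, hi, rfl⟩ := hmem g hg
    rw [isBridge_iff]
    refine And.right (a := (fromEdgeSet (E₀ : Set (Sym2 (Fin m)))).Adj z i) ⟨?_, ?_⟩
    · rw [fromEdgeSet_adj]
      exact ⟨hg, Ne.symm hi⟩
    · rintro ⟨w⟩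
      cases hw : w.reverse with
      | nil => exact hi (by simpa using (SimpleGraph.Walk.nil_iff_eq_nil (p := w.reverse)).mp (by rw [hw]) ▸ rfl)
      | cons h q =>
        -- h : Adj i x in the deleted graph
        rename_i x
        rw [deleteEdges, sdiff_adj] at h
        obtain ⟨hadj, hnadj⟩ := h
        rw [fromEdgeSet_adj] at hadj
        obtain ⟨j, hj, hsj⟩ := hmem _ hadj.1
        rw [Sym2.eq_iff] at hsj
        rcases hsj with ⟨hiz, -⟩ | ⟨hij, hxz⟩
        · exact hi hiz
        · apply hnadj
          rw [fromEdgeSet_adj]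
          refine ⟨?_, hadj.2⟩
          rw [Set.mem_singleton_iff, hxz, Sym2.eq_swap]
  
end GMST
namespace GMST

lemma natmul_inv_le_one (n : ℕ) : (n : ℝ≥0∞) * (n : ℝ≥0∞)⁻¹ ≤ 1 := by
  rcases eq_or_ne (n : ℝ≥0∞) 0 with h | h
  · simp [h]
  · exact le_of_eq (ENNReal.mul_inv_cancel h (ENNReal.natCast_ne_top n))

lemma swapK_mass (m : ℕ) (E : Finset (Sym2 (Fin m))) : ∑' E', swapK m E E' ≤ 1 := by
  rw [tsum_fintype]
  unfold swapK
  rw [Finset.sum_comm]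
  have key : ∀ e ∈ nonTreeEdges m E,
      (∑ E' : Finset (Sym2 (Fin m)), ((nonTreeEdges m E).card : ℝ≥0∞)⁻¹ *
        ∑ f ∈ cycleEdges m E e, ((cycleEdges m E e).card : ℝ≥0∞)⁻¹ *
          (if E' = (insert e E).erase f then 1 else 0)) ≤
        ((nonTreeEdges m E).card : ℝ≥0∞)⁻¹ := by
    intro e _
    rw [← Finset.mul_sum]
    have : (∑ E' : Finset (Sym2 (Fin m)), ∑ f ∈ cycleEdges m E e,
        ((cycleEdges m E e).card : ℝ≥0∞)⁻¹ * (if E' = (insert e E).erase f then 1 else 0)) ≤ 1 := by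
      rw [Finset.sum_comm]
      have : ∀ f ∈ cycleEdges m E e,
          (∑ E' : Finset (Sym2 (Fin m)), ((cycleEdges m E e).card : ℝ≥0∞)⁻¹ *
            (if E' = (insert e E).erase f then 1 else 0)) = ((cycleEdges m E e).card : ℝ≥0∞)⁻¹ := by
        intro f _
        rw [← Finset.mul_sum, Finset.sum_ite_eq' Finset.univ, if_pos (Finset.mem_univ _), mul_one]
      rw [Finset.sum_congr rfl this, Finset.sum_const, nsmul_eq_mul]
      exact natmul_inv_le_one _
    calc ((nonTreeEdges m E).card : ℝ≥0∞)⁻¹ * _ ≤ ((nonTreeEdges m E).card : ℝ≥0∞)⁻¹ * 1 :=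
          mul_le_mul_right this _
      _ = _ := mul_one _
  calc (∑ e ∈ nonTreeEdges m E, _) ≤ ∑ e ∈ nonTreeEdges m E, ((nonTreeEdges m E).card : ℝ≥0∞)⁻¹ :=
        Finset.sum_le_sum key
    _ = ((nonTreeEdges m E).card : ℝ≥0∞) * ((nonTreeEdges m E).card : ℝ≥0∞)⁻¹ := by
        rw [Finset.sum_const, nsmul_eq_mul]
    _ ≤ 1 := natmul_inv_le_one _

end GMST
namespace GMST

lemma card_nonTreeEdges_le (m : ℕ) (hm : 1 ≤ m) (E : Finset (Sym2 (Fin m))) :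
    (nonTreeEdges m E).card ≤ m ^ 2 := by
  have h1 : (nonTreeEdges m E).card ≤ Fintype.card (Sym2 (Fin m)) := by
    rw [← Finset.card_univ]
    exact Finset.card_le_card (Finset.filter_subset _ _)
  have h2 : Fintype.card (Sym2 (Fin m)) = (m + 1).choose 2 := by
    rw [Sym2.card, Fintype.card_fin]
  have h3 : (m + 1).choose 2 ≤ m ^ 2 := by
    rw [Nat.choose_two_right]
    simp only [Nat.add_sub_cancel]
    have : (m + 1) * m ≤ m ^ 2 * 2 := by nlinarith
    exact Nat.div_le_of_le_mul (by linarith [this])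
  omega

lemma card_cycleEdges_le {m : ℕ} {E : Finset (Sym2 (Fin m))} (hE : IsSpanningTree m E)
    (e : Sym2 (Fin m)) : (cycleEdges m E e).card ≤ m := by
  have h1 : (cycleEdges m E e).card ≤ (insert e E).card :=
    Finset.card_le_card (Finset.filter_subset _ _)
  have h2 : (insert e E).card ≤ E.card + 1 := Finset.card_insert_le _ _
  have h3 := card_spanningTree hE
  omega

lemma swapK_lower {m : ℕ} (hm : 1 ≤ m) {E : Finset (Sym2 (Fin m))} (hE : IsSpanningTree m E)
    {e f : Sym2 (Fin m)} (he : e ∈ nonTreeEdges m E) (hf : f ∈ cycleEdges m E e) :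
    ((m : ℝ≥0∞) ^ 3)⁻¹ ≤ swapK m E ((insert e E).erase f) := by
  have hterm : ((m : ℝ≥0∞) ^ 2)⁻¹ * (m : ℝ≥0∞)⁻¹ ≤
      ((nonTreeEdges m E).card : ℝ≥0∞)⁻¹ *
        ∑ f' ∈ cycleEdges m E e, ((cycleEdges m E e).card : ℝ≥0∞)⁻¹ *
          (if (insert e E).erase f = (insert e E).erase f' then 1 else 0) := by
    have h1 : ((m : ℝ≥0∞) ^ 2)⁻¹ ≤ ((nonTreeEdges m E).card : ℝ≥0∞)⁻¹ := by
      apply ENNReal.inv_le_inv.mpr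
      have := card_nonTreeEdges_le m hm E
      exact_mod_cast (by exact_mod_cast Nat.cast_le.mpr this : ((nonTreeEdges m E).card : ℝ≥0∞) ≤ (m ^ 2 : ℕ))
    have h2 : (m : ℝ≥0∞)⁻¹ ≤
        ∑ f' ∈ cycleEdges m E e, ((cycleEdges m E e).card : ℝ≥0∞)⁻¹ *
          (if (insert e E).erase f = (insert e E).erase f' then 1 else 0) := by
      have hsingle : ((cycleEdges m E e).card : ℝ≥0∞)⁻¹ *
          (if (insert e E).erase f = (insert e E).erase f then 1 else 0) ≤
          ∑ f' ∈ cycleEdges m E e, ((cycleEdges m E e).card : ℝ≥0∞)⁻¹ *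
            (if (insert e E).erase f = (insert e E).erase f' then 1 else 0) :=
        Finset.single_le_sum (f := fun f' => ((cycleEdges m E e).card : ℝ≥0∞)⁻¹ *
          (if (insert e E).erase f = (insert e E).erase f' then 1 else 0))
          (fun _ _ => zero_le) hf
      rw [if_pos rfl, mul_one] at hsingle
      refine le_trans ?_ hsingle
      apply ENNReal.inv_le_inv.mpr
      have := card_cycleEdges_le hE e
      exact_mod_cast Nat.cast_le.mpr this
    exact mul_le_mul' h1 h2
  calc ((m : ℝ≥0∞) ^ 3)⁻¹ = ((m : ℝ≥0∞) ^ 2)⁻¹ * (m : ℝ≥0∞)⁻¹ := by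
        rw [← ENNReal.mul_inv (by left; exact pow_ne_zero 2 (show (m:ℝ≥0∞) ≠ 0 from Nat.cast_ne_zero.mpr (by omega))) (by left; exact ENNReal.pow_ne_top (ENNReal.natCast_ne_top m)), ← pow_succ]
    _ ≤ _ := hterm.trans (Finset.single_le_sum (f := fun e' => ((nonTreeEdges m E).card : ℝ≥0∞)⁻¹ *
          ∑ f' ∈ cycleEdges m E e', ((cycleEdges m E e').card : ℝ≥0∞)⁻¹ *
            (if (insert e E).erase f = (insert e' E).erase f' then 1 else 0))
          (fun _ _ => zero_le) he)

lemma swapK_spanning {m : ℕ} {E E' : Finset (Sym2 (Fin m))} (h : swapK m E E' ≠ 0) :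
    IsSpanningTree m E' := by
  unfold swapK at h
  obtain ⟨e, he, hne⟩ := Finset.exists_ne_zero_of_sum_ne_zero h
  have h2 : (∑ f ∈ cycleEdges m E e, ((cycleEdges m E e).card : ℝ≥0∞)⁻¹ *
      (if E' = (insert e E).erase f then 1 else 0)) ≠ 0 := by
    intro h0; rw [h0, mul_zero] at hne; exact hne rfl
  obtain ⟨f, hf, hne2⟩ := Finset.exists_ne_zero_of_sum_ne_zero h2
  have : E' = (insert e E).erase f := by
    by_contra hc
    rw [if_neg hc, mul_zero] at hne2; exact hne2 rfl
  rw [this]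
  exact (Finset.mem_filter.mp hf).2

end GMST
namespace GMST

lemma swapKpow_succ' (m k : ℕ) (E E' : Finset (Sym2 (Fin m))) :
    swapKpow m (k + 1) E E' = ∑' E'' : Finset (Sym2 (Fin m)), swapK m E E'' * swapKpow m k E'' E' := by
  induction k generalizing E' with
  | zero =>
    show (∑' E'' : Finset (Sym2 (Fin m)), swapKpow m 0 E E'' * swapK m E'' E') = _
    rw [tsum_eq_single E (fun E'' hne => by
      show (if E'' = E then (1:ℝ≥0∞) else 0) * swapK m E'' E' = 0
      rw [if_neg hne, zero_mul])]
    show (if E = E then (1:ℝ≥0∞) else 0) * swapK m E E' = _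
    rw [if_pos rfl, one_mul]
    rw [tsum_eq_single E' (fun E'' hne => by
      show swapK m E E'' * swapKpow m 0 E'' E' = 0
      show swapK m E E'' * (if E' = E'' then (1:ℝ≥0∞) else 0) = 0
      rw [if_neg (fun h => hne h.symm), mul_zero])]
    show _ = swapK m E E' * (if E' = E' then (1:ℝ≥0∞) else 0)
    rw [if_pos rfl, mul_one]
  | succ k ih =>
    show (∑' F : Finset (Sym2 (Fin m)), swapKpow m (k+1) E F * swapK m F E') = _
    calc (∑' F : Finset (Sym2 (Fin m)), swapKpow m (k+1) E F * swapK m F E')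
        = ∑' F : Finset (Sym2 (Fin m)), (∑' E'' : Finset (Sym2 (Fin m)),
            swapK m E E'' * swapKpow m k E'' F) * swapK m F E' := by
          congr 1; funext F; rw [ih]
      _ = ∑' F, ∑' E'', swapK m E E'' * swapKpow m k E'' F * swapK m F E' := by
          congr 1; funext F; rw [ENNReal.tsum_mul_right]
      _ = ∑' E'', ∑' F, swapK m E E'' * swapKpow m k E'' F * swapK m F E' := ENNReal.tsum_comm
      _ = ∑' E'', swapK m E E'' * ∑' F, swapKpow m k E'' F * swapK m F E' := by
          simp only [mul_assoc, ENNReal.tsum_mul_left]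

lemma swapKpow_mass (m : ℕ) (k : ℕ) (E : Finset (Sym2 (Fin m))) :
    ∑' E', swapKpow m k E E' ≤ 1 := by
  induction k generalizing E with
  | zero =>
    rw [tsum_eq_single E (fun E'' hne => by show (if E'' = E then (1:ℝ≥0∞) else 0) = 0; rw [if_neg hne])]
    simp [swapKpow]
  | succ k ih =>
    show (∑' E' : Finset (Sym2 (Fin m)), ∑' E'', swapKpow m k E E'' * swapK m E'' E') ≤ 1
    rw [ENNReal.tsum_comm]
    calc (∑' E'' : Finset (Sym2 (Fin m)), ∑' E', swapKpow m k E E'' * swapK m E'' E')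
        = ∑' E'' : Finset (Sym2 (Fin m)), swapKpow m k E E'' * ∑' E', swapK m E'' E' := by
          congr 1; funext E''; rw [ENNReal.tsum_mul_left]
      _ ≤ ∑' E'' : Finset (Sym2 (Fin m)), swapKpow m k E E'' * 1 :=
          ENNReal.tsum_le_tsum (fun E'' => mul_le_mul_right (swapK_mass m E'') _)
      _ = ∑' E'' : Finset (Sym2 (Fin m)), swapKpow m k E E'' := by simp
      _ ≤ 1 := ih E

lemma swapKpow_spanning {m : ℕ} {k : ℕ} {E E' : Finset (Sym2 (Fin m))}
    (hE : IsSpanningTree m E) (h : swapKpow m k E E' ≠ 0) : IsSpanningTree m E' := by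
  cases k with
  | zero =>
    have : E' = E := by
      by_contra hc
      exact h (by show (if E' = E then (1:ℝ≥0∞) else 0) = 0; rw [if_neg hc])
    rwa [this]
  | succ k =>
    have : ∃ E'', swapKpow m k E E'' * swapK m E'' E' ≠ 0 := by
      by_contra hc
      push_neg at hc
      exact h (by show (∑' E'', swapKpow m k E E'' * swapK m E'' E') = 0; simp [hc])
    obtain ⟨E'', hne⟩ := this
    exact swapK_spanning (fun h0 => hne (by rw [h0, mul_zero]))

lemma sdiff_erase_eq {m : ℕ} {E F : Finset (Sym2 (Fin m))} {e f : Sym2 (Fin m)}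
    (heF : e ∈ F) (heE : e ∉ E) (hfE : f ∈ E) (hfF : f ∉ F) :
    F \ ((insert e E).erase f) = (F \ E).erase e := by
  ext g
  simp only [Finset.mem_sdiff, Finset.mem_erase, Finset.mem_insert]
  constructor
  · rintro ⟨hgF, hg⟩
    have hgf : g ≠ f := fun h => hfF (h ▸ hgF)
    have hni : ¬(g = e ∨ g ∈ E) := fun h => hg ⟨hgf, h⟩
    exact ⟨fun h => hni (Or.inl h), hgF, fun h => hni (Or.inr h)⟩
  · rintro ⟨hge, hgF, hgE⟩
    refine ⟨hgF, fun h => ?_⟩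
    rcases h.2 with h' | h'
    · exact hge h'
    · exact hgE h'

lemma swapKpow_lower (m : ℕ) (hm : 1 ≤ m) :
    ∀ (d : ℕ) (E F : Finset (Sym2 (Fin m))), IsSpanningTree m E → IsSpanningTree m F →
      (F \ E).card = d →
      (d.factorial : ℝ≥0∞) * (((m : ℝ≥0∞) ^ 3)⁻¹) ^ d ≤ swapKpow m d E F := by
  intro d
  induction d with
  | zero =>
    intro E F hE hF hcard
    have hsub : F ⊆ E := by
      intro g hg
      by_contra hc
      have : g ∈ F \ E := Finset.mem_sdiff.mpr ⟨hg, hc⟩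
      rw [Finset.card_eq_zero.mp hcard] at this
      exact absurd this (Finset.notMem_empty g)
    have hcards : E.card ≤ F.card := by
      have h1 := card_spanningTree hE
      have h2 := card_spanningTree hF
      omega
    have hFE : F = E := Finset.eq_of_subset_of_card_le hsub hcards
    subst hFE
    simp [swapKpow]
  | succ d ih =>
    intro E F hE hF hcard
    have hchoice : ∀ e ∈ F \ E, ∃ f, f ∈ E ∧ f ∉ F ∧ IsSpanningTree m ((insert e E).erase f) := by
      intro e he
      rw [Finset.mem_sdiff] at he
      exact exists_exchange hE hF he.1 he.2
    choose! g hg1 hg2 hg3 using hchoice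
    set X : Sym2 (Fin m) → Finset (Sym2 (Fin m)) := fun e => (insert e E).erase (g e) with hX
    have hXmem : ∀ e ∈ F \ E, e ∈ X e := by
      intro e he
      rw [hX]
      apply Finset.mem_erase.mpr
      refine ⟨fun h => ?_, Finset.mem_insert_self _ _⟩
      exact (Finset.mem_sdiff.mp he).2 (h ▸ hg1 e he)
    have hXinj : ∀ e₁ ∈ F \ E, ∀ e₂ ∈ F \ E, X e₁ = X e₂ → e₁ = e₂ := by
      intro e₁ h₁ e₂ h₂ hXeq
      by_contra hne
      have he₁ : e₁ ∈ X e₂ := hXeq ▸ hXmem e₁ h₁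
      rw [hX] at he₁
      rcases Finset.mem_insert.mp (Finset.mem_of_mem_erase he₁) with h | h
      · exact hne h
      · exact (Finset.mem_sdiff.mp h₁).2 h
    -- lower bound via the image
    rw [swapKpow_succ']
    have hgeim : ∑ E'' ∈ (F \ E).image X, swapK m E E'' * swapKpow m d E'' F ≤
        ∑' E'' : Finset (Sym2 (Fin m)), swapK m E E'' * swapKpow m d E'' F :=
      ENNReal.sum_le_tsum _
    refine le_trans ?_ hgeim
    rw [Finset.sum_image hXinj]
    have hterm : ∀ e ∈ F \ E,
        ((m : ℝ≥0∞) ^ 3)⁻¹ * ((d.factorial : ℝ≥0∞) * (((m : ℝ≥0∞) ^ 3)⁻¹) ^ d) ≤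
          swapK m E (X e) * swapKpow m d (X e) F := by
      intro e he
      have hesd := Finset.mem_sdiff.mp he
      have heNT : e ∈ nonTreeEdges m E :=
        Finset.mem_filter.mpr ⟨Finset.mem_univ _, hF.1 e hesd.1, hesd.2⟩
      have hfcyc : g e ∈ cycleEdges m E e :=
        Finset.mem_filter.mpr ⟨Finset.mem_insert_of_mem (hg1 e he), hg3 e he⟩
      have h1 : ((m : ℝ≥0∞) ^ 3)⁻¹ ≤ swapK m E (X e) := swapK_lower hm hE heNT hfcyc
      have h2 : (d.factorial : ℝ≥0∞) * (((m : ℝ≥0∞) ^ 3)⁻¹) ^ d ≤ swapKpow m d (X e) F := by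
        apply ih (X e) F (hg3 e he) hF
        rw [hX]
        show (F \ (insert e E).erase (g e)).card = d
        rw [sdiff_erase_eq hesd.1 hesd.2 (hg1 e he) (hg2 e he), Finset.card_erase_of_mem
          (Finset.mem_sdiff.mpr hesd), hcard]
        omega
      exact mul_le_mul' h1 h2
    calc ((d+1).factorial : ℝ≥0∞) * (((m : ℝ≥0∞) ^ 3)⁻¹) ^ (d+1)
        = ∑ _e ∈ F \ E, ((m : ℝ≥0∞) ^ 3)⁻¹ * ((d.factorial : ℝ≥0∞) * (((m : ℝ≥0∞) ^ 3)⁻¹) ^ d) := by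
          rw [Finset.sum_const, nsmul_eq_mul, hcard, Nat.factorial_succ]
          push_cast
          ring
      _ ≤ ∑ e ∈ F \ E, swapK m E (X e) * swapKpow m d (X e) F := Finset.sum_le_sum hterm

end GMST
namespace GMST

variable {S : Type*}

def snocEquiv (S : Type*) (t : ℕ) : ((Fin (t + 1) → S) × S) ≃ (Fin (t + 2) → S) where
  toFun p := Fin.snoc p.1 p.2
  invFun g := (fun i => g i.castSucc, g (Fin.last (t + 1)))
  left_inv p := by
    refine Prod.ext ?_ ?_
    · funext i; simp [Fin.snoc_castSucc]
    · simp [Fin.snoc_last]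
  right_inv g := by
    funext i
    induction i using Fin.lastCases with
    | last => simp [Fin.snoc_last]
    | cast i => simp [Fin.snoc_castSucc]

lemma trajProb_snoc (μ0 : S → ℝ≥0∞) (K : S → S → ℝ≥0∞) (t : ℕ) (g : Fin (t + 1) → S) (a : S) :
    trajProb μ0 K (Fin.snoc g a : Fin (t + 2) → S) =
      trajProb μ0 K g * K (g (Fin.last t)) a := by
  unfold trajProb
  rw [Fin.prod_univ_castSucc]
  have h0 : (Fin.snoc g a : Fin (t + 2) → S) 0 = g 0 := by
    rw [show (0 : Fin (t + 2)) = Fin.castSucc 0 by simp, Fin.snoc_castSucc]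
  have hlast : K ((Fin.snoc g a : Fin (t + 2) → S) (Fin.last t).castSucc)
      ((Fin.snoc g a : Fin (t + 2) → S) (Fin.last t).succ) = K (g (Fin.last t)) a := by
    rw [Fin.snoc_castSucc, Fin.succ_last, Fin.snoc_last]
  have hmid : ∀ i : Fin t,
      K ((Fin.snoc g a : Fin (t + 2) → S) (i.castSucc).castSucc)
        ((Fin.snoc g a : Fin (t + 2) → S) (i.castSucc).succ) =
      K (g i.castSucc) (g i.succ) := by
    intro i
    rw [Fin.snoc_castSucc, Fin.succ_castSucc, Fin.snoc_castSucc]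
  rw [h0, hlast, Finset.prod_congr rfl (fun i _ => hmid i), mul_assoc]

lemma traj_inv (μ0 : S → ℝ≥0∞) (K : S → S → ℝ≥0∞) (Inv : S → Prop)
    (h0 : ∀ x, μ0 x ≠ 0 → Inv x) (hK : ∀ x y, Inv x → K x y ≠ 0 → Inv y)
    {t : ℕ} (x : Fin (t + 1) → S) (h : trajProb μ0 K x ≠ 0) : ∀ i, Inv (x i) := by
  unfold trajProb at h
  have hμ : μ0 (x 0) ≠ 0 := fun h' => h (by rw [h', zero_mul])
  have hprod : ∀ i : Fin t, K (x i.castSucc) (x i.succ) ≠ 0 := by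
    intro i
    have : (∏ i : Fin t, K (x i.castSucc) (x i.succ)) ≠ 0 := fun h' => h (by rw [h', mul_zero])
    exact Finset.prod_ne_zero_iff.mp this i (Finset.mem_univ _)
  intro i
  induction i using Fin.induction with
  | zero => exact h0 _ hμ
  | succ i ih => exact hK _ _ ih (hprod i)

lemma survival_zero_le_one (μ0 : S → ℝ≥0∞) (K : S → S → ℝ≥0∞) (Opt : S → Prop)
    (hμ0 : ∑' x, μ0 x = 1) : survival μ0 K Opt 0 ≤ 1 := by
  unfold survival
  rw [← (Equiv.funUnique (Fin 1) S).symm.tsum_eq]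
  rw [← hμ0]
  apply ENNReal.tsum_le_tsum
  intro s
  by_cases h : ∀ i : Fin 1, ¬ Opt (((Equiv.funUnique (Fin 1) S).symm s) i)
  · rw [if_pos h]
    unfold trajProb
    simp [Equiv.funUnique]
  · rw [if_neg h]
    exact zero_le

lemma survival_succ_le (μ0 : S → ℝ≥0∞) (K : S → S → ℝ≥0∞) (Opt Inv : S → Prop) (r : ℝ≥0∞)
    (h0 : ∀ x, μ0 x ≠ 0 → Inv x) (hK : ∀ x y, Inv x → K x y ≠ 0 → Inv y)
    (hrow : ∀ x, Inv x → ¬ Opt x → (∑' y, if ¬ Opt y then K x y else 0) ≤ r) (t : ℕ) :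
    survival μ0 K Opt (t + 1) ≤ r * survival μ0 K Opt t := by
  unfold survival
  rw [← (snocEquiv S t).tsum_eq]
  have hpt : ∀ (p : (Fin (t + 1) → S) × S),
      (if ∀ i, ¬ Opt ((snocEquiv S t) p i) then trajProb μ0 K ((snocEquiv S t) p) else 0) =
      (if ∀ i, ¬ Opt (p.1 i) then trajProb μ0 K p.1 * (if ¬ Opt p.2 then K (p.1 (Fin.last t)) p.2 else 0) else 0) := by
    rintro ⟨g, a⟩
    have hiff : (∀ i, ¬ Opt ((snocEquiv S t) (g, a) i)) ↔ ((∀ i, ¬ Opt (g i)) ∧ ¬ Opt a) := by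
      constructor
      · intro h
        refine ⟨fun i => ?_, ?_⟩
        · have := h i.castSucc
          rwa [show (snocEquiv S t) (g, a) i.castSucc = g i by simp [snocEquiv]] at this
        · have := h (Fin.last (t + 1))
          rwa [show (snocEquiv S t) (g, a) (Fin.last (t + 1)) = a by simp [snocEquiv]] at this
      · rintro ⟨hg, ha⟩ i
        induction i using Fin.lastCases with
        | last => rwa [show (snocEquiv S t) (g, a) (Fin.last (t + 1)) = a by simp [snocEquiv]]
        | cast i =>
          rw [show (snocEquiv S t) (g, a) i.castSucc = g i by simp [snocEquiv]]
          exact hg i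
    by_cases h : (∀ i, ¬ Opt (g i)) ∧ ¬ Opt a
    · rw [if_pos (hiff.mpr h), if_pos h.1, if_pos h.2]
      show trajProb μ0 K (Fin.snoc g a : Fin (t + 2) → S) = _
      rw [trajProb_snoc]
    · rw [if_neg (fun hc => h (hiff.mp hc))]
      by_cases h1 : ∀ i, ¬ Opt (g i)
      · have h2 : ¬ ¬ Opt a := fun hc => h ⟨h1, hc⟩
        rw [if_pos h1, if_neg h2, mul_zero]
      · rw [if_neg h1]
  calc (∑' p : (Fin (t + 1) → S) × S,
        if ∀ i, ¬ Opt ((snocEquiv S t) p i) then trajProb μ0 K ((snocEquiv S t) p) else 0)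
      = ∑' p : (Fin (t + 1) → S) × S,
          (if ∀ i, ¬ Opt (p.1 i) then trajProb μ0 K p.1 * (if ¬ Opt p.2 then K (p.1 (Fin.last t)) p.2 else 0) else 0) :=
        tsum_congr hpt
    _ = ∑' g : Fin (t + 1) → S, ∑' a : S,
          (if ∀ i, ¬ Opt (g i) then trajProb μ0 K g * (if ¬ Opt a then K (g (Fin.last t)) a else 0) else 0) :=
        ENNReal.tsum_prod (f := fun g a =>
          if ∀ i, ¬ Opt (g i) then trajProb μ0 K g * (if ¬ Opt a then K (g (Fin.last t)) a else 0) else 0)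
    _ = ∑' g : Fin (t + 1) → S,
          (if ∀ i, ¬ Opt (g i) then trajProb μ0 K g * (∑' a : S, if ¬ Opt a then K (g (Fin.last t)) a else 0) else 0) := by
        apply tsum_congr
        intro g
        by_cases h1 : ∀ i, ¬ Opt (g i)
        · simp only [if_pos h1, ENNReal.tsum_mul_left]
        · simp only [if_neg h1, tsum_zero]
    _ ≤ ∑' g : Fin (t + 1) → S, (if ∀ i, ¬ Opt (g i) then trajProb μ0 K g * r else 0) := by
        apply ENNReal.tsum_le_tsum
        intro g
        by_cases h1 : ∀ i, ¬ Opt (g i)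
        · rw [if_pos h1, if_pos h1]
          rcases eq_or_ne (trajProb μ0 K g) 0 with h2 | h2
          · rw [h2, zero_mul, zero_mul]
          · exact mul_le_mul_right (hrow _ (traj_inv μ0 K Inv h0 hK g h2 (Fin.last t))
              (h1 (Fin.last t))) _
        · rw [if_neg h1, if_neg h1]
    _ = r * ∑' g : Fin (t + 1) → S, (if ∀ i, ¬ Opt (g i) then trajProb μ0 K g else 0) := by
        rw [← ENNReal.tsum_mul_left]
        apply tsum_congr
        intro g
        by_cases h1 : ∀ i, ¬ Opt (g i)
        · rw [if_pos h1, if_pos h1, mul_comm]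
        · rw [if_neg h1, if_neg h1, mul_zero]

lemma survival_le_pow (μ0 : S → ℝ≥0∞) (K : S → S → ℝ≥0∞) (Opt Inv : S → Prop) (r : ℝ≥0∞)
    (hμ0 : ∑' x, μ0 x = 1)
    (h0 : ∀ x, μ0 x ≠ 0 → Inv x) (hK : ∀ x y, Inv x → K x y ≠ 0 → Inv y)
    (hrow : ∀ x, Inv x → ¬ Opt x → (∑' y, if ¬ Opt y then K x y else 0) ≤ r) (t : ℕ) :
    survival μ0 K Opt t ≤ r ^ t := by
  induction t with
  | zero => simpa using survival_zero_le_one μ0 K Opt hμ0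
  | succ t ih =>
    calc survival μ0 K Opt (t + 1) ≤ r * survival μ0 K Opt t :=
          survival_succ_le μ0 K Opt Inv r h0 hK hrow t
      _ ≤ r * r ^ t := mul_le_mul_right ih _
      _ = r ^ (t + 1) := by rw [pow_succ, mul_comm]

end GMST
namespace GMST

lemma poisson1_mass : ∑' k : ℕ, poisson1 k = 1 := by
  unfold poisson1
  have hsummable : Summable (fun k : ℕ => Real.exp (-1) / (Nat.factorial k : ℝ)) := by
    have := Real.summable_pow_div_factorial 1
    simpa [div_eq_mul_inv, one_pow, mul_comm] using this.mul_left (Real.exp (-1))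
  rw [← ENNReal.ofReal_tsum_of_nonneg (fun k => by positivity) hsummable]
  have hexp : Real.exp 1 = ∑' k : ℕ, (1 : ℝ) ^ k / (Nat.factorial k) := by
    rw [Real.exp_eq_exp_ℝ, NormedSpace.exp_eq_tsum_div]
  have : (∑' k : ℕ, Real.exp (-1) / (Nat.factorial k : ℝ)) = Real.exp (-1) * ∑' k : ℕ, (1:ℝ) ^ k / (Nat.factorial k) := by
    rw [← tsum_mul_left]
    congr 1; funext k; rw [one_pow]; ring
  rw [this, ← hexp, ← Real.exp_add]
  simp

lemma treeMut_mass (m : ℕ) (E : Finset (Sym2 (Fin m))) : ∑' E', treeMut m E E' ≤ 1 := by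
  unfold treeMut
  rw [ENNReal.tsum_comm]
  calc (∑' k : ℕ, ∑' E', poisson1 k * swapKpow m k E E')
      = ∑' k : ℕ, poisson1 k * ∑' E', swapKpow m k E E' := by
        exact tsum_congr (fun k => ENNReal.tsum_mul_left)
    _ ≤ ∑' k : ℕ, poisson1 k * 1 :=
        ENNReal.tsum_le_tsum (fun k => mul_le_mul_right (swapKpow_mass m k E) _)
    _ = 1 := by simp only [mul_one]; exact poisson1_mass

lemma treeMut_spanning {m : ℕ} {E E' : Finset (Sym2 (Fin m))} (hE : IsSpanningTree m E)
    (h : treeMut m E E' ≠ 0) : IsSpanningTree m E' := by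
  unfold treeMut at h
  have : ∃ k, poisson1 k * swapKpow m k E E' ≠ 0 := by
    by_contra hc
    push_neg at hc
    exact h (by simp [hc])
  obtain ⟨k, hk⟩ := this
  exact swapKpow_spanning hE (fun h0 => hk (by rw [h0, mul_zero]))

lemma eaKernel_mass {S : Type*} (mutate : S → S → ℝ≥0∞) (cost : S → ℝ≥0∞) (x : S)
    (hmut : ∑' y, mutate x y ≤ 1) : ∑' y, eaKernel mutate cost x y ≤ 1 := by
  unfold eaKernel
  rw [ENNReal.tsum_add]
  have h2 : (∑' y : S, if y = x then (∑' z : S, if cost z ≤ cost x then 0 else mutate x z) else 0)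
      = ∑' z : S, (if cost z ≤ cost x then 0 else mutate x z) := tsum_ite_eq x _
  rw [h2]
  calc (∑' y : S, if cost y ≤ cost x then mutate x y else 0) +
        (∑' z : S, if cost z ≤ cost x then 0 else mutate x z)
      = ∑' y : S, ((if cost y ≤ cost x then mutate x y else 0) +
          (if cost y ≤ cost x then 0 else mutate x y)) := (ENNReal.tsum_add).symm
    _ = ∑' y : S, mutate x y := by
        apply tsum_congr
        intro y
        by_cases h : cost y ≤ cost x
        · rw [if_pos h, if_pos h, add_zero]
        · rw [if_neg h, if_neg h, zero_add]
    _ ≤ 1 := hmut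

lemma exists_optTree {V : Type} [Fintype V] (m : ℕ) (hm : 1 ≤ m)
    (c : V → V → ℝ≥0∞) (Vc : Fin m → Finset V) : ∃ E, OptTree c Vc E := by
  obtain ⟨E₀, hE₀⟩ := exists_spanningTree m hm
  obtain ⟨Eo, hmem, hmin⟩ := Finset.exists_min_image
    (Finset.univ.filter (fun E => IsSpanningTree m E)) (treeValue c Vc)
    ⟨E₀, Finset.mem_filter.mpr ⟨Finset.mem_univ _, hE₀⟩⟩
  exact ⟨Eo, (Finset.mem_filter.mp hmem).2,
    fun E' hE' => hmin E' (Finset.mem_filter.mpr ⟨Finset.mem_univ _, hE'⟩)⟩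

end GMST
namespace GMST

lemma success_lower {V : Type} [Fintype V] [DecidableEq V] {m : ℕ} (hm : 1 ≤ m)
    (c : V → V → ℝ≥0∞) (Vc : Fin m → Finset V)
    {E : Finset (Sym2 (Fin m))} (hE : IsSpanningTree m E) :
    (ENNReal.ofReal (Real.exp 1))⁻¹ * ((m : ℝ≥0∞) ^ (3 * (m - 1)))⁻¹ ≤
      ∑' E' : Finset (Sym2 (Fin m)), if OptTree c Vc E' then treeMut m E E' else 0 := by
  obtain ⟨Eo, hEo⟩ := exists_optTree m hm c Vc
  set d := (Eo \ E).card with hd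
  have hdle : d ≤ m - 1 := by
    have h1 : (Eo \ E).card ≤ Eo.card := Finset.card_le_card (Finset.sdiff_subset)
    have h2 := card_spanningTree hEo.1
    omega
  have h2 : (d.factorial : ℝ≥0∞) * (((m : ℝ≥0∞) ^ 3)⁻¹) ^ d ≤ swapKpow m d E Eo :=
    swapKpow_lower m hm d E Eo hE hEo.1 rfl
  have hinv : (ENNReal.ofReal (Real.exp 1))⁻¹ = ENNReal.ofReal (Real.exp (-1)) := by
    rw [Real.exp_neg, ENNReal.ofReal_inv_of_pos (Real.exp_pos 1)]
  have hmne : (m : ℝ≥0∞) ≠ 0 := Nat.cast_ne_zero.mpr (by omega)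
  have hpow : ((m : ℝ≥0∞) ^ (3 * (m - 1)))⁻¹ ≤ (((m : ℝ≥0∞) ^ 3)⁻¹) ^ d := by
    rw [← ENNReal.inv_pow, ← pow_mul]
    apply ENNReal.inv_le_inv.mpr
    apply pow_le_pow_right₀ (by exact_mod_cast Nat.one_le_cast.mpr hm)
    omega
  have hfac : poisson1 d * (d.factorial : ℝ≥0∞) = ENNReal.ofReal (Real.exp (-1)) := by
    unfold poisson1
    rw [← ENNReal.ofReal_natCast (d.factorial), ← ENNReal.ofReal_mul (by positivity)]
    congr 1
    rw [div_mul_cancel₀]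
    exact_mod_cast (Nat.factorial_pos d).ne'
  calc (ENNReal.ofReal (Real.exp 1))⁻¹ * ((m : ℝ≥0∞) ^ (3 * (m - 1)))⁻¹
      ≤ ENNReal.ofReal (Real.exp (-1)) * (((m : ℝ≥0∞) ^ 3)⁻¹) ^ d := by
        rw [hinv]; exact mul_le_mul_right hpow _
    _ = poisson1 d * ((d.factorial : ℝ≥0∞) * (((m : ℝ≥0∞) ^ 3)⁻¹) ^ d) := by
        rw [← mul_assoc, hfac]
    _ ≤ poisson1 d * swapKpow m d E Eo := mul_le_mul_right h2 _
    _ ≤ treeMut m E Eo := ENNReal.le_tsum d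
    _ ≤ ∑' E' : Finset (Sym2 (Fin m)), if OptTree c Vc E' then treeMut m E E' else 0 := by
        have := ENNReal.le_tsum (f := fun E' => if OptTree c Vc E' then treeMut m E E' else 0) Eo
        rwa [if_pos hEo] at this

end GMST

open GMST in
/-- For any instance of the generalised minimum spanning tree problem with `m`
clusters, the tree-based (1+1) EA (global structure representation) satisfies: from any
non-optimal spanning tree of the cluster graph, the probability that a single mutation step
produces an optimal spanning tree is at least `(1/e) * m^{-3(m-1)}`; consequently, for any
initial distribution over spanning trees, the expected optimization time is at most
`e * m^{3(m-1)}` (hence `O(m^{3(m-1)})`, so the tree-based (1+1) EA is a fixed-parameter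
evolutionary algorithm for GMSTP w.r.t. the parameter `m`); furthermore, for any `k ≥ 1`,
the probability that an optimal solution has not been found within `e * k * m^{3(m-1)}`
iterations is less than `exp(-k)`. -/
theorem treeEA_upper_bound (m : ℕ) (hm : 1 ≤ m) {V : Type} [Fintype V] [DecidableEq V]
    (Vc : Fin m → Finset V)
    (hne : ∀ i, (Vc i).Nonempty)
    (hdisj : ∀ i j, i ≠ j → Disjoint (Vc i) (Vc j))
    (hcover : ∀ v : V, ∃ i, v ∈ Vc i)
    (c : V → V → ℝ≥0∞)
    (hsym : ∀ a b, c a b = c b a)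
    (hpos : ∀ a b, a ≠ b → 0 < c a b)
    (μ0 : Finset (Sym2 (Fin m)) → ℝ≥0∞)
    (hμ0 : ∑' E, μ0 E = 1)
    (hsupp : ∀ E, μ0 E ≠ 0 → IsSpanningTree m E) :
    (∀ E, IsSpanningTree m E → ¬ OptTree c Vc E →
        (ENNReal.ofReal (Real.exp 1))⁻¹ * ((m : ℝ≥0∞) ^ (3 * (m - 1)))⁻¹ ≤
          ∑' E' : Finset (Sym2 (Fin m)), if OptTree c Vc E' then treeMut m E E' else 0) ∧
    expectedOptTime μ0 (eaKernel (treeMut m) (treeValue c Vc)) (OptTree c Vc) ≤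
      ENNReal.ofReal (Real.exp 1) * (m : ℝ≥0∞) ^ (3 * (m - 1)) ∧
    (∀ k : ℕ, 1 ≤ k → ∀ N : ℕ,
        Real.exp 1 * (k : ℝ) * (m : ℝ) ^ (3 * (m - 1)) ≤ (N : ℝ) →
        survival μ0 (eaKernel (treeMut m) (treeValue c Vc)) (OptTree c Vc) N <
          ENNReal.ofReal (Real.exp (-(k : ℝ)))) := by
  set P := 3 * (m - 1) with hP
  set s₀ : ℝ≥0∞ := (ENNReal.ofReal (Real.exp 1))⁻¹ * ((m : ℝ≥0∞) ^ P)⁻¹ with hs₀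
  have hsucc : ∀ E, IsSpanningTree m E →
      s₀ ≤ ∑' E', if OptTree c Vc E' then treeMut m E E' else 0 :=
    fun E hE => success_lower hm c Vc hE
  have he1 : (1 : ℝ) ≤ Real.exp 1 := by
    have := Real.add_one_le_exp (1 : ℝ); linarith
  have hm1 : (1 : ℝ≥0∞) ≤ (m : ℝ≥0∞) := by exact_mod_cast hm
  have hmPone : (1 : ℝ≥0∞) ≤ (m : ℝ≥0∞) ^ P := one_le_pow_of_one_le' hm1 P
  have hs₀le1 : s₀ ≤ 1 := by
    rw [hs₀]
    exact mul_le_one' (ENNReal.inv_le_one.mpr (ENNReal.one_le_ofReal.mpr he1))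
      (ENNReal.inv_le_one.mpr hmPone)
  set K := eaKernel (treeMut m) (treeValue c Vc) with hKdef
  have hKmass : ∀ E, ∑' E', K E E' ≤ 1 := fun E => eaKernel_mass _ _ E (treeMut_mass m E)
  have hInv : ∀ x y, IsSpanningTree m x → K x y ≠ 0 → IsSpanningTree m y := by
    intro x y hx hne'
    by_cases hyx : y = x
    · rwa [hyx]
    · have hmne : treeMut m x y ≠ 0 := by
        intro h0
        apply hne'
        rw [hKdef]
        unfold eaKernel
        rw [if_neg hyx, add_zero, h0]
        simp
      exact treeMut_spanning hx hmne
  have hOptLe : ∀ x, IsSpanningTree m x →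
      s₀ ≤ ∑' y, if OptTree c Vc y then K x y else 0 := by
    intro x hx
    refine le_trans (hsucc x hx) (ENNReal.tsum_le_tsum ?_)
    intro y
    by_cases hy : OptTree c Vc y
    · rw [if_pos hy, if_pos hy, hKdef]
      unfold eaKernel
      rw [if_pos (hy.2 x hx)]
      exact le_self_add
    · rw [if_neg hy, if_neg hy]
  have hrow : ∀ x, IsSpanningTree m x → ¬ OptTree c Vc x →
      (∑' y, if ¬ OptTree c Vc y then K x y else 0) ≤ 1 - s₀ := by
    intro x hx _
    have hsplit : (∑' y, if ¬ OptTree c Vc y then K x y else 0) +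
        (∑' y, if OptTree c Vc y then K x y else 0) = ∑' y, K x y := by
      rw [← ENNReal.tsum_add]
      apply tsum_congr
      intro y
      by_cases hy : OptTree c Vc y
      · rw [if_neg (not_not_intro hy), if_pos hy, zero_add]
      · rw [if_pos hy, if_neg hy, add_zero]
    have h1 : (∑' y, if ¬ OptTree c Vc y then K x y else 0) + s₀ ≤ 1 :=
      calc (∑' y, if ¬ OptTree c Vc y then K x y else 0) + s₀
          ≤ (∑' y, if ¬ OptTree c Vc y then K x y else 0) +
            (∑' y, if OptTree c Vc y then K x y else 0) := add_le_add le_rfl (hOptLe x hx)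
        _ = ∑' y, K x y := hsplit
        _ ≤ 1 := hKmass x
    exact ENNReal.le_sub_of_add_le_right (ne_top_of_le_ne_top ENNReal.one_ne_top hs₀le1) h1
  have hsurv : ∀ t, survival μ0 K (OptTree c Vc) t ≤ (1 - s₀) ^ t :=
    survival_le_pow μ0 K _ (IsSpanningTree m) (1 - s₀) hμ0 hsupp hInv hrow
  refine ⟨fun E hE _ => hsucc E hE, ?_, ?_⟩
  · have hs₀inv : s₀⁻¹ = ENNReal.ofReal (Real.exp 1) * (m : ℝ≥0∞) ^ P := by
      rw [hs₀, ENNReal.mul_inv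
        (Or.inl (ENNReal.inv_ne_zero.mpr ENNReal.ofReal_ne_top))
        (Or.inl (ENNReal.inv_ne_top.mpr (ENNReal.ofReal_pos.mpr (Real.exp_pos 1)).ne')),
        inv_inv, inv_inv]
    calc expectedOptTime μ0 K (OptTree c Vc)
        ≤ ∑' t : ℕ, (1 - s₀) ^ t := ENNReal.tsum_le_tsum hsurv
      _ = (1 - (1 - s₀))⁻¹ := ENNReal.tsum_geometric _
      _ = s₀⁻¹ := by rw [ENNReal.sub_sub_cancel ENNReal.one_ne_top hs₀le1]
      _ = ENNReal.ofReal (Real.exp 1) * (m : ℝ≥0∞) ^ P := hs₀inv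
  · intro k hk N hN
    set mP : ℝ := (m : ℝ) ^ P with hmPdef
    have hmP1 : (1 : ℝ) ≤ mP := one_le_pow₀ (by exact_mod_cast hm)
    have hmP0 : (0 : ℝ) < mP := by linarith
    set sR : ℝ := Real.exp (-1) * mP⁻¹ with hsRdef
    have hsRpos : 0 < sR := by positivity
    have hsR1 : sR ≤ 1 := by
      have h1 : Real.exp (-1) ≤ 1 := by
        rw [← Real.exp_zero]; exact Real.exp_le_exp.mpr (by norm_num)
      have h2 : mP⁻¹ ≤ 1 := by
        rw [inv_le_one₀ hmP0]; exact hmP1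
      nlinarith [Real.exp_pos (-1 : ℝ), inv_pos.mpr hmP0]
    have hs₀R : s₀ = ENNReal.ofReal sR := by
      have e1 : (ENNReal.ofReal (Real.exp 1))⁻¹ = ENNReal.ofReal (Real.exp (-1)) := by
        rw [Real.exp_neg, ENNReal.ofReal_inv_of_pos (Real.exp_pos 1)]
      have e2 : ((m : ℝ≥0∞) ^ P)⁻¹ = ENNReal.ofReal mP⁻¹ := by
        have : ((m : ℝ≥0∞)) ^ P = ENNReal.ofReal mP := by
          rw [hmPdef, ENNReal.ofReal_pow (by positivity), ENNReal.ofReal_natCast]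
        rw [this, ENNReal.ofReal_inv_of_pos hmP0]
      rw [hs₀, e1, e2, ← ENNReal.ofReal_mul (Real.exp_nonneg _)]
    have h1mS : (1 : ℝ≥0∞) - s₀ = ENNReal.ofReal (1 - sR) := by
      rw [hs₀R, ENNReal.ofReal_sub 1 (le_of_lt hsRpos), ENNReal.ofReal_one]
    have hk1 : (1 : ℝ) ≤ (k : ℝ) := by exact_mod_cast hk
    have hN1 : (1 : ℝ) ≤ (N : ℝ) := by
      have h3 : (1 : ℝ) ≤ Real.exp 1 * (k : ℝ) := by nlinarith
      have h4 : (1 : ℝ) ≤ Real.exp 1 * (k : ℝ) * mP := by nlinarith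
      linarith
    have hNne : N ≠ 0 := by
      intro h0
      rw [h0] at hN1
      norm_num at hN1
    have hkN : (k : ℝ) ≤ (N : ℝ) * sR := by
      have hstep : (Real.exp 1 * (k : ℝ) * mP) * sR = k := by
        rw [hsRdef, Real.exp_neg]
        field_simp
      calc (k : ℝ) = (Real.exp 1 * (k : ℝ) * mP) * sR := hstep.symm
        _ ≤ (N : ℝ) * sR := mul_le_mul_of_nonneg_right hN (le_of_lt hsRpos)
    have hreal : (1 - sR) ^ N < Real.exp (-(k : ℝ)) := by
      have hlt : 1 - sR < Real.exp (-sR) := by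
        have := Real.add_one_lt_exp (x := -sR) (by linarith)
        linarith
      calc (1 - sR) ^ N < (Real.exp (-sR)) ^ N := pow_lt_pow_left₀ hlt (by linarith) hNne
        _ = Real.exp ((N : ℝ) * -sR) := by rw [← Real.exp_nat_mul]
        _ ≤ Real.exp (-(k : ℝ)) := Real.exp_le_exp.mpr (by nlinarith)
    calc survival μ0 K (OptTree c Vc) N ≤ (1 - s₀) ^ N := hsurv N
      _ = ENNReal.ofReal ((1 - sR) ^ N) := by
          rw [h1mS, ← ENNReal.ofReal_pow (by linarith)]
      _ < ENNReal.ofReal (Real.exp (-(k : ℝ))) :=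
          (ENNReal.ofReal_lt_ofReal_iff (Real.exp_pos _)).mpr hreal
end
end

section
/- The tree-based (1+1) EA solves the instance G_S in expected constant time: the subgraph of finite-cost connections between clusters of G_S is a star centered at the central cluster, so the cluster graph admits exactly one spanning tree of finite cost, and the algorithm already holds an optimal upper-level solution after initialization. -/
open scoped ENNReal BigOperators Classical

noncomputable section

/-- The spanning trees of the cluster graph of `G_S` whose lower-level value is finite. -/
noncomputable def finiteTreesGS (m : ℕ) : Finset (Finset (Sym2 (Fin m))) :=
  Finset.univ.filter (fun E => IsSpanningTree m E ∧ treeValue (cGS m) (VcGS m) E ≠ ⊤)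

/-- The uniform distribution over the spanning trees of the cluster graph of `G_S` having
cost less than `∞` (the initial distribution of the tree-based (1+1) EA). -/
noncomputable def unifTreesGS (m : ℕ) : Finset (Sym2 (Fin m)) → ℝ≥0∞ :=
  fun E => if E ∈ finiteTreesGS m then ((finiteTreesGS m).card : ℝ≥0∞)⁻¹ else 0

/-- The star on the cluster graph of `G_S` centred at the central cluster `c0`. -/
def starGS (m : ℕ) (c0 : Fin m) : Finset (Sym2 (Fin m)) :=
  Finset.univ.filter (fun e : Sym2 (Fin m) => ¬ e.IsDiag ∧ c0 ∈ e)


section HelpersGS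

open SimpleGraph

variable {m : ℕ}

lemma mem_starGS {c0 : Fin m} {e : Sym2 (Fin m)} :
    e ∈ starGS m c0 ↔ ¬ e.IsDiag ∧ c0 ∈ e := by
  simp [starGS]

lemma starGS_adj {c0 a b : Fin m} :
    (SimpleGraph.fromEdgeSet ((starGS m c0 : Finset (Sym2 (Fin m))) : Set (Sym2 (Fin m)))).Adj a b
      ↔ (a = c0 ∨ b = c0) ∧ a ≠ b := by
  simp only [SimpleGraph.fromEdgeSet_adj, Finset.mem_coe, mem_starGS,
    Sym2.isDiag_iff_proj_eq, Sym2.mem_iff]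
  constructor
  · rintro ⟨⟨_, h⟩, hne⟩
    exact ⟨by tauto, hne⟩
  · rintro ⟨h, hne⟩
    exact ⟨⟨hne, by tauto⟩, hne⟩

lemma starGS_eq_image {c0 : Fin m} :
    starGS m c0 = (Finset.univ.erase c0).image (fun j => s(c0, j)) := by
  ext e
  induction e using Sym2.inductionOn with
  | hf a b =>
    simp only [mem_starGS, Sym2.isDiag_iff_proj_eq, Sym2.mem_iff, Finset.mem_image,
      Finset.mem_erase, Finset.mem_univ, and_true]
    constructor
    · rintro ⟨hab, (rfl | rfl)⟩
      · exact ⟨b, fun h => hab h.symm, rfl⟩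
      · exact ⟨a, fun h => hab h, Sym2.eq_swap⟩
    · rintro ⟨j, hj, he⟩
      rw [Sym2.eq_iff] at he
      rcases he with ⟨rfl, rfl⟩ | ⟨rfl, rfl⟩
      · exact ⟨fun h => hj h.symm, Or.inl rfl⟩
      · exact ⟨hj, Or.inr rfl⟩

lemma card_starGS {c0 : Fin m} : (starGS m c0).card = m - 1 := by
  rw [starGS_eq_image, Finset.card_image_of_injective _ (fun j j' h => Sym2.congr_right.mp h),
    Finset.card_erase_of_mem (Finset.mem_univ _), Finset.card_univ, Fintype.card_fin]

lemma val_eq_zero_iff {c0 : Fin m} (hc0 : c0.val = 0) (i : Fin m) : i.val = 0 ↔ i = c0 :=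
  ⟨fun h => Fin.ext (h.trans hc0.symm), fun h => h ▸ hc0⟩

lemma edgeFinset_fromEdgeSet_eq {E : Finset (Sym2 (Fin m))} (hd : ∀ e ∈ E, ¬ e.IsDiag) :
    (SimpleGraph.fromEdgeSet (E : Set (Sym2 (Fin m)))).edgeFinset = E := by
  ext e
  simp only [SimpleGraph.mem_edgeFinset, SimpleGraph.edgeSet_fromEdgeSet, Set.mem_diff,
    Finset.mem_coe, Set.mem_setOf_eq]
  exact ⟨fun h => h.1, fun h => ⟨h, hd e h⟩⟩

lemma card_of_spanningTree {E : Finset (Sym2 (Fin m))} (h : IsSpanningTree m E) :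
    E.card + 1 = m := by
  have := h.2.card_edgeFinset
  rwa [edgeFinset_fromEdgeSet_eq h.1, Fintype.card_fin] at this

lemma isolated_reachable {V : Type*} {G' : SimpleGraph V} {a b : V}
    (h : ∀ y, ¬ G'.Adj a y) (hr : G'.Reachable a b) : a = b := by
  obtain ⟨p⟩ := hr
  cases p with
  | nil => rfl
  | cons h' _ => exact absurd h' (h _)

lemma star_isSpanningTree (hm : 2 ≤ m) {c0 : Fin m} (hc0 : c0.val = 0) :
    IsSpanningTree m (starGS m c0) := by
  set G := SimpleGraph.fromEdgeSet ((starGS m c0 : Finset (Sym2 (Fin m))) : Set (Sym2 (Fin m)))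
    with hG
  refine ⟨fun e he => (mem_starGS.1 he).1, ?_, ?_⟩
  · -- connected
    rw [SimpleGraph.connected_iff]
    have ra : ∀ a : Fin m, G.Reachable a c0 := by
      intro a
      by_cases h : a = c0
      · rw [h]
      · exact (starGS_adj.2 ⟨Or.inr rfl, h⟩).reachable
    exact ⟨fun a b => (ra a).trans (ra b).symm, ⟨c0⟩⟩
  · -- acyclic
    rw [SimpleGraph.isAcyclic_iff_forall_adj_isBridge]
    intro v w hvw
    rw [SimpleGraph.isBridge_iff]
    refine ?_
    obtain ⟨hvc | hwc, hne⟩ := starGS_adj.mp hvw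
    · subst hvc
      intro hreach
      have hiso : ∀ y, ¬ (G \ SimpleGraph.fromEdgeSet {s(v, w)}).Adj w y := by
        intro y hy
        rw [SimpleGraph.sdiff_adj] at hy
        obtain ⟨hy1, hy2⟩ := hy
        obtain ⟨hy3 | hy3, hy4⟩ := starGS_adj.mp hy1
        · exact hne hy3.symm
        · subst hy3
          exact hy2 ((SimpleGraph.fromEdgeSet_adj _).2
            ⟨Set.mem_singleton_iff.2 Sym2.eq_swap, hy4⟩)
      exact hne (isolated_reachable hiso hreach.symm).symm
    · subst hwc
      intro hreach
      have hiso : ∀ y, ¬ (G \ SimpleGraph.fromEdgeSet {s(v, w)}).Adj v y := by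
        intro y hy
        rw [SimpleGraph.sdiff_adj] at hy
        obtain ⟨hy1, hy2⟩ := hy
        obtain ⟨hy3 | hy3, hy4⟩ := starGS_adj.mp hy1
        · exact hne hy3
        · subst hy3
          exact hy2 ((SimpleGraph.fromEdgeSet_adj _).2 ⟨Set.mem_singleton_iff.2 rfl, hy4⟩)
      exact hne (isolated_reachable hiso hreach)

lemma subset_star {c0 : Fin m} (hc0 : c0.val = 0) {E : Finset (Sym2 (Fin m))}
    (hfin : treeValue (cGS m) (VcGS m) E ≠ ⊤) : E ⊆ starGS m c0 := by
  rw [treeValue, ne_eq, iInf_eq_top, not_forall] at hfin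
  obtain ⟨p, hp⟩ := hfin
  rw [iInf_eq_top, not_forall] at hp
  obtain ⟨hpmem, hsum⟩ := hp
  have hfst : ∀ i, (p i).1 = i := by
    intro i
    have := hpmem i
    simpa [VcGS] using this
  intro e he
  have hec : eCost (cGS m) p e ≠ ⊤ := by
    intro h
    exact hsum (ENNReal.sum_eq_top.2 ⟨e, he, h⟩)
  rw [eCost, ne_eq, iInf_eq_top, not_forall] at hec
  obtain ⟨i, hec⟩ := hec
  rw [iInf_eq_top, not_forall] at hec
  obtain ⟨j, hec⟩ := hec
  rw [iInf_eq_top, not_forall] at hec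
  obtain ⟨hij, hc⟩ := hec
  rw [cGS, hfst i, hfst j] at hc
  by_cases h1 : i.val = 0 ∧ j.val ≠ 0
  · rw [hij, mem_starGS]
    have hi : i = c0 := (val_eq_zero_iff hc0 i).1 h1.1
    refine ⟨?_, ?_⟩
    · rw [Sym2.isDiag_iff_proj_eq]
      intro h
      have hij' : i = j := h
      exact h1.2 (by rw [← hij']; exact h1.1)
    · rw [Sym2.mem_iff]; exact Or.inl hi.symm
  · by_cases h2 : j.val = 0 ∧ i.val ≠ 0
    · rw [hij, mem_starGS]
      have hj : j = c0 := (val_eq_zero_iff hc0 j).1 h2.1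
      refine ⟨?_, ?_⟩
      · rw [Sym2.isDiag_iff_proj_eq]
        intro h
        have hij' : i = j := h
        exact h2.2 (by rw [hij']; exact h2.1)
      · rw [Sym2.mem_iff]; exact Or.inr hj.symm
    · rw [if_neg h1, if_neg h2] at hc
      exact absurd rfl hc

lemma star_value_ne_top (hm : 2 ≤ m) {c0 : Fin m} (hc0 : c0.val = 0) :
    treeValue (cGS m) (VcGS m) (starGS m c0) ≠ ⊤ := by
  have hm0 : 0 < m := lt_of_lt_of_le two_pos hm
  set z : Fin m := ⟨0, hm0⟩ with hz
  set p : Fin m → VS m := fun i => (i, z) with hpdef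
  have hp : ∀ i, p i ∈ VcGS m i := by
    intro i; simp [VcGS, hpdef]
  have hsum : ∑ e ∈ starGS m c0, eCost (cGS m) p e ≠ ⊤ := by
    rw [ENNReal.sum_ne_top]
    intro e he
    rw [starGS_eq_image, Finset.mem_image] at he
    obtain ⟨j, hj, rfl⟩ := he
    rw [Finset.mem_erase] at hj
    have hcost : cGS m (p c0) (p j) = 1 := by
      have h1 : (p c0).1.val = 0 := hc0
      have h2 : (p j).1.val ≠ 0 := fun h => hj.1 ((val_eq_zero_iff hc0 j).1 h)
      rw [cGS, if_pos ⟨h1, h2⟩]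
      show ecGS m z z = 1
      simp [ecGS, hz]
    have hle : eCost (cGS m) p s(c0, j) ≤ cGS m (p c0) (p j) :=
      iInf_le_of_le c0 (iInf_le_of_le j (iInf_le _ rfl))
    rw [hcost] at hle
    exact fun h => by simp [h] at hle
  intro htop
  have hle : treeValue (cGS m) (VcGS m) (starGS m c0)
      ≤ ∑ e ∈ starGS m c0, eCost (cGS m) p e := iInf₂_le p hp
  rw [htop, top_le_iff] at hle
  exact hsum hle

end HelpersGS

/-- The tree-based (1+1) EA solves the instance `G_S` in expected constant
time: the subgraph of finite-cost connections between clusters of `G_S` is a star centred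
at the central cluster, so the cluster graph admits exactly one spanning tree of finite
cost (namely this star), this star is an optimal upper-level solution, and the expected
optimization time is (at most) constant. -/
theorem treeEA_GS_constant (m : ℕ) (hm : 2 ≤ m) (c0 : Fin m) (hc0 : c0.val = 0) :
    (IsSpanningTree m (starGS m c0) ∧ treeValue (cGS m) (VcGS m) (starGS m c0) ≠ ⊤) ∧
    (∀ E : Finset (Sym2 (Fin m)),
        IsSpanningTree m E → treeValue (cGS m) (VcGS m) E ≠ ⊤ → E = starGS m c0) ∧
    OptTree (cGS m) (VcGS m) (starGS m c0) ∧
    expectedOptTime (unifTreesGS m)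
        (eaKernel (treeMut m) (treeValue (cGS m) (VcGS m)))
        (OptTree (cGS m) (VcGS m)) ≤ 1 := by
  have h1 : IsSpanningTree m (starGS m c0) := star_isSpanningTree hm hc0
  have h2 : treeValue (cGS m) (VcGS m) (starGS m c0) ≠ ⊤ := star_value_ne_top hm hc0
  have huniq : ∀ E : Finset (Sym2 (Fin m)),
      IsSpanningTree m E → treeValue (cGS m) (VcGS m) E ≠ ⊤ → E = starGS m c0 := by
    intro E hE hfin
    have hsub : E ⊆ starGS m c0 := subset_star hc0 hfin
    apply Finset.eq_of_subset_of_card_le hsub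
    have hc1 := card_of_spanningTree h1
    have hc2 := card_of_spanningTree hE
    omega
  have hopt : OptTree (cGS m) (VcGS m) (starGS m c0) := by
    refine ⟨h1, fun E' hE' => ?_⟩
    by_cases h : treeValue (cGS m) (VcGS m) E' = ⊤
    · rw [h]; exact le_top
    · rw [huniq E' hE' h]
  refine ⟨⟨h1, h2⟩, huniq, hopt, ?_⟩
  have hsurv : ∀ t, survival (unifTreesGS m)
      (eaKernel (treeMut m) (treeValue (cGS m) (VcGS m)))
      (OptTree (cGS m) (VcGS m)) t = 0 := by
    intro t
    rw [survival]
    rw [ENNReal.tsum_eq_zero]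
    intro x
    split_ifs with h
    · have h0 := h 0
      rw [trajProb]
      have hz : unifTreesGS m (x 0) = 0 := by
        rw [unifTreesGS]
        split_ifs with hx
        · exfalso
          apply h0
          have hmem := (Finset.mem_filter.1 hx).2
          rw [huniq (x 0) hmem.1 hmem.2]
          exact hopt
        · rfl
      rw [hz, zero_mul]
    · rfl
  rw [expectedOptTime]
  simp [hsurv]
end
end

section
/- The cluster-based (1+1) EA solves the instance G_G in expected time O(m): from any non-optimal node selection, the probability that a single mutation step produces the optimal selection is at least 1/(2m), namely the probability that cluster V_1 is chosen for mutation (probability 1/m) and that the correct one of its two nodes is selected (probability 1/2), so the expected waiting time for this event is O(m). -/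
open scoped ENNReal BigOperators Classical

noncomputable section

/-- The node set of the instance `G_G`: cluster `0` (i.e. `V₁`) contains the two nodes
`v₁₁ = Sum.inl 0` and `v₁₂ = Sum.inr ()`, and each cluster `i ≥ 1` (i.e. `V_{i+1}`)
contains the single node `v_{(i+1)1} = Sum.inl i`. -/
abbrev VG (m : ℕ) := Fin m ⊕ Unit

/-- The clusters of `G_G`. -/
def VcGG (m : ℕ) : Fin m → Finset (VG m) :=
  fun i => if i.val = 0 then {Sum.inl i, Sum.inr ()} else {Sum.inl i}

/-- Auxiliary (one-directional) cost table for `G_G`. -/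
def fGG (m : ℕ) : VG m → VG m → ℝ≥0∞
  | Sum.inl a, Sum.inl b =>
      if a.val = 0 ∧ 2 ≤ b.val then 1
      else if a.val = 1 ∧ 2 ≤ b.val then 1 + ((2 * m : ℕ) : ℝ≥0∞)⁻¹
      else ⊤
  | Sum.inr _, Sum.inl b => if b.val = 1 then (2 : ℝ≥0∞)⁻¹ else ⊤
  | _, _ => ⊤

/-- The edge costs of the instance `G_G`: `c(v₁₁, v_{i1}) = 1` and
`c(v₂₁, v_{i1}) = 1 + 1/(2m)` for every `3 ≤ i ≤ m`, `c(v₁₂, v₂₁) = 1/2`, and all other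
edges have cost `∞`. -/
def cGG (m : ℕ) (p q : VG m) : ℝ≥0∞ := fGG m p q ⊓ fGG m q p
/-- Valid node selections of `G_G` (one node per cluster). -/
def ValidGG (m : ℕ) (x : Fin m → VG m) : Prop := ∀ i, x i ∈ VcGG m i

/-- Optimal node selections of `G_G`: valid selections minimising the cost of a minimum
spanning tree on the induced subgraph (restricted to finite-cost edges). -/
def OptGG (m : ℕ) (x : Fin m → VG m) : Prop :=
  ValidGG m x ∧ ∀ y, ValidGG m y → mstCost (cGG m) x ≤ mstCost (cGG m) y

/-! ### Auxiliary lemmas -/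

section GeneralMarkov

variable {State : Type*}

lemma GG_tsum_eaKernel (mu : State → State → ℝ≥0∞) (cost : State → ℝ≥0∞) (x : State)
    (hmut : ∑' y, mu x y = 1) : ∑' y, eaKernel mu cost x y = 1 := by
  unfold eaKernel
  rw [ENNReal.tsum_add, tsum_ite_eq x _, ← ENNReal.tsum_add, ← hmut]
  exact tsum_congr fun y => by by_cases h : cost y ≤ cost x <;> simp [h]

lemma GG_traj_valid (μ0 : State → ℝ≥0∞) (K : State → State → ℝ≥0∞) (Valid : State → Prop)
    (hsupp : ∀ x, μ0 x ≠ 0 → Valid x)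
    (hstep : ∀ x y, Valid x → K x y ≠ 0 → Valid y)
    {t : ℕ} (x : Fin (t + 1) → State) (hx : trajProb μ0 K x ≠ 0) :
    ∀ i, Valid (x i) := by
  simp only [trajProb, mul_ne_zero_iff] at hx
  obtain ⟨h0, hprod⟩ := hx
  rw [Finset.prod_ne_zero_iff] at hprod
  intro i
  induction i using Fin.induction with
  | zero => exact hsupp _ h0
  | succ i ih => exact hstep _ _ ih (hprod i (Finset.mem_univ i))

lemma GG_forall_snoc_iff {n : ℕ} {P : State → Prop} (x : Fin (n + 1) → State) (y : State) :
    (∀ i, ¬ P ((Fin.snoc x y : Fin (n + 1 + 1) → State) i)) ↔ (∀ i, ¬ P (x i)) ∧ ¬ P y := by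
  constructor
  · intro h
    exact ⟨fun i => by simpa using h i.castSucc, by simpa using h (Fin.last _)⟩
  · rintro ⟨h1, h2⟩ i
    refine Fin.lastCases ?_ (fun j => ?_) i <;> simp [h1, h2]

lemma GG_trajProb_snoc (μ0 : State → ℝ≥0∞) (K : State → State → ℝ≥0∞)
    {t : ℕ} (x : Fin (t + 1) → State) (y : State) :
    trajProb μ0 K (Fin.snoc x y) = trajProb μ0 K x * K (x (Fin.last t)) y := by
  simp only [trajProb]
  rw [Fin.prod_univ_castSucc]
  have key : ∀ i : Fin t,
      K ((Fin.snoc x y : Fin (t + 1 + 1) → State) (Fin.castSucc (Fin.castSucc i)))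
          ((Fin.snoc x y : Fin (t + 1 + 1) → State) (Fin.succ (Fin.castSucc i)))
        = K (x i.castSucc) (x i.succ) := by
    intro i
    rw [Fin.snoc_castSucc, Fin.succ_castSucc, Fin.snoc_castSucc]
  rw [Finset.prod_congr rfl (fun i _ => key i), Fin.succ_last, Fin.snoc_last, Fin.snoc_castSucc]
  have h0 : (Fin.snoc x y : Fin (t + 1 + 1) → State) 0 = x 0 := by
    have h : (0 : Fin (t + 1 + 1)) = Fin.castSucc 0 := rfl
    rw [h, Fin.snoc_castSucc]
  rw [h0, mul_assoc]

lemma GG_survival_zero_le (μ0 : State → ℝ≥0∞) (K : State → State → ℝ≥0∞)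
    (Opt : State → Prop) (hμ0 : ∑' x, μ0 x = 1) : survival μ0 K Opt 0 ≤ 1 := by
  rw [survival, ← hμ0,
    ← Equiv.tsum_eq (Equiv.funUnique (Fin 1) State).symm
      (fun x : Fin 1 → State => if ∀ i, ¬ Opt (x i) then trajProb μ0 K x else 0)]
  refine Summable.tsum_le_tsum (fun v => ?_) ENNReal.summable ENNReal.summable
  simp only [trajProb]
  split
  · simp [Equiv.funUnique]
  · exact zero_le

lemma GG_survival_succ_le (μ0 : State → ℝ≥0∞) (K : State → State → ℝ≥0∞)
    (Opt Valid : State → Prop) (q : ℝ≥0∞)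
    (hsupp : ∀ x, μ0 x ≠ 0 → Valid x)
    (hstep : ∀ x y, Valid x → K x y ≠ 0 → Valid y)
    (hq : ∀ x, Valid x → ¬ Opt x → (∑' y, if ¬ Opt y then K x y else 0) ≤ q)
    (t : ℕ) :
    survival μ0 K Opt (t + 1) ≤ q * survival μ0 K Opt t := by
  have hre : survival μ0 K Opt (t + 1)
      = ∑' (x : Fin (t + 1) → State) (y : State),
          if (∀ i, ¬ Opt (x i)) ∧ ¬ Opt y
            then trajProb μ0 K x * K (x (Fin.last t)) y else 0 := by
    rw [survival,
      ← Equiv.tsum_eq (Fin.snocEquiv (fun _ : Fin (t + 1 + 1) => State))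
        (fun x : Fin (t + 1 + 1) → State => if ∀ i, ¬ Opt (x i) then trajProb μ0 K x else 0),
      ENNReal.tsum_prod', ENNReal.tsum_comm]
    refine tsum_congr fun x => tsum_congr fun y => ?_
    have hs : (Fin.snocEquiv (fun _ : Fin (t + 1 + 1) => State)) (y, x) = Fin.snoc x y := by
      funext i; simp [Fin.snocEquiv]
    rw [hs]
    exact if_congr (GG_forall_snoc_iff x y) (GG_trajProb_snoc μ0 K x y) rfl
  rw [hre]
  have hb : ∀ x : Fin (t + 1) → State,
      (∑' y : State, if (∀ i, ¬ Opt (x i)) ∧ ¬ Opt y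
          then trajProb μ0 K x * K (x (Fin.last t)) y else 0)
        ≤ q * (if ∀ i, ¬ Opt (x i) then trajProb μ0 K x else 0) := by
    intro x
    by_cases hall : ∀ i, ¬ Opt (x i)
    · have hcong : ∀ y : State,
          (if (∀ i, ¬ Opt (x i)) ∧ ¬ Opt y then trajProb μ0 K x * K (x (Fin.last t)) y else 0)
            = (if ¬ Opt y then trajProb μ0 K x * K (x (Fin.last t)) y else 0) :=
        fun y => if_congr (and_iff_right hall) rfl rfl
      rw [tsum_congr hcong, if_pos hall]
      by_cases h0 : trajProb μ0 K x = 0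
      · simp [h0]
      · have hvalid : Valid (x (Fin.last t)) := GG_traj_valid μ0 K Valid hsupp hstep x h0 _
        calc (∑' y, if ¬ Opt y then trajProb μ0 K x * K (x (Fin.last t)) y else 0)
            = trajProb μ0 K x * ∑' y, (if ¬ Opt y then K (x (Fin.last t)) y else 0) := by
              rw [← ENNReal.tsum_mul_left]
              exact tsum_congr fun y => by split <;> simp
          _ ≤ trajProb μ0 K x * q := mul_le_mul_right (hq _ hvalid (hall _)) _
          _ = q * trajProb μ0 K x := mul_comm _ _
    · simp [hall]
  calc _ ≤ ∑' x : Fin (t + 1) → State,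
        q * (if ∀ i, ¬ Opt (x i) then trajProb μ0 K x else 0) :=
        Summable.tsum_le_tsum hb ENNReal.summable ENNReal.summable
    _ = q * survival μ0 K Opt t := by rw [ENNReal.tsum_mul_left, survival]

lemma GG_survival_le_pow (μ0 : State → ℝ≥0∞) (K : State → State → ℝ≥0∞)
    (Opt Valid : State → Prop) (q : ℝ≥0∞)
    (hμ0 : ∑' x, μ0 x = 1)
    (hsupp : ∀ x, μ0 x ≠ 0 → Valid x)
    (hstep : ∀ x y, Valid x → K x y ≠ 0 → Valid y)
    (hq : ∀ x, Valid x → ¬ Opt x → (∑' y, if ¬ Opt y then K x y else 0) ≤ q)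
    (t : ℕ) : survival μ0 K Opt t ≤ q ^ t := by
  induction t with
  | zero => simpa using GG_survival_zero_le μ0 K Opt hμ0
  | succ t ih =>
      calc survival μ0 K Opt (t + 1) ≤ q * survival μ0 K Opt t :=
            GG_survival_succ_le μ0 K Opt Valid q hsupp hstep hq t
        _ ≤ q * q ^ t := mul_le_mul_right ih q
        _ = q ^ (t + 1) := by rw [pow_succ, mul_comm]

end GeneralMarkov

section GGinstance

variable {m : ℕ}

lemma GG_mem_VcGG {i : Fin m} {v : VG m} :
    v ∈ VcGG m i ↔ v = Sum.inl i ∨ (i.val = 0 ∧ v = Sum.inr ()) := by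
  unfold VcGG
  split <;> rename_i h <;> simp [h]

lemma GG_mem_VcGG_self (i : Fin m) : Sum.inl i ∈ VcGG m i := by
  rw [GG_mem_VcGG]; left; rfl

lemma GG_card_VcGG_ne_zero (i : Fin m) : ((VcGG m i).card : ℝ≥0∞) ≠ 0 := by
  have h := Finset.card_ne_zero_of_mem (GG_mem_VcGG_self i)
  exact_mod_cast Nat.cast_ne_zero.mpr h

lemma GG_card_VcGG_zero {i : Fin m} (h : i.val = 0) : (VcGG m i).card = 2 := by
  unfold VcGG
  rw [if_pos h]
  exact Finset.card_pair (by simp)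

lemma GG_card_VcGG_one {i : Fin m} (h : i.val ≠ 0) : (VcGG m i).card = 1 := by
  unfold VcGG
  rw [if_neg h]
  exact Finset.card_singleton _

lemma GG_inv_m_le_one (hm : 2 ≤ m) : (m : ℝ≥0∞)⁻¹ ≤ 1 :=
  ENNReal.inv_le_one.mpr (by exact_mod_cast Nat.one_le_cast.mpr (by omega))

lemma GG_tsum_clusterMut (hm : 2 ≤ m) (x : Fin m → VG m) :
    ∑' y : Fin m → VG m, clusterMut m (VcGG m) x y = 1 := by
  rw [tsum_fintype]
  unfold clusterMut
  rw [← Fintype.piFinset_univ,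
    Finset.sum_prod_piFinset Finset.univ
      (fun i v => (if v ∈ VcGG m i then (m : ℝ≥0∞)⁻¹ * ((VcGG m i).card : ℝ≥0∞)⁻¹ else 0) +
        (if v = x i then 1 - (m : ℝ≥0∞)⁻¹ else 0))]
  refine Finset.prod_eq_one fun i _ => ?_
  rw [Finset.sum_add_distrib]
  have h1 : (∑ v : VG m,
      if v ∈ VcGG m i then (m : ℝ≥0∞)⁻¹ * ((VcGG m i).card : ℝ≥0∞)⁻¹ else 0)
      = ((VcGG m i).card : ℝ≥0∞) * ((m : ℝ≥0∞)⁻¹ * ((VcGG m i).card : ℝ≥0∞)⁻¹) := by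
    rw [Finset.sum_ite_mem, Finset.univ_inter, Finset.sum_const, nsmul_eq_mul]
  have h2 : (∑ v : VG m, if v = x i then (1 : ℝ≥0∞) - (m : ℝ≥0∞)⁻¹ else 0)
      = 1 - (m : ℝ≥0∞)⁻¹ := by
    simp
  rw [h1, h2]
  have hc : ((VcGG m i).card : ℝ≥0∞) * ((m : ℝ≥0∞)⁻¹ * ((VcGG m i).card : ℝ≥0∞)⁻¹)
      = (m : ℝ≥0∞)⁻¹ := by
    rw [mul_comm, mul_assoc, ENNReal.inv_mul_cancel (GG_card_VcGG_ne_zero i) (by simp), mul_one]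
  rw [hc]
  exact add_tsub_cancel_of_le (GG_inv_m_le_one hm)

lemma GG_valid_apply_ne {x : Fin m → VG m} (hx : ValidGG m x) {i : Fin m} (h : i.val ≠ 0) :
    x i = Sum.inl i := by
  have := hx i
  rw [GG_mem_VcGG] at this
  tauto

lemma GG_valid_eq_of_zero [NeZero m] {x z : Fin m → VG m} (hx : ValidGG m x)
    (hz : ValidGG m z) (h : z 0 = x 0) : z = x := by
  funext i
  by_cases hi : i.val = 0
  · have hieq : i = 0 := Fin.ext (by simpa using hi)
    rw [hieq, h]
  · rw [GG_valid_apply_ne hz hi, GG_valid_apply_ne hx hi]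

lemma GG_kernel_valid (x y : Fin m → VG m) (hx : ValidGG m x)
    (hK : eaKernel (clusterMut m (VcGG m)) (mstCost (cGG m)) x y ≠ 0) : ValidGG m y := by
  by_cases hyx : y = x
  · subst hyx; exact hx
  · unfold eaKernel at hK
    rw [if_neg hyx, add_zero] at hK
    have hmut : clusterMut m (VcGG m) x y ≠ 0 := by
      intro h
      apply hK
      split <;> simp [h]
    intro i
    have hfac : ((if y i ∈ VcGG m i then (m : ℝ≥0∞)⁻¹ * ((VcGG m i).card : ℝ≥0∞)⁻¹ else 0) +
        (if y i = x i then 1 - (m : ℝ≥0∞)⁻¹ else 0)) ≠ 0 := by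
      intro h
      apply hmut
      unfold clusterMut
      exact Finset.prod_eq_zero (Finset.mem_univ i) h
    by_cases hmem : y i ∈ VcGG m i
    · exact hmem
    · by_cases heq : y i = x i
      · rw [heq]; exact hx i
      · exact absurd (by simp [hmem, heq]) hfac

lemma GG_opt_step (hm : 2 ≤ m) (x : Fin m → VG m) (hx : ValidGG m x) (hnx : ¬ OptGG m x) :
    ((2 * m : ℕ) : ℝ≥0∞)⁻¹ ≤
      ∑' y : Fin m → VG m, if OptGG m y then clusterMut m (VcGG m) x y else 0 := by
  haveI : NeZero m := ⟨by omega⟩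
  set o : VG m := if x 0 = Sum.inl (0 : Fin m) then Sum.inr () else Sum.inl (0 : Fin m) with ho
  set y : Fin m → VG m := Function.update x 0 o with hy
  have hx0 : x 0 = Sum.inl (0 : Fin m) ∨ x 0 = Sum.inr () := by
    have := hx 0
    rw [GG_mem_VcGG] at this
    tauto
  have hy0 : y 0 = o := Function.update_self _ _ _
  have hone : o ≠ x 0 := by
    rcases hx0 with h | h <;> rw [ho, h] <;> simp
  have homem : o ∈ VcGG m 0 := by
    rw [GG_mem_VcGG]
    rcases hx0 with h | h
    · rw [ho, if_pos h]
      exact Or.inr ⟨by simp, rfl⟩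
    · rw [ho, if_neg (by rw [h]; simp)]
      exact Or.inl rfl
  have hyvalid : ValidGG m y := by
    intro i
    by_cases hi : i = 0
    · subst hi; rw [hy0]; exact homem
    · rw [hy, Function.update_of_ne hi]; exact hx i
  have hzcases : ∀ z, ValidGG m z → z = x ∨ z = y := by
    intro z hz
    have hz0 : z 0 = Sum.inl (0 : Fin m) ∨ z 0 = Sum.inr () := by
      have := hz 0
      rw [GG_mem_VcGG] at this
      tauto
    have hzx : z 0 = x 0 ∨ z 0 = y 0 := by
      rw [hy0, ho]
      rcases hx0 with h | h <;> rcases hz0 with h' | h' <;> rw [h, h'] <;> simp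
    rcases hzx with h | h
    · exact Or.inl (GG_valid_eq_of_zero hx hz h)
    · exact Or.inr (GG_valid_eq_of_zero hyvalid hz h)
  have hyopt : OptGG m y := by
    refine ⟨hyvalid, fun z hz => ?_⟩
    rcases hzcases z hz with rfl | rfl
    · by_contra hcon
      have hxle : mstCost (cGG m) z ≤ mstCost (cGG m) y := le_of_not_ge hcon
      refine hnx ⟨hx, fun w hw => ?_⟩
      rcases hzcases w hw with rfl | rfl
      · exact le_rfl
      · exact hxle
    · exact le_rfl
  have hval : clusterMut m (VcGG m) x y = ((2 * m : ℕ) : ℝ≥0∞)⁻¹ := by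
    unfold clusterMut
    have hprod : (∏ i : Fin m,
        ((if y i ∈ VcGG m i then (m : ℝ≥0∞)⁻¹ * ((VcGG m i).card : ℝ≥0∞)⁻¹ else 0) +
          (if y i = x i then 1 - (m : ℝ≥0∞)⁻¹ else 0)))
        = ((if y 0 ∈ VcGG m 0 then (m : ℝ≥0∞)⁻¹ * ((VcGG m 0).card : ℝ≥0∞)⁻¹ else 0) +
          (if y 0 = x 0 then 1 - (m : ℝ≥0∞)⁻¹ else 0)) := by
      refine Finset.prod_eq_single (0 : Fin m) (fun b _ hb => ?_)
        (fun h => absurd (Finset.mem_univ _) h)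
      have hbv : b.val ≠ 0 := fun h => hb (Fin.ext (by simpa using h))
      have hyb : y b = x b := Function.update_of_ne hb _ _
      have hxb : x b = Sum.inl b := GG_valid_apply_ne hx hbv
      rw [hyb, hxb, if_pos (GG_mem_VcGG_self b), if_pos rfl, GG_card_VcGG_one hbv]
      simp only [Nat.cast_one, inv_one, mul_one]
      exact add_tsub_cancel_of_le (GG_inv_m_le_one hm)
    rw [hprod, hy0, if_pos homem, if_neg hone, add_zero,
      GG_card_VcGG_zero (by simp : (0 : Fin m).val = 0)]
    rw [Nat.cast_mul, ENNReal.mul_inv (Or.inl (by norm_num)) (Or.inl (by norm_num))]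
    push_cast
    rw [mul_comm]
  calc ((2 * m : ℕ) : ℝ≥0∞)⁻¹
      = (if OptGG m y then clusterMut m (VcGG m) x y else 0) := by rw [if_pos hyopt, hval]
    _ ≤ ∑' y' : Fin m → VG m, if OptGG m y' then clusterMut m (VcGG m) x y' else 0 :=
        ENNReal.le_tsum y

lemma GG_kernel_step (hm : 2 ≤ m) (x : Fin m → VG m) (hx : ValidGG m x) (hnx : ¬ OptGG m x) :
    (∑' y : Fin m → VG m,
        if ¬ OptGG m y then eaKernel (clusterMut m (VcGG m)) (mstCost (cGG m)) x y else 0)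
      ≤ 1 - ((2 * m : ℕ) : ℝ≥0∞)⁻¹ := by
  set K := eaKernel (clusterMut m (VcGG m)) (mstCost (cGG m)) with hK
  have htot : (∑' y : Fin m → VG m, if OptGG m y then K x y else 0) +
      (∑' y : Fin m → VG m, if ¬ OptGG m y then K x y else 0) = 1 := by
    rw [← ENNReal.tsum_add,
      ← GG_tsum_eaKernel (clusterMut m (VcGG m)) (mstCost (cGG m)) x (GG_tsum_clusterMut hm x)]
    exact tsum_congr fun y => by by_cases h : OptGG m y <;> simp [h, hK]
  have hp : ((2 * m : ℕ) : ℝ≥0∞)⁻¹ ≤ ∑' y : Fin m → VG m, if OptGG m y then K x y else 0 := by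
    refine le_trans (GG_opt_step hm x hx hnx)
      (Summable.tsum_le_tsum (fun y => ?_) ENNReal.summable ENNReal.summable)
    by_cases h : OptGG m y
    · simp only [h, if_true]
      rw [hK]
      unfold eaKernel
      rw [if_pos (h.2 x hx)]
      exact le_self_add
    · simp [h]
  have hAle : (∑' y : Fin m → VG m, if OptGG m y then K x y else 0) ≤ 1 := by
    rw [← htot]; exact le_self_add
  have hB : (∑' y : Fin m → VG m, if ¬ OptGG m y then K x y else 0)
      = 1 - (∑' y : Fin m → VG m, if OptGG m y then K x y else 0) :=
    ENNReal.eq_sub_of_add_eq (hAle.trans_lt ENNReal.one_lt_top).ne (by rw [add_comm]; exact htot)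
  rw [hB]
  exact tsub_le_tsub_left hp 1

end GGinstance

/-- The cluster-based (1+1) EA solves the instance `G_G` in expected time
`O(m)`: from any node selection, the probability that a single mutation step produces an
optimal node selection is at least `1/(2m)` — namely the probability that cluster `V₁` is
chosen for mutation (probability `1/m`) and that the correct one of its two nodes is
selected (probability `1/2`) — so for any initial distribution over node selections the
expected optimization time is at most `2m = O(m)`. -/
theorem clusterEA_GG_upper_bound (m : ℕ) (hm : 2 ≤ m)
    (μ0 : (Fin m → VG m) → ℝ≥0∞)
    (hμ0 : ∑' x, μ0 x = 1)
    (hsupp : ∀ x, μ0 x ≠ 0 → ValidGG m x) :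
    (∀ x : Fin m → VG m, ValidGG m x → ¬ OptGG m x →
        ((2 * m : ℕ) : ℝ≥0∞)⁻¹ ≤
          ∑' y : Fin m → VG m, if OptGG m y then clusterMut m (VcGG m) x y else 0) ∧
    expectedOptTime μ0 (eaKernel (clusterMut m (VcGG m)) (mstCost (cGG m))) (OptGG m) ≤
      ((2 * m : ℕ) : ℝ≥0∞) := by
  refine ⟨fun x hx hnx => GG_opt_step hm x hx hnx, ?_⟩
  set p : ℝ≥0∞ := ((2 * m : ℕ) : ℝ≥0∞)⁻¹ with hp
  set K := eaKernel (clusterMut m (VcGG m)) (mstCost (cGG m)) with hKdef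
  have hple : p ≤ 1 := ENNReal.inv_le_one.mpr (Nat.one_le_cast.mpr (by omega))
  have hr : ∀ t, survival μ0 K (OptGG m) t ≤ (1 - p) ^ t :=
    GG_survival_le_pow μ0 K (OptGG m) (ValidGG m) (1 - p) hμ0 hsupp
      (fun x y hx hK => GG_kernel_valid x y hx hK)
      (fun x hx hnx => GG_kernel_step hm x hx hnx)
  calc expectedOptTime μ0 K (OptGG m) ≤ ∑' t : ℕ, (1 - p) ^ t :=
        Summable.tsum_le_tsum hr ENNReal.summable ENNReal.summable
    _ = (1 - (1 - p))⁻¹ := ENNReal.tsum_geometric _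
    _ = p⁻¹ := by rw [ENNReal.sub_sub_cancel ENNReal.one_ne_top hple]
    _ = ((2 * m : ℕ) : ℝ≥0∞) := by rw [hp, inv_inv]
end
end

section
/- For any instance of the generalised travelling salesman problem with m clusters, the expected optimization time of the tour-based (1+1) EA is O(m! * m^{2m}). In particular, from any non-optimal cluster permutation, the probability that a single mutation step produces an optimal cluster permutation is at least (1/(e*(m-1)!)) * m^{-2m}. Hence the tour-based (1+1) EA is a fixed-parameter evolutionary algorithm for GTSP with respect to the number of clusters m. -/
open scoped ENNReal BigOperators Classical

noncomputable section

/-- The cyclic successor of a position/label `i` in `Fin m`: `(i + 1) mod m`. -/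
def cyc {m : ℕ} (i : Fin m) : Fin m :=
  ⟨(i.val + 1) % m, Nat.mod_lt _ (Nat.lt_of_le_of_lt (Nat.zero_le i.val) i.isLt)⟩

/-- The jump operation on a list: the element at position `j` is removed and reinserted at
position `k` (shifting the intermediate elements accordingly); if `j` is out of range the
list is unchanged. -/
def jumpList {α : Type*} (l : List α) (j k : ℕ) : List α :=
  match l[j]? with
  | none => l
  | some a => (l.eraseIdx j).insertIdx k a

/-- The jump operation on a permutation `π` of `Fin m`, viewed as the sequence
`π 0, …, π (m-1)`: the element at position `j` is removed and reinserted at position `k`. -/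
def jumpFun {m : ℕ} (π : Fin m → Fin m) (j k : Fin m) : Fin m → Fin m :=
  fun i => (jumpList (List.ofFn π) j.val k.val).getD i.val (π i)

/-- The transition probability of a single jump operation in which the removed position `j`
and the reinsertion position `k` are chosen independently and uniformly at random. -/
def jumpK (m : ℕ) (π σ : Fin m → Fin m) : ℝ≥0∞ :=
  ∑ j : Fin m, ∑ k : Fin m,
    (m : ℝ≥0∞)⁻¹ * (m : ℝ≥0∞)⁻¹ * (if σ = jumpFun π j k then 1 else 0)

/-- `k`-fold composition of the single-jump transition kernel. -/
def jumpKpow (m : ℕ) : ℕ → (Fin m → Fin m) → (Fin m → Fin m) → ℝ≥0∞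
  | 0, π, σ => if σ = π then 1 else 0
  | k + 1, π, σ => ∑' τ : Fin m → Fin m, jumpKpow m k π τ * jumpK m τ σ

/-- Mutation distribution of the tour-based (1+1) EA: `K ~ 1 + Poisson(1)` jump operations
are applied to the current cluster permutation. -/
def tourMut (m : ℕ) (π σ : Fin m → Fin m) : ℝ≥0∞ :=
  ∑' k : ℕ, poisson1 k * jumpKpow m (k + 1) π σ

/-- The lower-level value of a cluster permutation `π`: the minimum over node selections
`p i ∈ Vc i` of the cost of the Hamiltonian cycle visiting the selected nodes in the cyclic
order given by `π` (the lower-level problem is solved optimally). -/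
def tourValue {V : Type*} (c : V → V → ℝ≥0∞) {m : ℕ} (Vc : Fin m → Finset V)
    (π : Fin m → Fin m) : ℝ≥0∞ :=
  ⨅ (p : Fin m → V) (_ : ∀ i, p i ∈ Vc i), ∑ i : Fin m, c (p (π i)) (p (π (cyc i)))

/-- Optimal upper-level solutions of the GTSP: cluster permutations whose lower-level value
is globally minimal. -/
def OptTour {V : Type*} (c : V → V → ℝ≥0∞) {m : ℕ} (Vc : Fin m → Finset V)
    (π : Fin m → Fin m) : Prop :=
  Function.Bijective π ∧
    ∀ σ : Fin m → Fin m, Function.Bijective σ → tourValue c Vc π ≤ tourValue c Vc σ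
namespace GTSPAux

open List Function

variable {α : Type*}

/-! ### List-level jump lemmas -/

lemma jumpList_cons (a : α) (t : List α) (j k : ℕ) :
    jumpList (a :: t) (j + 1) (k + 1) = a :: jumpList t j k := by
  unfold jumpList
  cases h : t[j]? with
  | none => simp [h]
  | some b => simp [h, List.insertIdx_succ_cons]

lemma length_jumpList (l : List α) (j k : ℕ) (hk : k < l.length) :
    (jumpList l j k).length = l.length := by
  unfold jumpList
  cases h : l[j]? with
  | none => rfl
  | some a =>
    have hj : j < l.length := by
      by_contra hj
      rw [List.getElem?_eq_none (Nat.le_of_not_lt hj)] at h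
      cases h
    have hle : (l.eraseIdx j).length = l.length - 1 := by
      rw [List.length_eraseIdx]; simp [hj]
    rw [List.length_insertIdx_of_le_length (by omega), hle]
    omega

lemma insertIdx_perm (a : α) : ∀ (n : ℕ) (l : List α), n ≤ l.length →
    (l.insertIdx n a).Perm (a :: l)
  | 0, l, _ => List.Perm.refl _
  | n + 1, [], h => absurd h (by simp)
  | n + 1, b :: t, h => by
    rw [List.insertIdx_succ_cons]
    exact ((insertIdx_perm a n t (Nat.le_of_succ_le_succ h)).cons b).trans
      (List.Perm.swap a b t)

lemma cons_eraseIdx_perm : ∀ {l : List α} {j : ℕ} {a : α}, l[j]? = some a →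
    l.Perm (a :: l.eraseIdx j)
  | [], j, a, h => by simp at h
  | b :: t, 0, a, h => by
    simp at h
    subst h
    rfl
  | b :: t, j + 1, a, h => by
    simp only [List.getElem?_cons_succ] at h
    have := (cons_eraseIdx_perm h).cons b
    exact this.trans (List.Perm.swap a b _)

lemma jumpList_perm (l : List α) (j k : ℕ) (hk : k < l.length) :
    (jumpList l j k).Perm l := by
  unfold jumpList
  cases h : l[j]? with
  | none => rfl
  | some a =>
    have hj : j < l.length := by
      by_contra hj
      rw [List.getElem?_eq_none (Nat.le_of_not_lt hj)] at h
      cases h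
    have hle : (l.eraseIdx j).length = l.length - 1 := by
      rw [List.length_eraseIdx]; simp [hj]
    exact (insertIdx_perm a k _ (by omega)).trans (cons_eraseIdx_perm h).symm

/-! ### Sequences of jumps -/

def applyJumps (seq : List (ℕ × ℕ)) (l : List α) : List α :=
  seq.foldl (fun l p => jumpList l p.1 p.2) l

@[simp] lemma applyJumps_nil (l : List α) : applyJumps [] l = l := rfl

@[simp] lemma applyJumps_cons (p : ℕ × ℕ) (seq : List (ℕ × ℕ)) (l : List α) :
    applyJumps (p :: seq) l = applyJumps seq (jumpList l p.1 p.2) := rfl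

lemma applyJumps_append (s t : List (ℕ × ℕ)) (l : List α) :
    applyJumps (s ++ t) l = applyJumps t (applyJumps s l) :=
  List.foldl_append

lemma applyJumps_map_shift (seq : List (ℕ × ℕ)) (a : α) (t : List α) :
    applyJumps (seq.map fun p => (p.1 + 1, p.2 + 1)) (a :: t) = a :: applyJumps seq t := by
  induction seq generalizing t with
  | nil => rfl
  | cons p s ih =>
    simp only [List.map_cons, applyJumps_cons, jumpList_cons]
    exact ih _

lemma length_applyJumps : ∀ (seq : List (ℕ × ℕ)) (l : List α),
    (∀ p ∈ seq, p.2 < l.length) → (applyJumps seq l).length = l.length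
  | [], l, _ => rfl
  | p :: s, l, h => by
    have h1 : (jumpList l p.1 p.2).length = l.length :=
      length_jumpList l p.1 p.2 (h p (List.mem_cons_self))
    rw [applyJumps_cons, length_applyJumps s _ (fun q hq => h1 ▸ h q (List.mem_cons_of_mem _ hq)), h1]

lemma exists_jump_seq : ∀ (l' l : List α), l'.Perm l →
    ∃ seq : List (ℕ × ℕ), seq.length = l.length ∧
      (∀ p ∈ seq, p.1 < l.length ∧ p.2 < l.length) ∧ applyJumps seq l = l' := by
  intro l'
  induction l' with
  | nil =>
    intro l h
    have : l = [] := by simpa using h.symm.length_eq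
    exact ⟨[], by simp [this]⟩
  | cons a t' ih =>
    intro l h
    have ha : a ∈ l := h.subset (List.mem_cons_self)
    obtain ⟨j, hj, hja⟩ := List.mem_iff_getElem.mp ha
    have hsome : l[j]? = some a := by rw [List.getElem?_eq_getElem hj, hja]
    have hperm : l.Perm (a :: l.eraseIdx j) := cons_eraseIdx_perm hsome
    have ht' : t'.Perm (l.eraseIdx j) := (h.trans hperm).cons_inv
    obtain ⟨s, hslen, hsbd, hsapp⟩ := ih (l.eraseIdx j) ht'
    have hel : (l.eraseIdx j).length = l.length - 1 := by
      rw [List.length_eraseIdx]; simp [hj]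
    refine ⟨(j, 0) :: s.map (fun p => (p.1 + 1, p.2 + 1)), ?_, ?_, ?_⟩
    · simp only [List.length_cons, List.length_map, hslen, hel]
      omega
    · intro p hp
      rcases List.mem_cons.mp hp with rfl | hp
      · exact ⟨hj, by omega⟩
      · obtain ⟨q, hq, rfl⟩ := List.mem_map.mp hp
        have := hsbd q hq
        rw [hel] at this
        constructor <;> simp <;> omega
    · have hjl : jumpList l j 0 = a :: l.eraseIdx j := by
        unfold jumpList
        rw [hsome]
        rfl
      rw [applyJumps_cons, hjl, applyJumps_map_shift, hsapp]

end GTSPAux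
namespace GTSPAux

open List Function

/-! ### Function-level lemmas -/

lemma ofFn_jumpFun {m : ℕ} (π : Fin m → Fin m) (j k : Fin m) :
    List.ofFn (jumpFun π j k) = jumpList (List.ofFn π) j.val k.val := by
  have hlen : (jumpList (List.ofFn π) j.val k.val).length = m := by
    rw [length_jumpList _ _ _ (by simp [k.isLt])]
    simp
  apply List.ext_getElem (by simp [hlen])
  intro i h1 h2
  rw [List.getElem_ofFn]
  show jumpFun π j k _ = _
  unfold jumpFun
  rw [List.getD_eq_getElem _ _ (by omega)]

lemma jumpK_single_le {m : ℕ} (τ σ : Fin m → Fin m) (j k : Fin m)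
    (h : σ = jumpFun τ j k) :
    (m : ℝ≥0∞)⁻¹ * (m : ℝ≥0∞)⁻¹ ≤ jumpK m τ σ := by
  unfold jumpK
  calc (m : ℝ≥0∞)⁻¹ * (m : ℝ≥0∞)⁻¹
      = (m : ℝ≥0∞)⁻¹ * (m : ℝ≥0∞)⁻¹ * (if σ = jumpFun τ j k then 1 else 0) := by
        rw [if_pos h, mul_one]
    _ ≤ ∑ k' : Fin m, (m : ℝ≥0∞)⁻¹ * (m : ℝ≥0∞)⁻¹ * (if σ = jumpFun τ j k' then 1 else 0) :=
        Finset.single_le_sum (f := fun k' => (m : ℝ≥0∞)⁻¹ * (m : ℝ≥0∞)⁻¹ *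
          (if σ = jumpFun τ j k' then 1 else 0)) (fun _ _ => zero_le) (Finset.mem_univ k)
    _ ≤ _ := Finset.single_le_sum (f := fun j' => ∑ k' : Fin m,
          (m : ℝ≥0∞)⁻¹ * (m : ℝ≥0∞)⁻¹ * (if σ = jumpFun τ j' k' then 1 else 0))
          (fun _ _ => zero_le) (Finset.mem_univ j)

lemma le_jumpKpow {m : ℕ} : ∀ (seq : List (ℕ × ℕ)), (∀ p ∈ seq, p.1 < m ∧ p.2 < m) →
    ∀ π σ : Fin m → Fin m, List.ofFn σ = applyJumps seq (List.ofFn π) →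
    ((m : ℝ≥0∞)⁻¹ * (m : ℝ≥0∞)⁻¹) ^ seq.length ≤ jumpKpow m seq.length π σ := by
  intro seq
  induction seq using List.reverseRecOn with
  | nil =>
    intro _ π σ h
    have : σ = π := List.ofFn_inj.mp (by simpa using h)
    simp [jumpKpow, this]
  | append_singleton rest p ih =>
    intro hbd π σ h
    rw [applyJumps_append] at h
    set L := applyJumps rest (List.ofFn π) with hL
    have hlen : L.length = m := by
      rw [hL, length_applyJumps _ _ (fun q hq => by
        simpa using (hbd q (List.mem_append_left _ hq)).2)]
      simp
    set τ : Fin m → Fin m := fun i => L[i.val]'(by rw [hlen]; exact i.isLt) with hτdef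
    have hτ : List.ofFn τ = L := by
      apply List.ext_getElem (by simp [hlen])
      intro i h1 h2
      rw [List.getElem_ofFn]
    have hp1 : p.1 < m := (hbd p (List.mem_append_right _ (List.mem_singleton_self _))).1
    have hp2 : p.2 < m := (hbd p (List.mem_append_right _ (List.mem_singleton_self _))).2
    have hσ : σ = jumpFun τ ⟨p.1, hp1⟩ ⟨p.2, hp2⟩ := by
      apply List.ofFn_inj.mp
      rw [ofFn_jumpFun, hτ]
      simpa using h
    have h1 := ih (fun q hq => hbd q (List.mem_append_left _ hq)) π τ (hτ.trans hL)
    have h2 := jumpK_single_le τ σ _ _ hσ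
    calc ((m : ℝ≥0∞)⁻¹ * (m : ℝ≥0∞)⁻¹) ^ (rest ++ [p]).length
        = ((m : ℝ≥0∞)⁻¹ * (m : ℝ≥0∞)⁻¹) ^ rest.length * ((m : ℝ≥0∞)⁻¹ * (m : ℝ≥0∞)⁻¹) := by
          simp [pow_succ]
      _ ≤ jumpKpow m rest.length π τ * jumpK m τ σ := mul_le_mul' h1 h2
      _ ≤ ∑' τ' : Fin m → Fin m, jumpKpow m rest.length π τ' * jumpK m τ' σ :=
          ENNReal.le_tsum τ
      _ = jumpKpow m (rest ++ [p]).length π σ := by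
          simp [jumpKpow, List.length_append]

lemma bijective_perm_ofFn {m : ℕ} {π σ : Fin m → Fin m}
    (hπ : Function.Bijective π) (hσ : Function.Bijective σ) :
    (List.ofFn σ).Perm (List.ofFn π) := by
  apply List.perm_of_nodup_nodup_toFinset_eq (List.nodup_ofFn.mpr hσ.1)
    (List.nodup_ofFn.mpr hπ.1)
  ext a
  simp only [List.mem_toFinset, List.mem_ofFn]
  constructor
  · intro _; exact Set.mem_range.mpr (hπ.2 a)
  · intro _; exact Set.mem_range.mpr (hσ.2 a)

lemma inv_pow_le_jumpKpow {m : ℕ} {π σ : Fin m → Fin m} (hm : 1 ≤ m)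
    (hperm : (List.ofFn σ).Perm (List.ofFn π)) :
    ((m : ℝ≥0∞) ^ (2 * m))⁻¹ ≤ jumpKpow m m π σ := by
  obtain ⟨seq, hlen, hbd, happ⟩ := exists_jump_seq (List.ofFn σ) (List.ofFn π) hperm
  rw [List.length_ofFn] at hlen hbd
  have h := le_jumpKpow seq hbd π σ happ.symm
  rw [hlen] at h
  refine le_trans (le_of_eq ?_) h
  have hm0 : (m : ℝ≥0∞) ≠ 0 := Nat.cast_ne_zero.mpr (by omega)
  have hmt : (m : ℝ≥0∞) ≠ ⊤ := ENNReal.natCast_ne_top m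
  rw [← ENNReal.mul_inv (Or.inl hm0) (Or.inl hmt), ← ENNReal.inv_pow, ← sq, ← pow_mul]

end GTSPAux
namespace GTSPAux

open List Function

/-! ### Mass lemmas -/

lemma jumpK_mass {m : ℕ} (hm : 1 ≤ m) (π : Fin m → Fin m) :
    ∑' σ : Fin m → Fin m, jumpK m π σ = 1 := by
  have hm0 : (m : ℝ≥0∞) ≠ 0 := Nat.cast_ne_zero.mpr (by omega)
  have hmt : (m : ℝ≥0∞) ≠ ⊤ := ENNReal.natCast_ne_top m
  rw [tsum_fintype]
  unfold jumpK
  rw [Finset.sum_comm]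
  have key : ∀ j : Fin m, ∑ σ : Fin m → Fin m, ∑ k : Fin m,
      ((m : ℝ≥0∞)⁻¹ * (m : ℝ≥0∞)⁻¹ * if σ = jumpFun π j k then 1 else 0)
      = (m : ℝ≥0∞) * ((m : ℝ≥0∞)⁻¹ * (m : ℝ≥0∞)⁻¹) := by
    intro j
    rw [Finset.sum_comm]
    have inner : ∀ k : Fin m, ∑ σ : Fin m → Fin m,
        ((m : ℝ≥0∞)⁻¹ * (m : ℝ≥0∞)⁻¹ * if σ = jumpFun π j k then 1 else 0)
        = (m : ℝ≥0∞)⁻¹ * (m : ℝ≥0∞)⁻¹ := by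
      intro k
      simp_rw [mul_ite, mul_one, mul_zero]
      rw [Finset.sum_ite_eq' Finset.univ (jumpFun π j k)
        (fun _ => (m : ℝ≥0∞)⁻¹ * (m : ℝ≥0∞)⁻¹)]
      simp
    simp_rw [inner]
    rw [Finset.sum_const, Finset.card_univ, Fintype.card_fin, nsmul_eq_mul]
  simp_rw [key]
  rw [Finset.sum_const, Finset.card_univ, Fintype.card_fin, nsmul_eq_mul]
  rw [show (m : ℝ≥0∞) * ((m : ℝ≥0∞) * ((m : ℝ≥0∞)⁻¹ * (m : ℝ≥0∞)⁻¹))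
      = ((m : ℝ≥0∞) * (m : ℝ≥0∞)⁻¹) * ((m : ℝ≥0∞) * (m : ℝ≥0∞)⁻¹) from by ring]
  rw [ENNReal.mul_inv_cancel hm0 hmt, one_mul]

lemma jumpKpow_mass {m : ℕ} (hm : 1 ≤ m) : ∀ (k : ℕ) (π : Fin m → Fin m),
    ∑' σ : Fin m → Fin m, jumpKpow m k π σ = 1
  | 0, π => by
    rw [tsum_fintype]
    show ∑ σ : Fin m → Fin m, (if σ = π then (1 : ℝ≥0∞) else 0) = 1
    rw [Finset.sum_ite_eq' Finset.univ π (fun _ => (1 : ℝ≥0∞))]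
    simp
  | k + 1, π => by
    show (∑' σ : Fin m → Fin m, ∑' τ : Fin m → Fin m,
      jumpKpow m k π τ * jumpK m τ σ) = 1
    rw [ENNReal.tsum_comm]
    simp_rw [ENNReal.tsum_mul_left, jumpK_mass hm, mul_one]
    exact jumpKpow_mass hm k π

lemma poisson1_mass : ∑' k : ℕ, poisson1 k ≤ 1 := by
  rw [ENNReal.tsum_eq_iSup_sum]
  apply iSup_le
  intro s
  obtain ⟨n, hn⟩ := s.exists_nat_subset_range
  calc ∑ k ∈ s, poisson1 k ≤ ∑ k ∈ Finset.range n, poisson1 k :=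
        Finset.sum_le_sum_of_subset hn
    _ = ENNReal.ofReal (∑ k ∈ Finset.range n, Real.exp (-1) / (Nat.factorial k : ℝ)) := by
        rw [ENNReal.ofReal_sum_of_nonneg (fun _ _ => by positivity)]
        rfl
    _ ≤ 1 := by
        rw [ENNReal.ofReal_le_one]
        have h1 : ∑ k ∈ Finset.range n, Real.exp (-1) / (Nat.factorial k : ℝ)
            = Real.exp (-1) * ∑ k ∈ Finset.range n, (1 : ℝ) ^ k / (Nat.factorial k : ℝ) := by
          rw [Finset.mul_sum]
          apply Finset.sum_congr rfl
          intro k _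
          rw [one_pow]
          ring
        rw [h1]
        calc Real.exp (-1) * ∑ k ∈ Finset.range n, (1 : ℝ) ^ k / (Nat.factorial k : ℝ)
            ≤ Real.exp (-1) * Real.exp 1 :=
              mul_le_mul_of_nonneg_left (Real.sum_le_exp_of_nonneg zero_le_one n)
                (Real.exp_pos _).le
          _ = 1 := by rw [← Real.exp_add]; norm_num

lemma tourMut_mass {m : ℕ} (hm : 1 ≤ m) (π : Fin m → Fin m) :
    ∑' σ : Fin m → Fin m, tourMut m π σ ≤ 1 := by
  unfold tourMut
  rw [ENNReal.tsum_comm]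
  simp_rw [ENNReal.tsum_mul_left, jumpKpow_mass hm, mul_one]
  exact poisson1_mass

lemma eaKernel_mass {S : Type*} [Fintype S] (mu : S → S → ℝ≥0∞) (cost : S → ℝ≥0∞) (x : S)
    (h : ∑' y : S, mu x y ≤ 1) : ∑' y : S, eaKernel mu cost x y ≤ 1 := by
  rw [tsum_fintype]
  unfold eaKernel
  rw [Finset.sum_add_distrib]
  rw [Finset.sum_ite_eq' Finset.univ x
    (fun _ => ∑' z : S, (if cost z ≤ cost x then 0 else mu x z))]
  rw [if_pos (Finset.mem_univ x), tsum_fintype, ← Finset.sum_add_distrib]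
  calc ∑ y : S, ((if cost y ≤ cost x then mu x y else 0)
        + (if cost y ≤ cost x then 0 else mu x y))
      = ∑ y : S, mu x y := by
        apply Finset.sum_congr rfl
        intro y _
        by_cases hy : cost y ≤ cost x <;> simp [hy]
    _ ≤ 1 := by rw [tsum_fintype] at h; exact h

/-! ### Support lemmas -/

lemma jumpKpow_ne_zero_perm {m : ℕ} : ∀ {k : ℕ} {π σ : Fin m → Fin m},
    jumpKpow m k π σ ≠ 0 → (List.ofFn σ).Perm (List.ofFn π)
  | 0, π, σ, h => by
    have hσ : σ = π := by
      by_contra hc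
      exact h (by simp [jumpKpow, hc])
    rw [hσ]
  | k + 1, π, σ, h => by
    have h' : ∃ τ : Fin m → Fin m, jumpKpow m k π τ * jumpK m τ σ ≠ 0 := by
      by_contra hc
      push_neg at hc
      exact h (ENNReal.tsum_eq_zero.mpr hc)
    obtain ⟨τ, hτ⟩ := h'
    have h1 : jumpKpow m k π τ ≠ 0 := left_ne_zero_of_mul hτ
    have h2 : jumpK m τ σ ≠ 0 := right_ne_zero_of_mul hτ
    unfold jumpK at h2
    obtain ⟨j, -, hj⟩ := Finset.exists_ne_zero_of_sum_ne_zero h2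
    obtain ⟨kk, -, hk⟩ := Finset.exists_ne_zero_of_sum_ne_zero hj
    have hσ : σ = jumpFun τ j kk := by
      by_contra hc
      simp [hc] at hk
    have hstep : (List.ofFn σ).Perm (List.ofFn τ) := by
      rw [hσ, ofFn_jumpFun]
      exact jumpList_perm _ _ _ (by simp [kk.isLt])
    exact hstep.trans (jumpKpow_ne_zero_perm h1)

lemma tourMut_support {m : ℕ} {x y : Fin m → Fin m} (h : tourMut m x y ≠ 0)
    (hx : Function.Bijective x) : Function.Bijective y := by
  have h' : ∃ k : ℕ, poisson1 k * jumpKpow m (k + 1) x y ≠ 0 := by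
    by_contra hc
    push_neg at hc
    exact h (ENNReal.tsum_eq_zero.mpr hc)
  obtain ⟨k, hk⟩ := h'
  have hperm := jumpKpow_ne_zero_perm (right_ne_zero_of_mul hk)
  have hnd : (List.ofFn y).Nodup :=
    hperm.nodup_iff.mpr (List.nodup_ofFn.mpr hx.1)
  exact Finite.injective_iff_bijective.mp (List.nodup_ofFn.mp hnd)

lemma eaKernel_support {m : ℕ} {cost : (Fin m → Fin m) → ℝ≥0∞} {x y : Fin m → Fin m}
    (hx : Function.Bijective x) (h : eaKernel (tourMut m) cost x y ≠ 0) :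
    Function.Bijective y := by
  by_cases hyx : y = x
  · rw [hyx]; exact hx
  · unfold eaKernel at h
    rw [if_neg hyx, add_zero] at h
    have hmut : tourMut m x y ≠ 0 := by
      by_cases hc : cost y ≤ cost x
      · rwa [if_pos hc] at h
      · rw [if_neg hc] at h; exact absurd rfl h
    exact tourMut_support hmut hx
end GTSPAux
namespace GTSPAux

open Function

/-! ### Survival analysis -/

lemma trajProb_good {S : Type*} [Fintype S] (μ0 : S → ℝ≥0∞) (K : S → S → ℝ≥0∞)
    (Good : S → Prop) (hμ : ∀ x, μ0 x ≠ 0 → Good x)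
    (hK : ∀ x y, Good x → K x y ≠ 0 → Good y)
    {t : ℕ} {y : Fin (t + 1) → S} (h : trajProb μ0 K y ≠ 0) : ∀ i, Good (y i) := by
  unfold trajProb at h
  have h0 : μ0 (y 0) ≠ 0 := left_ne_zero_of_mul h
  have hprod := right_ne_zero_of_mul h
  have hfac : ∀ i : Fin t, K (y i.castSucc) (y i.succ) ≠ 0 := fun i hz =>
    hprod (Finset.prod_eq_zero (Finset.mem_univ i) hz)
  intro i
  induction i using Fin.induction with
  | zero => exact hμ _ h0
  | succ i ih => exact hK _ _ ih (hfac i)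

def snocEquiv (S : Type*) (t : ℕ) : ((Fin (t + 1) → S) × S) ≃ (Fin (t + 2) → S) where
  toFun ya := Fin.snoc ya.1 ya.2
  invFun x := (Fin.init x, x (Fin.last (t + 1)))
  left_inv ya := by
    ext i
    · simp [Fin.init_snoc]
    · simp [Fin.snoc_last]
  right_inv x := Fin.snoc_init_self x

lemma trajProb_snoc {S : Type*} (μ0 : S → ℝ≥0∞) (K : S → S → ℝ≥0∞) {t : ℕ}
    (y : Fin (t + 1) → S) (a : S) :
    trajProb μ0 K (Fin.snoc y a) = trajProb μ0 K y * K (y (Fin.last t)) a := by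
  unfold trajProb
  rw [Fin.prod_univ_castSucc]
  have h0 : (Fin.snoc y a : Fin (t + 2) → S) 0 = y 0 := by
    rw [← Fin.castSucc_zero, Fin.snoc_castSucc]
  have hlast : K ((Fin.snoc y a : Fin (t + 2) → S) (Fin.last t).castSucc)
      ((Fin.snoc y a : Fin (t + 2) → S) (Fin.last t).succ)
      = K (y (Fin.last t)) a := by
    rw [Fin.succ_last, Fin.snoc_castSucc, Fin.snoc_last]
  have hmid : ∀ i : Fin t,
      K ((Fin.snoc y a : Fin (t + 2) → S) i.castSucc.castSucc)
      ((Fin.snoc y a : Fin (t + 2) → S) i.castSucc.succ)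
      = K (y i.castSucc) (y i.succ) := by
    intro i
    rw [Fin.succ_castSucc, Fin.snoc_castSucc, Fin.snoc_castSucc]
  rw [h0, hlast]
  rw [Finset.prod_congr rfl (fun i _ => hmid i)]
  ring

lemma ind_snoc {S : Type*} (Opt : S → Prop) {t : ℕ} (y : Fin (t + 1) → S) (a : S) :
    (∀ i, ¬ Opt ((Fin.snoc y a : Fin (t + 2) → S) i)) ↔ (∀ i, ¬ Opt (y i)) ∧ ¬ Opt a := by
  constructor
  · intro h
    refine ⟨fun i => ?_, ?_⟩
    · have := h i.castSucc; rwa [Fin.snoc_castSucc] at this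
    · have := h (Fin.last (t + 1)); rwa [Fin.snoc_last] at this
  · rintro ⟨h1, h2⟩ i
    refine Fin.lastCases ?_ (fun j => ?_) i
    · rwa [Fin.snoc_last]
    · rw [Fin.snoc_castSucc]; exact h1 j

lemma survival_step {S : Type*} [Fintype S] (μ0 : S → ℝ≥0∞) (K : S → S → ℝ≥0∞)
    (Opt Good : S → Prop) (hμ : ∀ x, μ0 x ≠ 0 → Good x)
    (hK : ∀ x y, Good x → K x y ≠ 0 → Good y) (p : ℝ≥0∞)
    (hstep : ∀ x, Good x → (∑' y : S, if ¬ Opt y then K x y else 0) ≤ 1 - p) (t : ℕ) :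
    survival μ0 K Opt (t + 1) ≤ (1 - p) * survival μ0 K Opt t := by
  have hre : survival μ0 K Opt (t + 1)
      = ∑' (ya : (Fin (t + 1) → S) × S),
          (if (∀ i, ¬ Opt (ya.1 i)) ∧ ¬ Opt ya.2
            then trajProb μ0 K ya.1 * K (ya.1 (Fin.last t)) ya.2 else 0) := by
    unfold survival
    rw [← Equiv.tsum_eq (snocEquiv S t)]
    apply tsum_congr
    intro ya
    exact if_congr (ind_snoc Opt ya.1 ya.2) (trajProb_snoc μ0 K ya.1 ya.2) rfl
  rw [hre, ENNReal.tsum_prod']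
  have hpt : ∀ y : Fin (t + 1) → S,
      (∑' a : S, if (∀ i, ¬ Opt (y i)) ∧ ¬ Opt a
          then trajProb μ0 K y * K (y (Fin.last t)) a else 0)
      ≤ (1 - p) * (if ∀ i, ¬ Opt (y i) then trajProb μ0 K y else 0) := by
    intro y
    by_cases hind : ∀ i, ¬ Opt (y i)
    · by_cases htp : trajProb μ0 K y = 0
      · calc (∑' a : S, if (∀ i, ¬ Opt (y i)) ∧ ¬ Opt a
              then trajProb μ0 K y * K (y (Fin.last t)) a else 0) = 0 := by simp [htp]
          _ ≤ _ := zero_le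
      · have hgood : Good (y (Fin.last t)) :=
          trajProb_good μ0 K Good hμ hK htp (Fin.last t)
        calc (∑' a : S, if (∀ i, ¬ Opt (y i)) ∧ ¬ Opt a
              then trajProb μ0 K y * K (y (Fin.last t)) a else 0)
            = trajProb μ0 K y * ∑' a : S, (if ¬ Opt a then K (y (Fin.last t)) a else 0) := by
              rw [← ENNReal.tsum_mul_left]
              apply tsum_congr
              intro a
              by_cases ha : Opt a <;> simp [hind, ha]
          _ ≤ trajProb μ0 K y * (1 - p) := mul_le_mul_right (hstep _ hgood) _
          _ = (1 - p) * (if ∀ i, ¬ Opt (y i) then trajProb μ0 K y else 0) := by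
              rw [if_pos hind, mul_comm]
    · simp [hind]
  calc (∑' (y : Fin (t + 1) → S) (a : S), if (∀ i, ¬ Opt (y i)) ∧ ¬ Opt a
          then trajProb μ0 K y * K (y (Fin.last t)) a else 0)
      ≤ ∑' y : Fin (t + 1) → S,
          (1 - p) * (if ∀ i, ¬ Opt (y i) then trajProb μ0 K y else 0) :=
        ENNReal.tsum_le_tsum hpt
    _ = (1 - p) * survival μ0 K Opt t := by rw [ENNReal.tsum_mul_left]; rfl

lemma survival_zero_le {S : Type*} [Fintype S] (μ0 : S → ℝ≥0∞) (K : S → S → ℝ≥0∞)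
    (Opt : S → Prop) (hμ0 : ∑' x : S, μ0 x = 1) : survival μ0 K Opt 0 ≤ 1 := by
  unfold survival
  calc (∑' x : Fin 1 → S, if ∀ i, ¬ Opt (x i) then trajProb μ0 K x else 0)
      ≤ ∑' x : Fin 1 → S, μ0 (x 0) := by
        apply ENNReal.tsum_le_tsum
        intro x
        have htp : trajProb μ0 K x = μ0 (x 0) := by unfold trajProb; simp
        split <;> simp [htp]
    _ = ∑' s : S, μ0 s := by
        rw [← Equiv.tsum_eq (Equiv.funUnique (Fin 1) S).symm (fun x => μ0 (x 0))]
        exact tsum_congr fun s => rfl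
    _ = 1 := hμ0

lemma expectedOptTime_le {S : Type*} [Fintype S] (μ0 : S → ℝ≥0∞) (K : S → S → ℝ≥0∞)
    (Opt Good : S → Prop) (hμ0 : ∑' x : S, μ0 x = 1)
    (hμ : ∀ x, μ0 x ≠ 0 → Good x)
    (hK : ∀ x y, Good x → K x y ≠ 0 → Good y) (p : ℝ≥0∞) (hp1 : p ≤ 1)
    (hstep : ∀ x, Good x → (∑' y : S, if ¬ Opt y then K x y else 0) ≤ 1 - p) :
    expectedOptTime μ0 K Opt ≤ p⁻¹ := by
  have hsurv : ∀ t, survival μ0 K Opt t ≤ (1 - p) ^ t := by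
    intro t
    induction t with
    | zero => simpa using survival_zero_le μ0 K Opt hμ0
    | succ t ih =>
      calc survival μ0 K Opt (t + 1) ≤ (1 - p) * survival μ0 K Opt t :=
            survival_step μ0 K Opt Good hμ hK p hstep t
        _ ≤ (1 - p) * (1 - p) ^ t := mul_le_mul_right ih _
        _ = (1 - p) ^ (t + 1) := (pow_succ' _ _).symm
  unfold expectedOptTime
  calc (∑' t : ℕ, survival μ0 K Opt t) ≤ ∑' t : ℕ, (1 - p) ^ t :=
        ENNReal.tsum_le_tsum hsurv
    _ = (1 - (1 - p))⁻¹ := ENNReal.tsum_geometric _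
    _ = p⁻¹ := by rw [ENNReal.sub_sub_cancel ENNReal.one_ne_top hp1]

/-! ### Success probability -/

lemma success_bound {m : ℕ} (hm : 1 ≤ m) {x σ : Fin m → Fin m}
    (hx : Function.Bijective x) (hσ : Function.Bijective σ) :
    (ENNReal.ofReal (Real.exp 1))⁻¹ * ((((m - 1).factorial : ℕ) : ℝ≥0∞))⁻¹ *
      ((m : ℝ≥0∞) ^ (2 * m))⁻¹ ≤ tourMut m x σ := by
  have hpois : poisson1 (m - 1)
      = (ENNReal.ofReal (Real.exp 1))⁻¹ * ((((m - 1).factorial : ℕ) : ℝ≥0∞))⁻¹ := by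
    unfold poisson1
    rw [ENNReal.ofReal_div_of_pos (by positivity), ENNReal.ofReal_natCast, div_eq_mul_inv]
    congr 1
    rw [← ENNReal.ofReal_inv_of_pos (Real.exp_pos 1), ← Real.exp_neg]
  have hjump := inv_pow_le_jumpKpow hm (bijective_perm_ofFn hx hσ)
  calc (ENNReal.ofReal (Real.exp 1))⁻¹ * ((((m - 1).factorial : ℕ) : ℝ≥0∞))⁻¹ *
        ((m : ℝ≥0∞) ^ (2 * m))⁻¹
      = poisson1 (m - 1) * ((m : ℝ≥0∞) ^ (2 * m))⁻¹ := by rw [hpois]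
    _ ≤ poisson1 (m - 1) * jumpKpow m m x σ := mul_le_mul_right hjump _
    _ = poisson1 (m - 1) * jumpKpow m ((m - 1) + 1) x σ := by
        rw [show m - 1 + 1 = m from by omega]
    _ ≤ ∑' k : ℕ, poisson1 k * jumpKpow m (k + 1) x σ := ENNReal.le_tsum (m - 1)
    _ = tourMut m x σ := rfl

end GTSPAux
/-- For any instance of the generalised travelling salesman problem with `m`
clusters, the tour-based (1+1) EA (global structure representation) satisfies: from any
non-optimal cluster permutation, the probability that a single mutation step produces an
optimal cluster permutation is at least `(1/(e*(m-1)!)) * m^{-2m}`; consequently, for any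
initial distribution over cluster permutations, the expected optimization time is at most
`e * m! * m^{2m}` (hence `O(m! * m^{2m})`, so the tour-based (1+1) EA is a fixed-parameter
evolutionary algorithm for GTSP w.r.t. the number of clusters `m`). -/
theorem tourEA_upper_bound (m : ℕ) (hm : 1 ≤ m) {V : Type} [Fintype V] [DecidableEq V]
    (Vc : Fin m → Finset V)
    (hne : ∀ i, (Vc i).Nonempty)
    (hdisj : ∀ i j, i ≠ j → Disjoint (Vc i) (Vc j))
    (hcover : ∀ v : V, ∃ i, v ∈ Vc i)
    (c : V → V → ℝ≥0∞)
    (hsym : ∀ a b, c a b = c b a)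
    (hpos : ∀ a b, a ≠ b → 0 < c a b)
    (μ0 : (Fin m → Fin m) → ℝ≥0∞)
    (hμ0 : ∑' π, μ0 π = 1)
    (hsupp : ∀ π, μ0 π ≠ 0 → Function.Bijective π) :
    (∀ π : Fin m → Fin m, Function.Bijective π → ¬ OptTour c Vc π →
        (ENNReal.ofReal (Real.exp 1))⁻¹ * ((((m - 1).factorial : ℕ) : ℝ≥0∞))⁻¹ *
            ((m : ℝ≥0∞) ^ (2 * m))⁻¹ ≤
          ∑' σ : Fin m → Fin m, if OptTour c Vc σ then tourMut m π σ else 0) ∧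
    expectedOptTime μ0 (eaKernel (tourMut m) (tourValue c Vc)) (OptTour c Vc) ≤
      ENNReal.ofReal (Real.exp 1) * ((m.factorial : ℕ) : ℝ≥0∞) * (m : ℝ≥0∞) ^ (2 * m) := by
  classical
  -- an optimal permutation exists
  obtain ⟨σs, hσmem, hσmin⟩ := Finset.exists_min_image
    (Finset.univ.filter fun σ : Fin m → Fin m => Function.Bijective σ)
    (tourValue c Vc)
    ⟨id, Finset.mem_filter.mpr ⟨Finset.mem_univ _, Function.bijective_id⟩⟩
  rw [Finset.mem_filter] at hσmem
  have hopt : OptTour c Vc σs :=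
    ⟨hσmem.2, fun τ hτ => hσmin τ (Finset.mem_filter.mpr ⟨Finset.mem_univ _, hτ⟩)⟩
  set p := (ENNReal.ofReal (Real.exp 1))⁻¹ * ((((m - 1).factorial : ℕ) : ℝ≥0∞))⁻¹ *
      ((m : ℝ≥0∞) ^ (2 * m))⁻¹ with hpdef
  have hm0 : (m : ℝ≥0∞) ≠ 0 := Nat.cast_ne_zero.mpr (by omega)
  have hsucc : ∀ x : Fin m → Fin m, Function.Bijective x →
      p ≤ ∑' σ : Fin m → Fin m, if OptTour c Vc σ then tourMut m x σ else 0 := by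
    intro x hx
    calc p ≤ tourMut m x σs := GTSPAux.success_bound hm hx hopt.1
      _ = (if OptTour c Vc σs then tourMut m x σs else 0) := (if_pos hopt).symm
      _ ≤ _ := ENNReal.le_tsum σs
  constructor
  · intro π hπ _
    exact hsucc π hπ
  · -- Part 2: expected optimization time bound
    have hp1 : p ≤ 1 := by
      rw [hpdef]
      have h1 : (ENNReal.ofReal (Real.exp 1))⁻¹ ≤ 1 :=
        ENNReal.inv_le_one.mpr (ENNReal.one_le_ofReal.mpr
          (by linarith [Real.add_one_le_exp (1 : ℝ)]))
      have h2 : ((((m - 1).factorial : ℕ) : ℝ≥0∞))⁻¹ ≤ 1 :=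
        ENNReal.inv_le_one.mpr (Nat.one_le_cast.mpr (Nat.factorial_pos _))
      have h3 : ((m : ℝ≥0∞) ^ (2 * m))⁻¹ ≤ 1 :=
        ENNReal.inv_le_one.mpr (one_le_pow_of_one_le' (Nat.one_le_cast.mpr hm) _)
      exact mul_le_one' (mul_le_one' h1 h2) h3
    have hstep : ∀ x : Fin m → Fin m, Function.Bijective x →
        (∑' y : Fin m → Fin m, if ¬ OptTour c Vc y
          then eaKernel (tourMut m) (tourValue c Vc) x y else 0) ≤ 1 - p := by
      intro x hx
      apply ENNReal.le_sub_of_add_le_right (hp1.trans_lt ENNReal.one_lt_top).ne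
      have hB : p ≤ ∑' y : Fin m → Fin m,
          (if OptTour c Vc y then eaKernel (tourMut m) (tourValue c Vc) x y else 0) := by
        calc p ≤ tourMut m x σs := GTSPAux.success_bound hm hx hopt.1
          _ ≤ eaKernel (tourMut m) (tourValue c Vc) x σs := by
              unfold eaKernel
              rw [if_pos (hopt.2 x hx)]
              exact le_self_add
          _ = (if OptTour c Vc σs
                then eaKernel (tourMut m) (tourValue c Vc) x σs else 0) := (if_pos hopt).symm
          _ ≤ _ := ENNReal.le_tsum σs
      calc (∑' y : Fin m → Fin m, if ¬ OptTour c Vc y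
              then eaKernel (tourMut m) (tourValue c Vc) x y else 0) + p
          ≤ (∑' y : Fin m → Fin m, if ¬ OptTour c Vc y
              then eaKernel (tourMut m) (tourValue c Vc) x y else 0)
            + (∑' y : Fin m → Fin m, if OptTour c Vc y
              then eaKernel (tourMut m) (tourValue c Vc) x y else 0) := add_le_add le_rfl hB
        _ = ∑' y : Fin m → Fin m, eaKernel (tourMut m) (tourValue c Vc) x y := by
            rw [← ENNReal.tsum_add]
            apply tsum_congr
            intro y
            by_cases h : OptTour c Vc y <;> simp [h]
        _ ≤ 1 := GTSPAux.eaKernel_mass _ _ _ (GTSPAux.tourMut_mass hm x)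
    have hmain := GTSPAux.expectedOptTime_le μ0 (eaKernel (tourMut m) (tourValue c Vc))
      (OptTour c Vc) Function.Bijective hμ0 hsupp
      (fun x y hx hxy => GTSPAux.eaKernel_support hx hxy) p hp1 hstep
    refine hmain.trans ?_
    -- compute p⁻¹
    have ha0 : ENNReal.ofReal (Real.exp 1) ≠ 0 :=
      (ENNReal.ofReal_pos.mpr (Real.exp_pos 1)).ne'
    have hat : ENNReal.ofReal (Real.exp 1) ≠ ⊤ := ENNReal.ofReal_ne_top
    have hb0 : ((((m - 1).factorial : ℕ) : ℝ≥0∞)) ≠ 0 :=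
      Nat.cast_ne_zero.mpr (Nat.factorial_pos _).ne'
    have hbt : ((((m - 1).factorial : ℕ) : ℝ≥0∞)) ≠ ⊤ := ENNReal.natCast_ne_top _
    have hc0 : (m : ℝ≥0∞) ^ (2 * m) ≠ 0 := pow_ne_zero _ hm0
    have hct : (m : ℝ≥0∞) ^ (2 * m) ≠ ⊤ :=
      ENNReal.pow_ne_top (ENNReal.natCast_ne_top m)
    have hpinv : p⁻¹ = ENNReal.ofReal (Real.exp 1) * ((((m - 1).factorial : ℕ) : ℝ≥0∞)) *
        (m : ℝ≥0∞) ^ (2 * m) := by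
      rw [hpdef]
      rw [ENNReal.mul_inv (Or.inr (ENNReal.inv_ne_top.mpr hc0))
        (Or.inr (ENNReal.inv_ne_zero.mpr hct))]
      rw [ENNReal.mul_inv (Or.inr (ENNReal.inv_ne_top.mpr hb0))
        (Or.inr (ENNReal.inv_ne_zero.mpr hbt))]
      rw [inv_inv, inv_inv, inv_inv]
    rw [hpinv]
    apply mul_le_mul' (mul_le_mul' le_rfl ?_) le_rfl
    exact_mod_cast Nat.cast_le.mpr (Nat.factorial_le (Nat.sub_le m 1))
end
end
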